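/- arXiv:2010.12215 — 7 statements merged into one kernel-verified Lean document; each statement's English description precedes it below -/
import Mathlib

section
/- Let E be a Dedekind complete Riesz space and (f_n)_{n≥0} a sequence in E with f_n → 0 in order as n → ∞. Then the Cesàro means of the absolute values converge to zero in order: (1/n) ∑_{k=0}^{n-1} |f_k| → 0 in order as n → ∞. -/
open Filter Finset

/-- Order convergence of a sequence in a Riesz space: there is a sequence
decreasing to `0` dominating `|x n - l|`. -/
def OrderConvergesTo {E : Type*} [Lattice E] [AddCommGroup E] (x : ℕ → E) (l : E) : Prop :=
  ∃ y : ℕ → E, Antitone y ∧ IsGLB (Set.range y) (0 : E) ∧ ∀ n, |x n - l| ≤ y n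

/-- A band (order) projection: a linear idempotent `P` with `0 ≤ P f ≤ f` for `f ≥ 0`. -/
def IsBandProjection {E : Type*} [Lattice E] [AddCommGroup E] [Module ℝ E]
    (P : Module.End ℝ E) : Prop :=
  P * P = P ∧ ∀ f : E, 0 ≤ f → 0 ≤ P f ∧ P f ≤ f

/-- `e` is a weak order unit. -/
def IsWeakOrderUnit {E : Type*} [Lattice E] [AddCommGroup E] (e : E) : Prop :=
  0 < e ∧ ∀ f : E, 0 ≤ f → f ⊓ e = 0 → f = 0



/-- Archimedean-type lemma from Dedekind completeness. -/
lemma arch_aux {E : Type*} [ConditionallyCompleteLattice E] [AddCommGroup E]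
    [CovariantClass E E (· + ·) (· ≤ ·)] (a d : E) (N : ℕ)
    (h : ∀ n : ℕ, N ≤ n → n • d ≤ a) : d ≤ 0 := by
  haveI : IsOrderedAddMonoid E :=
    { add_le_add_left := fun a b h c => by
        rw [add_comm a, add_comm b]; exact CovariantClass.elim c h }
  set S : Set E := Set.range (fun n : ℕ => (n + N) • d) with hS
  have hne : S.Nonempty := ⟨N • d, 0, by simp⟩
  have hbdd : BddAbove S := ⟨a, by rintro x ⟨n, rfl⟩; exact h _ (by omega)⟩
  have hle : sSup S ≤ sSup S - d := by
    apply csSup_le hne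
    rintro x ⟨n, rfl⟩
    rw [le_sub_iff_add_le]
    have : (n + 1 + N) • d ≤ sSup S := le_csSup hbdd ⟨n + 1, rfl⟩
    calc (n + N) • d + d = (n + 1 + N) • d := by
          rw [add_comm ((n+N)•d) d, ← succ_nsmul']; ring_nf
      _ ≤ sSup S := this
  exact (add_le_iff_nonpos_right _).mp (le_sub_iff_add_le.mp hle)


/-- If `f n → 0` in order then the Cesàro means of `|f k|` converge to `0` in order. -/
theorem stmt1 {E : Type*} [ConditionallyCompleteLattice E] [AddCommGroup E]
    [CovariantClass E E (· + ·) (· ≤ ·)] [Module ℝ E] [PosSMulMono ℝ E]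
    (f : ℕ → E) (hf : OrderConvergesTo f 0) :
    OrderConvergesTo (fun n => (n : ℝ)⁻¹ • ∑ k ∈ Finset.range n, |f k|) 0 := by
  haveI : IsOrderedAddMonoid E :=
    { add_le_add_left := fun a b h c => by
        rw [add_comm a, add_comm b]; exact CovariantClass.elim c h }
  obtain ⟨y, hy_anti, hy_glb, hy_le⟩ := hf
  have hy0 : ∀ n, 0 ≤ y n := fun n => hy_glb.1 ⟨n, rfl⟩
  set S : ℕ → E := fun n => ∑ k ∈ Finset.range n, y k with hSdef
  set A : ℕ → E := fun n => (n : ℝ)⁻¹ • S n with hAdef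
  have hS0 : ∀ n, 0 ≤ S n := fun n => Finset.sum_nonneg fun k _ => hy0 k
  have hA0 : ∀ n, 0 ≤ A n := fun n => smul_nonneg (by positivity) (hS0 n)
  -- S n = (n:ℝ) • A n for n ≥ 1
  have hSA : ∀ n : ℕ, 1 ≤ n → (n : ℝ) • A n = S n := by
    intro n hn
    have : ((n:ℝ)) * (n:ℝ)⁻¹ = 1 := mul_inv_cancel₀ (Nat.cast_ne_zero.mpr (by omega))
    simp [hAdef, smul_smul, this]
  -- y n ≤ A n for n ≥ 1
  have hyA : ∀ n : ℕ, 1 ≤ n → y n ≤ A n := by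
    intro n hn
    have h1 : (n : ℝ) • y n ≤ S n := by
      have : ∑ k ∈ Finset.range n, y n ≤ S n :=
        Finset.sum_le_sum fun k hk => hy_anti (le_of_lt (Finset.mem_range.mp hk))
      simpa [← Nat.cast_smul_eq_nsmul ℝ] using this
    have h2 := smul_le_smul_of_nonneg_left h1 (by positivity : (0:ℝ) ≤ (n:ℝ)⁻¹)
    rwa [smul_smul, inv_mul_cancel₀ (Nat.cast_ne_zero.mpr (by omega)), one_smul] at h2
  -- A antitone from 1 on
  have hAstep : ∀ n : ℕ, 1 ≤ n → A (n + 1) ≤ A n := by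
    intro n hn
    have hS1 : S (n + 1) = S n + y n := Finset.sum_range_succ y n
    have h1 : S (n + 1) ≤ ((n:ℝ) + 1) • A n := by
      rw [hS1, ← hSA n hn, add_smul, one_smul]
      exact add_le_add_right (hyA n hn) _
    have h2 := smul_le_smul_of_nonneg_left h1 (by positivity : (0:ℝ) ≤ ((n:ℝ)+1)⁻¹)
    have hne : ((n:ℝ) + 1) ≠ 0 := by positivity
    rw [smul_smul, inv_mul_cancel₀ hne, one_smul] at h2
    simpa [hAdef] using h2
  have hB : Antitone (fun n => A (n + 1)) := by
    apply antitone_nat_of_succ_le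
    intro n
    exact hAstep (n + 1) (by omega)
  refine ⟨fun n => A (n - 1 + 1), fun a b hab => hB (Nat.sub_le_sub_right hab 1), ⟨?_, ?_⟩, ?_⟩
  · rintro x ⟨n, rfl⟩
    exact hA0 _
  · -- greatest lower bound
    rintro c hc
    have hcA : ∀ n : ℕ, 1 ≤ n → c ≤ A n := by
      intro n hn
      have := hc ⟨n, rfl⟩
      simpa [Nat.sub_add_cancel hn] using this
    -- c ≤ y m for every m
    have hcy : ∀ m : ℕ, c ≤ y m := by
      intro m
      have key : ∀ n : ℕ, m + 1 ≤ n → n • (c - y m) ≤ m • y 0 := by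
        intro n hn
        have hn1 : 1 ≤ n := by omega
        have hmn : m ≤ n := by omega
        have hnne : (n : ℝ) ≠ 0 := by exact_mod_cast (by omega : n ≠ 0)
        -- S n ≤ m • y 0 + n • y m
        have hsplit : S n = ∑ k ∈ Finset.Ico 0 m, y k + ∑ k ∈ Finset.Ico m n, y k := by
          rw [hSdef]
          simp only [Finset.range_eq_Ico]
          exact (Finset.sum_Ico_consecutive y (Nat.zero_le m) hmn).symm
        have h1 : ∑ k ∈ Finset.Ico 0 m, y k ≤ m • y 0 := by
          have := Finset.sum_le_card_nsmul (Finset.Ico 0 m) y (y 0)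
            (fun k _ => hy_anti (Nat.zero_le k))
          simpa using this
        have h2 : ∑ k ∈ Finset.Ico m n, y k ≤ n • y m := by
          have h2a : ∑ k ∈ Finset.Ico m n, y k ≤ (n - m) • y m := by
            have := Finset.sum_le_card_nsmul (Finset.Ico m n) y (y m)
              (fun k hk => hy_anti (Finset.mem_Ico.mp hk).1)
            simpa [Nat.card_Ico] using this
          exact h2a.trans (nsmul_le_nsmul_left (hy0 m) (by omega))
        have hSle : S n ≤ (m : ℝ) • y 0 + (n : ℝ) • y m := by
          rw [hsplit, Nat.cast_smul_eq_nsmul, Nat.cast_smul_eq_nsmul]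
          exact add_le_add h1 h2
        have hAle : A n ≤ ((m : ℝ) / n) • y 0 + y m := by
          have := smul_le_smul_of_nonneg_left hSle (by positivity : (0:ℝ) ≤ (n:ℝ)⁻¹)
          rw [smul_add, smul_smul, smul_smul, inv_mul_cancel₀ hnne, one_smul] at this
          calc A n ≤ ((n:ℝ)⁻¹ * m) • y 0 + y m := this
            _ = ((m : ℝ) / n) • y 0 + y m := by rw [mul_comm, div_eq_mul_inv]
        have hc2 : c - y m ≤ ((m : ℝ) / n) • y 0 :=
          sub_le_iff_le_add.mpr ((hcA n hn1).trans hAle)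
        have hc3 := smul_le_smul_of_nonneg_left hc2 (by positivity : (0:ℝ) ≤ (n:ℝ))
        rw [smul_smul, mul_div_cancel₀ _ hnne] at hc3
        calc n • (c - y m) = (n : ℝ) • (c - y m) := (Nat.cast_smul_eq_nsmul ℝ n _).symm
          _ ≤ (m : ℝ) • y 0 := hc3
          _ = m • y 0 := Nat.cast_smul_eq_nsmul ℝ m _
      have := arch_aux (m • y 0) (c - y m) (m + 1) key
      exact sub_nonpos.mp this
    have : c ∈ lowerBounds (Set.range y) := by rintro x ⟨m, rfl⟩; exact hcy m
    exact hy_glb.2 this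
  · -- domination
    intro n
    rcases Nat.eq_zero_or_pos n with rfl | hn
    · simp [hA0 1]
    · have h1 : (n : ℝ)⁻¹ • ∑ k ∈ Finset.range n, |f k| ≤ A n := by
        apply smul_le_smul_of_nonneg_left _ (by positivity : (0:ℝ) ≤ (n:ℝ)⁻¹)
        exact Finset.sum_le_sum fun k _ => by simpa using hy_le k
      have h0 : 0 ≤ (n : ℝ)⁻¹ • ∑ k ∈ Finset.range n, |f k| :=
        smul_nonneg (by positivity) (Finset.sum_nonneg fun k _ => abs_nonneg _)
      rw [sub_zero, abs_of_nonneg h0]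
      simpa [Nat.sub_add_cancel hn] using h1
end

section
/- Let E be a Dedekind complete Riesz space with weak order unit e, (f_n)_{n≥0} an order bounded sequence in the positive cone E_+, and (P_n)_{n≥0} a density zero sequence of band projections on E (i.e. (1/n) ∑_{k=0}^{n-1} P_k e → 0 in order). If (I − P_n) f_n → 0 in order as n → ∞, then (1/n) ∑_{k=0}^{n-1} f_k → 0 in order as n → ∞. -/
open Filter Finset

section Aux
set_option linter.unusedSectionVars false
variable {E : Type*} [ConditionallyCompleteLattice E] [AddCommGroup E]
  [CovariantClass E E (· + ·) (· ≤ ·)] [Module ℝ E] [PosSMulMono ℝ E]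

lemma aux_add_inf (a b c : E) : a + (b ⊓ c) = (a + b) ⊓ (a + c) := by
  apply le_antisymm
  · exact le_inf (add_le_add_right inf_le_left a) (add_le_add_right inf_le_right a)
  · have h1 : (a + b) ⊓ (a + c) - a ≤ b := by
      rw [sub_le_iff_le_add, add_comm b a]; exact inf_le_left
    have h2 : (a + b) ⊓ (a + c) - a ≤ c := by
      rw [sub_le_iff_le_add, add_comm c a]; exact inf_le_right
    have h3 := le_inf h1 h2
    calc (a+b) ⊓ (a+c) = a + ((a+b) ⊓ (a+c) - a) := by abel
      _ ≤ a + (b ⊓ c) := add_le_add_right h3 a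

lemma aux_smul_nonneg {a : ℝ} {v : E} (ha : 0 ≤ a) (hv : 0 ≤ v) : 0 ≤ a • v := by
  have := smul_le_smul_of_nonneg_left hv ha
  rwa [smul_zero] at this

lemma aux_smul_scalar_mono {a b : ℝ} {v : E} (hv : 0 ≤ v) (hab : a ≤ b) : a • v ≤ b • v := by
  have h : 0 ≤ (b - a) • v := aux_smul_nonneg (by linarith) hv
  calc a • v ≤ a • v + (b - a) • v := le_add_of_nonneg_right h
    _ = b • v := by rw [← add_smul]; ring_nf

lemma aux_arch {v : E} (hv : 0 ≤ v) {c : E}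
    (h : ∀ k : ℕ, c ≤ (((k:ℕ)+1 : ℝ))⁻¹ • v) : c ≤ 0 := by
  set S : Set E := Set.range (fun k : ℕ => (((k:ℕ)+1 : ℝ))⁻¹ • v) with hS
  have hne : S.Nonempty := Set.range_nonempty _
  have hbdd : BddBelow S := by
    refine ⟨0, ?_⟩
    rintro x ⟨k, rfl⟩
    exact aux_smul_nonneg (by positivity) hv
  have hcd : c ≤ sInf S := le_csInf hne (by rintro x ⟨k, rfl⟩; exact h k)
  have h2 : (2:ℝ) • sInf S ≤ sInf S := by
    apply le_csInf hne
    rintro x ⟨k, rfl⟩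
    have hd : sInf S ≤ (((2*k+1:ℕ):ℝ)+1)⁻¹ • v := csInf_le hbdd ⟨2*k+1, rfl⟩
    have := smul_le_smul_of_nonneg_left hd (by norm_num : (0:ℝ) ≤ 2)
    rw [smul_smul] at this
    convert this using 2
    push_cast
    field_simp
    ring
  have hd0 : sInf S ≤ 0 := by
    rw [two_smul] at h2
    exact le_of_add_le_add_left (a := sInf S) (by rwa [add_zero])
  exact hcd.trans hd0

lemma aux_add_glb {a b : ℕ → E} (ha : Antitone a) (hb : Antitone b)
    (ha0 : ∀ c, (∀ n, c ≤ a n) → c ≤ 0) (hb0 : ∀ c, (∀ n, c ≤ b n) → c ≤ 0) :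
    ∀ c, (∀ n, c ≤ a n + b n) → c ≤ 0 := by
  intro c hc
  have h1 : ∀ m, c - b m ≤ 0 := by
    intro m
    apply ha0
    intro n
    rcases le_total m n with h | h
    · have : c ≤ a n + b m := (hc n).trans (add_le_add_right (hb h) _)
      rwa [sub_le_iff_le_add]
    · have hm : c - b m ≤ a m := by
        have : c ≤ a m + b m := hc m
        rwa [sub_le_iff_le_add]
      exact hm.trans (ha h)
  apply hb0
  intro m
  have := h1 m
  rwa [sub_nonpos] at this

lemma aux_sum_le_sum {ι : Type*} {s : Finset ι} {f g : ι → E} (h : ∀ i ∈ s, f i ≤ g i) :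
    ∑ i ∈ s, f i ≤ ∑ i ∈ s, g i := by
  classical
  induction s using Finset.induction_on with
  | empty => simp
  | insert _ _ hx ih =>
      rename_i a s'
      rw [Finset.sum_insert hx, Finset.sum_insert hx]
      exact add_le_add (h _ (Finset.mem_insert_self a s'))
        (ih fun i hi => h i (Finset.mem_insert_of_mem hi))

lemma aux_nsmul_nonneg {v : E} (hv : 0 ≤ v) (n : ℕ) : 0 ≤ n • v := by
  induction n with
  | zero => simp
  | succ k ih => rw [succ_nsmul]; exact add_nonneg ih hv

lemma aux_nsmul_le {v : E} (hv : 0 ≤ v) {n m : ℕ} (h : n ≤ m) : n • v ≤ m • v := by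
  have : m • v = n • v + (m - n) • v := by
    rw [← add_nsmul, Nat.add_sub_cancel' h]
  rw [this]
  exact le_add_of_nonneg_right (aux_nsmul_nonneg hv _)

lemma aux_weak_unit {e g : E} (he : 0 < e)
    (hwu : ∀ h : E, 0 ≤ h → h ⊓ e = 0 → h = 0) {u : E}
    (hu : ∀ j : ℕ, g ⊓ (j:ℝ) • e ≤ u) : g ≤ u := by
  set q : ℕ → E := fun j => g ⊓ (j:ℝ) • e with hqdef
  set S : Set E := Set.range q with hSdef
  have hne : S.Nonempty := Set.range_nonempty _
  have hbdd : BddAbove S := ⟨g, by rintro x ⟨j, rfl⟩; exact inf_le_left⟩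
  set s : E := sSup S with hsdef
  have hsg : s ≤ g := csSup_le hne (by rintro x ⟨j, rfl⟩; exact inf_le_left)
  have hqs : ∀ j, q j ≤ s := fun j => le_csSup hbdd ⟨j, rfl⟩
  have h2 : ∀ j : ℕ, q j + ((g - q j) ⊓ e) = q (j+1) := by
    intro j
    calc q j + ((g - q j) ⊓ e) = (q j + (g - q j)) ⊓ (q j + e) := aux_add_inf _ _ _
      _ = g ⊓ (q j + e) := by congr 1; abel
      _ = g ⊓ ((e + g) ⊓ (e + (j:ℝ) • e)) := by rw [add_comm (q j) e, hqdef, aux_add_inf]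
      _ = (g ⊓ (e + g)) ⊓ (e + (j:ℝ) • e) := (inf_assoc _ _ _).symm
      _ = g ⊓ (e + (j:ℝ) • e) := by rw [inf_eq_left.2 (le_add_of_nonneg_left he.le)]
      _ = q (j+1) := by
          rw [hqdef]
          congr 1
          push_cast
          rw [add_smul, one_smul, add_comm]
  have key : ∀ j : ℕ, q j + ((g - s) ⊓ e) ≤ s := by
    intro j
    have h1 : (g - s) ⊓ e ≤ (g - q j) ⊓ e :=
      inf_le_inf_right e (sub_le_sub_left (hqs j) g)
    calc q j + ((g - s) ⊓ e) ≤ q j + ((g - q j) ⊓ e) := add_le_add_right h1 _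
      _ = q (j+1) := h2 j
      _ ≤ s := hqs (j+1)
  have hs2 : s + ((g - s) ⊓ e) ≤ s + 0 := by
    have : s ≤ s - ((g - s) ⊓ e) := by
      apply csSup_le hne
      rintro x ⟨j, rfl⟩
      rw [le_sub_iff_add_le]
      exact key j
    rw [le_sub_iff_add_le] at this
    rwa [add_zero]
  have hle0 : (g - s) ⊓ e ≤ 0 := le_of_add_le_add_left hs2
  have hge0 : 0 ≤ (g - s) ⊓ e := le_inf (sub_nonneg.2 hsg) he.le
  have hz := hwu (g - s) (sub_nonneg.2 hsg) (le_antisymm hle0 hge0)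
  have hgs : g = s := by rwa [sub_eq_zero] at hz
  rw [hgs]
  exact csSup_le hne (by rintro x ⟨j, rfl⟩; exact hu j)

end Aux

/-- Sufficiency part of the Koopman-von Neumann theorem in Riesz spaces. -/
theorem stmt3 {E : Type*} [ConditionallyCompleteLattice E] [AddCommGroup E]
    [CovariantClass E E (· + ·) (· ≤ ·)] [Module ℝ E] [PosSMulMono ℝ E]
    (e : E) (he : IsWeakOrderUnit e) (f : ℕ → E) (g : E)
    (hf : ∀ n, 0 ≤ f n) (hbd : ∀ n, f n ≤ g)
    (P : ℕ → Module.End ℝ E) (hP : ∀ n, IsBandProjection (P n))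
    (hdens : OrderConvergesTo (fun n => (n : ℝ)⁻¹ • ∑ k ∈ Finset.range n, P k e) 0)
    (hconv : OrderConvergesTo (fun n => (1 - P n) (f n)) 0) :
    OrderConvergesTo (fun n => (n : ℝ)⁻¹ • ∑ k ∈ Finset.range n, f k) 0 := by
  obtain ⟨z, hz_anti, hz_glb, hz_le⟩ := hdens
  obtain ⟨y, hy_anti, hy_glb, hy_le⟩ := hconv
  have hg : 0 ≤ g := (hf 0).trans (hbd 0)
  have he0 : 0 ≤ e := he.1.le
  have hz0 : ∀ n, 0 ≤ z n := fun n => (abs_nonneg _).trans (hz_le n)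
  have hy0 : ∀ n, 0 ≤ y n := fun n => (abs_nonneg _).trans (hy_le n)
  have hz_ge : ∀ n : ℕ, (n:ℝ)⁻¹ • ∑ k ∈ Finset.range n, P k e ≤ z n := by
    intro n
    have h := hz_le n
    simp only [sub_zero] at h
    exact (le_abs_self _).trans h
  set r : ℕ → E := fun n => f n - P n (f n) with hrdef
  have hr_eq : ∀ n, (1 - P n) (f n) = r n := by
    intro n
    simp [hrdef, LinearMap.sub_apply]
  have hr_le : ∀ n, r n ≤ y n := by
    intro n
    have h := hy_le n
    simp only [sub_zero] at h
    rw [hr_eq n] at h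
    exact (le_abs_self _).trans h
  have hr0 : ∀ n, 0 ≤ r n := fun n => sub_nonneg.2 ((hP n).2 (f n) (hf n)).2
  have hrg : ∀ n, r n ≤ g := fun n =>
    (sub_le_self _ ((hP n).2 (f n) (hf n)).1).trans (hbd n)
  have hPmono : ∀ k (a b : E), a ≤ b → P k a ≤ P k b := by
    intro k a b hab
    have h := ((hP k).2 (b - a) (sub_nonneg.2 hab)).1
    rw [map_sub] at h
    exact sub_nonneg.1 h
  set q : ℕ → E := fun j => g ⊓ (j:ℝ) • e with hqdef
  have hgq : ∀ j, 0 ≤ g - q j := fun j => sub_nonneg.2 inf_le_left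
  have hfk : ∀ (j k : ℕ), f k ≤ (j:ℝ) • P k e + (g - q j) + r k := by
    intro j k
    have h1 : P k (f k) ≤ P k g := hPmono k _ _ (hbd k)
    have h2 : P k g = P k (q j) + P k (g - q j) := by
      rw [← map_add]; congr 1; abel
    have h3 : P k (q j) ≤ (j:ℝ) • P k e := by
      have := hPmono k (q j) ((j:ℝ) • e) inf_le_right
      rwa [map_smul] at this
    have h4 : P k (g - q j) ≤ g - q j := ((hP k).2 _ (hgq j)).2
    calc f k = P k (f k) + r k := by simp only [hrdef]; abel
      _ ≤ P k g + r k := add_le_add_left h1 _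
      _ = P k (q j) + P k (g - q j) + r k := by rw [h2]
      _ ≤ (j:ℝ) • P k e + (g - q j) + r k := add_le_add_left (add_le_add h3 h4) _
  have hsum_r : ∀ (n m : ℕ), (∑ k ∈ range n, r k) ≤ m • g + n • y m := by
    intro n m
    rcases le_total n m with h | h
    · calc ∑ k ∈ range n, r k ≤ ∑ _k ∈ range n, g := aux_sum_le_sum fun k _ => hrg k
        _ = n • g := by rw [sum_const, card_range]
        _ ≤ m • g := aux_nsmul_le hg h
        _ ≤ m • g + n • y m := le_add_of_nonneg_right (aux_nsmul_nonneg (hy0 m) n)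
    · have hsplit : ∑ k ∈ range n, r k = ∑ k ∈ range m, r k + ∑ k ∈ Ico m n, r k := by
        rw [range_eq_Ico, range_eq_Ico, Finset.sum_Ico_consecutive _ (Nat.zero_le m) h]
      rw [hsplit]
      have hA : ∑ k ∈ range m, r k ≤ m • g := by
        calc ∑ k ∈ range m, r k ≤ ∑ _k ∈ range m, g := aux_sum_le_sum fun k _ => hrg k
          _ = m • g := by rw [sum_const, card_range]
      have hB : ∑ k ∈ Ico m n, r k ≤ n • y m := by
        calc ∑ k ∈ Ico m n, r k ≤ ∑ _k ∈ Ico m n, y m := by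
              apply aux_sum_le_sum
              intro k hk
              exact (hr_le k).trans (hy_anti (mem_Ico.1 hk).1)
          _ = (n - m) • y m := by rw [sum_const, Nat.card_Ico]
          _ ≤ n • y m := aux_nsmul_le (hy0 m) (Nat.sub_le n m)
      exact add_le_add hA hB
  set T : ℕ → ℕ → ℕ → E := fun j m n =>
    (j:ℝ) • z n + (g - q j) + ((m:ℝ) / ((max n 1 : ℕ):ℝ)) • g + y m with hTdef
  have hT0 : ∀ j m n, 0 ≤ T j m n := by
    intro j m n
    have h1 : 0 ≤ (j:ℝ) • z n := aux_smul_nonneg (Nat.cast_nonneg j) (hz0 n)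
    have h3 : 0 ≤ ((m:ℝ) / ((max n 1 : ℕ):ℝ)) • g := aux_smul_nonneg (by positivity) hg
    have := add_nonneg (add_nonneg (add_nonneg h1 (hgq j)) h3) (hy0 m)
    exact this
  have hT_anti : ∀ j m, Antitone (fun n => T j m n) := by
    intro j m n n' hnn'
    simp only [hTdef]
    have h1 : (j:ℝ) • z n' ≤ (j:ℝ) • z n :=
      smul_le_smul_of_nonneg_left (hz_anti hnn') (Nat.cast_nonneg j)
    have h3 : ((m:ℝ) / ((max n' 1 : ℕ):ℝ)) • g ≤ ((m:ℝ) / ((max n 1 : ℕ):ℝ)) • g := by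
      apply aux_smul_scalar_mono hg
      apply div_le_div_of_nonneg_left (Nat.cast_nonneg m) ?_ ?_
      · exact_mod_cast Nat.lt_of_lt_of_le Nat.zero_lt_one (le_max_right n 1)
      · exact_mod_cast max_le_max hnn' le_rfl
    exact add_le_add (add_le_add (add_le_add h1 le_rfl) h3) le_rfl
  have hmain : ∀ j m n : ℕ, (n:ℝ)⁻¹ • (∑ k ∈ range n, f k) ≤ T j m n := by
    intro j m n
    rcases Nat.eq_zero_or_pos n with hn | hn
    · subst hn
      simpa using hT0 j m 0
    · have hnR : (0:ℝ) < n := Nat.cast_pos.2 hn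
      have step1 : ∑ k ∈ range n, f k ≤
          (j:ℝ) • (∑ k ∈ range n, P k e) + (n:ℝ) • (g - q j) + ((m:ℝ) • g + (n:ℝ) • y m) := by
        calc ∑ k ∈ range n, f k
            ≤ ∑ k ∈ range n, ((j:ℝ) • P k e + (g - q j) + r k) :=
              aux_sum_le_sum fun k _ => hfk j k
          _ = (j:ℝ) • (∑ k ∈ range n, P k e) + (n:ℝ) • (g - q j) + ∑ k ∈ range n, r k := by
              rw [sum_add_distrib, sum_add_distrib, sum_const, card_range, smul_sum,
                Nat.cast_smul_eq_nsmul]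
          _ ≤ _ := by
              refine add_le_add_right ?_ _
              have := hsum_r n m
              rwa [← Nat.cast_smul_eq_nsmul ℝ m g, ← Nat.cast_smul_eq_nsmul ℝ n (y m)] at this
      have hn0 : (n:ℝ) ≠ 0 := ne_of_gt hnR
      have step2 := smul_le_smul_of_nonneg_left step1 (inv_nonneg.2 hnR.le)
      have hRHS : (n:ℝ)⁻¹ • ((j:ℝ) • (∑ k ∈ range n, P k e) + (n:ℝ) • (g - q j)
            + ((m:ℝ) • g + (n:ℝ) • y m))
          = (j:ℝ) • ((n:ℝ)⁻¹ • (∑ k ∈ range n, P k e)) + (g - q j)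
            + ((m:ℝ) / (n:ℝ)) • g + y m := by
        match_scalars <;> field_simp
      rw [hRHS] at step2
      refine step2.trans ?_
      simp only [hTdef]
      rw [Nat.max_eq_left hn]
      refine add_le_add (add_le_add (add_le_add ?_ le_rfl) le_rfl) le_rfl
      exact smul_le_smul_of_nonneg_left (hz_ge n) (Nat.cast_nonneg j)
  set Y : ℕ → E := fun n => sInf (Set.range fun p : ℕ × ℕ => T p.1 p.2 n) with hYdef
  have hbddY : ∀ n, BddBelow (Set.range fun p : ℕ × ℕ => T p.1 p.2 n) := by
    intro n
    exact ⟨0, by rintro x ⟨p, rfl⟩; exact hT0 p.1 p.2 n⟩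
  have hneY : ∀ n, (Set.range fun p : ℕ × ℕ => T p.1 p.2 n).Nonempty :=
    fun n => Set.range_nonempty _
  have hY0 : ∀ n, 0 ≤ Y n := by
    intro n
    exact le_csInf (hneY n) (by rintro x ⟨p, rfl⟩; exact hT0 p.1 p.2 n)
  have hYT : ∀ j m n, Y n ≤ T j m n := fun j m n => csInf_le (hbddY n) ⟨(j, m), rfl⟩
  have hY_anti : Antitone Y := by
    intro n n' hnn'
    apply le_csInf (hneY n)
    rintro x ⟨p, rfl⟩
    exact (hYT p.1 p.2 n').trans (hT_anti p.1 p.2 hnn')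
  refine ⟨Y, hY_anti, ⟨?_, ?_⟩, ?_⟩
  · rintro x ⟨n, rfl⟩
    exact hY0 n
  · intro c hc
    have hcY : ∀ n, c ≤ Y n := fun n => hc ⟨n, rfl⟩
    have hcT : ∀ j m n, c ≤ T j m n := fun j m n => (hcY n).trans (hYT j m n)
    have ha0 : ∀ (j : ℕ) (c' : E), (∀ n, c' ≤ (j:ℝ) • z n) → c' ≤ 0 := by
      intro j c' h
      rcases Nat.eq_zero_or_pos j with hj | hj
      · simpa [hj] using h 0
      · have hjR : (0:ℝ) < j := Nat.cast_pos.2 hj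
        have h3 : (j:ℝ)⁻¹ • c' ≤ 0 := by
          apply hz_glb.2
          rintro x ⟨n, rfl⟩
          have := smul_le_smul_of_nonneg_left (h n) (inv_nonneg.2 hjR.le)
          rwa [smul_smul, inv_mul_cancel₀ hjR.ne', one_smul] at this
        have := smul_le_smul_of_nonneg_left h3 hjR.le
        rwa [smul_smul, mul_inv_cancel₀ hjR.ne', one_smul, smul_zero] at this
    have hb0 : ∀ (m : ℕ) (c' : E),
        (∀ n, c' ≤ ((m:ℝ) / ((max n 1 : ℕ):ℝ)) • g) → c' ≤ 0 := by
      intro m c' h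
      rcases Nat.eq_zero_or_pos m with hm | hm
      · simpa [hm] using h 1
      · apply aux_arch hg (c := c')
        intro k
        have hx := h (m * (k+1))
        have hmax : max (m * (k+1)) 1 = m * (k+1) :=
          Nat.max_eq_left (Nat.one_le_iff_ne_zero.2 (by positivity))
        rw [hmax] at hx
        convert hx using 2
        have hm' : (m:ℝ) ≠ 0 := Nat.cast_ne_zero.2 hm.ne'
        push_cast
        field_simp
    have hstep : ∀ j m : ℕ, c ≤ (g - q j) + y m := by
      intro j m
      have hres := aux_add_glb (a := fun n => (j:ℝ) • z n)
        (b := fun n => ((m:ℝ) / ((max n 1 : ℕ):ℝ)) • g)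
        (fun n n' h => smul_le_smul_of_nonneg_left (hz_anti h) (Nat.cast_nonneg j))
        (fun n n' h => by
          apply aux_smul_scalar_mono hg
          apply div_le_div_of_nonneg_left (Nat.cast_nonneg m) ?_ ?_
          · exact_mod_cast Nat.lt_of_lt_of_le Nat.zero_lt_one (le_max_right n 1)
          · exact_mod_cast max_le_max h le_rfl)
        (ha0 j) (hb0 m) (c - ((g - q j) + y m)) ?_
      · rwa [sub_nonpos] at hres
      · intro n
        rw [sub_le_iff_le_add]
        calc c ≤ T j m n := hcT j m n
          _ = (j:ℝ) • z n + ((m:ℝ) / ((max n 1 : ℕ):ℝ)) • g + ((g - q j) + y m) := by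
              simp only [hTdef]; abel
    have hstep2 : ∀ j : ℕ, c ≤ g - q j := by
      intro j
      have h2 : c - (g - q j) ≤ 0 := by
        apply hy_glb.2
        rintro x ⟨m, rfl⟩
        exact sub_le_iff_le_add.2 (by rw [add_comm]; exact hstep j m)
      rwa [sub_nonpos] at h2
    have h3 : ∀ j : ℕ, g ⊓ (j:ℝ) • e ≤ g - c := by
      intro j
      exact le_sub_comm.1 (hstep2 j)
    have h4 : g ≤ g - c := aux_weak_unit he.1 he.2 h3
    have := le_sub_comm.1 h4
    rwa [sub_self] at this
  · intro n
    simp only [sub_zero]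
    have hx0 : 0 ≤ (n:ℝ)⁻¹ • ∑ k ∈ range n, f k :=
      aux_smul_nonneg (inv_nonneg.2 (Nat.cast_nonneg n))
        (by simpa using aux_sum_le_sum (s := range n) (f := fun _ => (0:E)) fun k _ => hf k)
    rw [abs_of_nonneg hx0]
    exact le_csInf (hneY n) (by rintro x ⟨p, rfl⟩; exact hmain p.1 p.2 n)
end

section
/- Let E be a Dedekind complete Riesz space with weak order unit e and (f_n)_{n≥0} an order bounded sequence in E_+ with (1/n) ∑_{k=0}^{n-1} f_k → 0 in order as n → ∞. Then there exists a density zero sequence of band projections (P_n)_{n≥0} on E (i.e. (1/n) ∑_{k=0}^{n-1} P_k e → 0 in order) such that (I − P_n) f_n → 0 in order as n → ∞. -/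
open Filter Finset

set_option linter.unusedSectionVars false

namespace KVN

variable {E : Type*} [ConditionallyCompleteLattice E] [AddCommGroup E]
    [CovariantClass E E (· + ·) (· ≤ ·)] [Module ℝ E] [PosSMulMono ℝ E]

local instance : IsOrderedAddMonoid E :=
  {
    add_le_add_left := fun a b h c => add_le_add_left h c }

/-- scalar-monotone smul on nonneg vectors -/
lemma smul_le_smul_right' {a b : ℝ} (h : a ≤ b) {v : E} (hv : 0 ≤ v) :
    a • v ≤ b • v := by
  have h0 : 0 ≤ (b - a) • v := smul_nonneg (by linarith) hv
  have : a • v + 0 ≤ a • v + (b - a) • v := add_le_add_right h0 _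
  simpa [← add_smul] using this

lemma smul_nonpos' {c : ℝ} {v : E} (hc : c ≤ 0) (hv : 0 ≤ v) : c • v ≤ 0 := by
  simpa using smul_le_smul_right' hc hv

lemma smul_inf' {c : ℝ} (hc : 0 < c) (a b : E) : c • (a ⊓ b) = c • a ⊓ c • b := by
  refine le_antisymm (le_inf (smul_le_smul_of_nonneg_left inf_le_left hc.le)
    (smul_le_smul_of_nonneg_left inf_le_right hc.le)) ?_
  have h : c⁻¹ • (c • a ⊓ c • b) ≤ a ⊓ b := by
    refine le_inf ?_ ?_
    · have := smul_le_smul_of_nonneg_left (inf_le_left (a := c • a) (b := c • b)) (inv_nonneg.mpr hc.le)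
      simpa [smul_smul, inv_mul_cancel₀ hc.ne'] using this
    · have := smul_le_smul_of_nonneg_left (inf_le_right (a := c • a) (b := c • b)) (inv_nonneg.mpr hc.le)
      simpa [smul_smul, inv_mul_cancel₀ hc.ne'] using this
  have := smul_le_smul_of_nonneg_left h hc.le
  simpa [smul_smul, mul_inv_cancel₀ hc.ne'] using this

/-- Riesz-type inequality. -/
lemma riesz_inf {x y c : E} (hx : 0 ≤ x) (hy : 0 ≤ y) (hc : 0 ≤ c) :
    (x + y) ⊓ c ≤ x ⊓ c + y ⊓ c := by
  have h1 : (x + y) ⊓ c - x ⊓ c = ((x + y) ⊓ c - x) ⊔ ((x + y) ⊓ c - c) := sub_inf x c _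
  have b1 : (x + y) ⊓ c - x ≤ y ⊓ c := by
    have e1 : (x + y) ⊓ c - x = y ⊓ (c - x) := by
      rw [inf_sub (x + y) c x, add_sub_cancel_left]
    rw [e1]
    exact inf_le_inf_left y (sub_le_self c hx)
  have b2 : (x + y) ⊓ c - c ≤ y ⊓ c :=
    le_trans (sub_nonpos.mpr inf_le_right) (le_inf hy hc)
  have h2 : (x + y) ⊓ c - x ⊓ c ≤ y ⊓ c := by rw [h1]; exact sup_le b1 b2
  have := add_le_add_right h2 (x ⊓ c)
  simpa [sub_add_cancel, add_comm] using this

lemma isLUB_add_range {u v : ℕ → E} (hu : Monotone u) (hv : Monotone v) {a b : E}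
    (ha : IsLUB (Set.range u) a) (hb : IsLUB (Set.range v) b) :
    IsLUB (Set.range fun n => u n + v n) (a + b) := by
  constructor
  · rintro _ ⟨n, rfl⟩
    exact add_le_add (ha.1 ⟨n, rfl⟩) (hb.1 ⟨n, rfl⟩)
  · intro c hc
    have h : ∀ n m, u m ≤ c - v n := by
      intro n m
      have h1 : u m + v n ≤ u (max m n) + v (max m n) :=
        add_le_add (hu (le_max_left _ _)) (hv (le_max_right _ _))
      have h2 : u (max m n) + v (max m n) ≤ c := hc ⟨max m n, rfl⟩
      exact le_sub_iff_add_le.mpr (h1.trans h2)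
    have h3 : ∀ n, v n ≤ c - a := by
      intro n
      have : a ≤ c - v n := ha.2 (by rintro _ ⟨m, rfl⟩; exact h n m)
      have := add_le_add_left this (v n)
      rw [sub_add_cancel] at this
      exact le_sub_iff_add_le.mpr (by rwa [add_comm])
    have h4 : b ≤ c - a := hb.2 (by rintro _ ⟨n, rfl⟩; exact h3 n)
    have := add_le_add_right h4 a
    rwa [add_sub_cancel] at this

lemma isLUB_inf_const {S : Set E} {s : E} (hS : IsLUB S s) (a : E) :
    IsLUB ((fun z => a ⊓ z) '' S) (a ⊓ s) := by
  constructor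
  · rintro _ ⟨t, ht, rfl⟩
    exact inf_le_inf_left a (hS.1 ht)
  · intro c hc
    have key : ∀ t ∈ S, t ≤ c + s - a ⊓ s := by
      intro t ht
      have h1 : a ⊓ s - (s - t) ≤ a ⊓ t := by
        refine le_inf ?_ ?_
        · exact le_trans (sub_le_self _ (sub_nonneg.mpr (hS.1 ht))) inf_le_left
        · have : a ⊓ s - (s - t) = a ⊓ s - s + t := by abel
          rw [this]
          have h0 : a ⊓ s - s ≤ 0 := sub_nonpos.mpr inf_le_right
          calc a ⊓ s - s + t ≤ 0 + t := add_le_add_left h0 t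
          _ = t := zero_add t
      have h2 : a ⊓ s - (s - t) ≤ c := h1.trans (hc ⟨t, ht, rfl⟩)
      have h3 := add_le_add_left h2 (s - t)
      rw [sub_add_cancel] at h3
      -- h3 : a ⊓ s ≤ c + (s - t)
      have h4 := add_le_add_left h3 t
      have : c + (s - t) + t = c + s := by abel
      rw [this] at h4
      -- h4 : a ⊓ s + t ≤ c + s
      exact le_sub_iff_add_le.mpr (by rwa [add_comm t (a ⊓ s)])
    have hs2 : s ≤ c + s - a ⊓ s := hS.2 key
    have h5 := add_le_add_left hs2 (a ⊓ s)
    rw [sub_add_cancel] at h5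
    have h6 : s + a ⊓ s = a ⊓ s + s := by abel
    rw [h6] at h5
    exact le_of_add_le_add_right (by rwa [add_comm c s] at h5)

lemma isLUB_smul_image {S : Set E} {s : E} (hS : IsLUB S s) {c : ℝ} (hc : 0 < c) :
    IsLUB ((fun z => c • z) '' S) (c • s) := by
  constructor
  · rintro _ ⟨t, ht, rfl⟩
    exact smul_le_smul_of_nonneg_left (hS.1 ht) hc.le
  · intro d hd
    have h : ∀ t ∈ S, t ≤ c⁻¹ • d := by
      intro t ht
      have h1 : c • t ≤ d := hd ⟨t, ht, rfl⟩
      have := smul_le_smul_of_nonneg_left h1 (inv_nonneg.mpr hc.le)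
      simpa [smul_smul, inv_mul_cancel₀ hc.ne'] using this
    have h2 : s ≤ c⁻¹ • d := hS.2 h
    have := smul_le_smul_of_nonneg_left h2 hc.le
    simpa [smul_smul, mul_inv_cancel₀ hc.ne'] using this


/-- value of the band projection onto the band generated by `u`, on nonnegative `x` -/
noncomputable def pp (u x : E) : E := sSup (Set.range fun m : ℕ => x ⊓ m • u)

lemma seq_bddAbove (u x : E) : BddAbove (Set.range fun m : ℕ => x ⊓ m • u) :=
  ⟨x, by rintro _ ⟨m, rfl⟩; exact inf_le_left⟩

lemma seq_monotone {u : E} (hu : 0 ≤ u) (x : E) : Monotone (fun m : ℕ => x ⊓ m • u) := by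
  intro m n h
  refine inf_le_inf_left x ?_
  have h2 : 0 ≤ (n - m) • u := nsmul_nonneg hu _
  have : m • u + 0 ≤ m • u + (n - m) • u := add_le_add_right h2 _
  rwa [add_zero, ← add_nsmul, Nat.add_sub_cancel' h] at this

lemma pp_isLUB (u x : E) : IsLUB (Set.range fun m : ℕ => x ⊓ m • u) (pp u x) :=
  isLUB_csSup (Set.range_nonempty _) (seq_bddAbove u x)

lemma le_pp (u x : E) (m : ℕ) : x ⊓ m • u ≤ pp u x :=
  le_csSup (seq_bddAbove u x) ⟨m, rfl⟩

lemma pp_le_of_forall {u x c : E} (h : ∀ m : ℕ, x ⊓ m • u ≤ c) : pp u x ≤ c :=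
  csSup_le (Set.range_nonempty _) (by rintro _ ⟨m, rfl⟩; exact h m)

lemma pp_le_self (u x : E) : pp u x ≤ x := pp_le_of_forall fun _ => inf_le_left

lemma pp_nonneg {u x : E} (hx : 0 ≤ x) : 0 ≤ pp u x := by
  have h0 : x ⊓ (0 : ℕ) • u = 0 := by rw [zero_nsmul]; exact inf_eq_right.mpr hx
  have := le_pp u x 0
  rwa [h0] at this

lemma pp_zero (u : E) : pp u 0 = 0 :=
  le_antisymm (pp_le_self u 0) (pp_nonneg le_rfl)

lemma pp_mono_x {u x y : E} (h : x ≤ y) : pp u x ≤ pp u y :=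
  pp_le_of_forall fun m => (inf_le_inf_right _ h).trans (le_pp u y m)

lemma pp_mono_u {u v x : E} (hu : 0 ≤ u) (h : u ≤ v) : pp u x ≤ pp v x := by
  refine pp_le_of_forall fun m => ?_
  exact (inf_le_inf_left x (nsmul_le_nsmul_right h m)).trans (le_pp v x m)

lemma pp_fix {u x : E} (hx : 0 ≤ x) {m₀ : ℕ} (h : x ≤ m₀ • u) : pp u x = x := by
  refine le_antisymm (pp_le_self u x) ?_
  have h1 : x ⊓ m₀ • u = x := inf_eq_left.mpr h
  calc x = x ⊓ m₀ • u := h1.symm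
  _ ≤ pp u x := le_pp u x m₀

lemma pp_self {u : E} (hu : 0 ≤ u) : pp u u = u :=
  pp_fix hu (m₀ := 1) (by rw [one_nsmul])

lemma pp_disj {u x : E} (hu : 0 ≤ u) (hx : 0 ≤ x) (hd : x ⊓ u = 0) : pp u x = 0 := by
  have key : ∀ m : ℕ, x ⊓ m • u ≤ 0 := by
    intro m
    induction m with
    | zero => rw [zero_nsmul]; exact inf_le_right
    | succ n ih =>
      have h1 : x ⊓ (n + 1) • u = x ⊓ (n • u + u) := by rw [succ_nsmul]
      have h2 : x ⊓ (n • u + u) ≤ x ⊓ n • u + x ⊓ u := by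
        have := riesz_inf (nsmul_nonneg hu n) hu hx
        calc x ⊓ (n • u + u) = (n • u + u) ⊓ x := inf_comm _ _
        _ ≤ n • u ⊓ x + u ⊓ x := this
        _ = x ⊓ n • u + x ⊓ u := by rw [inf_comm (n • u) x, inf_comm u x]
      rw [h1]
      calc x ⊓ (n • u + u) ≤ x ⊓ n • u + x ⊓ u := h2
      _ ≤ 0 + 0 := add_le_add ih (le_of_eq hd)
      _ = 0 := by rw [add_zero]
  exact le_antisymm (pp_le_of_forall key) (pp_nonneg hx)

lemma pp_add {u : E} (hu : 0 ≤ u) {x y : E} (hx : 0 ≤ x) (hy : 0 ≤ y) :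
    pp u (x + y) = pp u x + pp u y := by
  have hsum : IsLUB (Set.range fun m : ℕ => x ⊓ m • u + y ⊓ m • u) (pp u x + pp u y) :=
    isLUB_add_range (seq_monotone hu x) (seq_monotone hu y) (pp_isLUB u x) (pp_isLUB u y)
  refine le_antisymm ?_ ?_
  · refine pp_le_of_forall fun m => ?_
    have h1 : (x + y) ⊓ m • u ≤ x ⊓ m • u + y ⊓ m • u := riesz_inf hx hy (nsmul_nonneg hu m)
    exact h1.trans (hsum.1 ⟨m, rfl⟩)
  · refine hsum.2 ?_
    rintro _ ⟨m, rfl⟩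
    have h1 : x ⊓ m • u + y ⊓ m • u ≤ (x + y) ⊓ (m + m) • u := by
      refine le_inf (add_le_add inf_le_left inf_le_left) ?_
      rw [add_nsmul]
      exact add_le_add inf_le_right inf_le_right
    exact h1.trans (le_pp u (x + y) (m + m))

lemma pp_smul {u : E} (hu : 0 ≤ u) {x : E} (hx : 0 ≤ x) {c : ℝ} (hc : 0 ≤ c) :
    pp u (c • x) = c • pp u x := by
  rcases eq_or_lt_of_le hc with rfl | hc'
  · simp [pp_zero]
  -- c > 0
  refine le_antisymm ?_ ?_
  · refine pp_le_of_forall fun m => ?_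
    -- (c•x) ⊓ m•u ≤ c • (x ⊓ ⌈m/c⌉₊ • u)
    set M : ℕ := ⌈(m : ℝ) / c⌉₊ with hM
    have hmu : (m : ℕ) • u ≤ c • (M • u) := by
      have h1 : ((m : ℕ) : ℝ) ≤ c * M := by
        have := Nat.le_ceil ((m : ℝ) / c)
        calc ((m : ℕ) : ℝ) = c * ((m : ℝ) / c) := by field_simp
        _ ≤ c * M := by
              have := mul_le_mul_of_nonneg_left (Nat.le_ceil ((m : ℝ) / c)) hc'.le
              exact this
      calc (m : ℕ) • u = ((m : ℕ) : ℝ) • u := (Nat.cast_smul_eq_nsmul ℝ m u).symm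
      _ ≤ (c * M) • u := smul_le_smul_right' h1 hu
      _ = c • ((M : ℝ) • u) := by rw [mul_smul]
      _ = c • (M • u) := by rw [Nat.cast_smul_eq_nsmul]
    have h2 : (c • x) ⊓ m • u ≤ (c • x) ⊓ (c • (M • u)) := inf_le_inf_left _ hmu
    have h3 : (c • x) ⊓ (c • (M • u)) = c • (x ⊓ M • u) := (smul_inf' hc' x (M • u)).symm
    have h4 : c • (x ⊓ M • u) ≤ c • pp u x := smul_le_smul_of_nonneg_left (le_pp u x M) hc
    exact h2.trans (h3 ▸ h4)
  · -- c • pp u x ≤ pp u (c • x)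
    have himg : IsLUB ((fun z => c • z) '' (Set.range fun m : ℕ => x ⊓ m • u)) (c • pp u x) :=
      isLUB_smul_image (pp_isLUB u x) hc'
    refine himg.2 ?_
    rintro _ ⟨_, ⟨m, rfl⟩, rfl⟩
    set M : ℕ := ⌈c * m⌉₊ with hM
    have h1 : c • (x ⊓ m • u) = (c • x) ⊓ (c • (m • u)) := smul_inf' hc' _ _
    have h2 : c • (m • u) ≤ M • u := by
      have hcm : c * m ≤ (M : ℝ) := Nat.le_ceil _
      calc c • (m • u) = c • (((m : ℕ) : ℝ) • u) := by rw [Nat.cast_smul_eq_nsmul]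
      _ = (c * m) • u := by rw [← mul_smul]
      _ ≤ (M : ℝ) • u := smul_le_smul_right' hcm hu
      _ = M • u := Nat.cast_smul_eq_nsmul ℝ M u
    have h3 : (c • x) ⊓ (c • (m • u)) ≤ (c • x) ⊓ M • u := inf_le_inf_left _ h2
    show c • (x ⊓ m • u) ≤ pp u (c • x)
    rw [h1]
    exact h3.trans (le_pp u (c • x) M)

lemma pp_idem (u x : E) : pp u (pp u x) = pp u x := by
  refine le_antisymm (pp_le_self u _) (pp_le_of_forall fun m => ?_)
  have h1 : x ⊓ m • u ≤ (pp u x) ⊓ m • u := le_inf (le_pp u x m) inf_le_right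
  exact h1.trans (le_pp u (pp u x) m)

lemma nsmul_le {u : E} (hu : 0 ≤ u) {m n : ℕ} (h : m ≤ n) : m • u ≤ n • u := by
  have h2 : 0 ≤ (n - m) • u := nsmul_nonneg hu _
  have h3 : m • u + 0 ≤ m • u + (n - m) • u := add_le_add_right h2 _
  rwa [add_zero, ← add_nsmul, Nat.add_sub_cancel' h] at h3

lemma pp_comm {x : E} (hx : 0 ≤ x) {u v : E} (hu : 0 ≤ u) (hv : 0 ≤ v) :
    pp u (pp v x) = pp v (pp u x) := by
  have key : ∀ u v : E, 0 ≤ u → 0 ≤ v → pp u (pp v x) ≤ pp v (pp u x) := by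
    intro u v hu hv
    refine pp_le_of_forall fun m => ?_
    have hL : IsLUB ((fun z => m • u ⊓ z) '' Set.range fun n : ℕ => x ⊓ n • v)
        (m • u ⊓ pp v x) := isLUB_inf_const (pp_isLUB v x) _
    rw [inf_comm]
    refine hL.2 ?_
    rintro _ ⟨_, ⟨n, rfl⟩, rfl⟩
    have hA1 : m • u ⊓ (x ⊓ n • v) ≤ x := inf_le_right.trans inf_le_left
    have hA2 : m • u ⊓ (x ⊓ n • v) ≤ (max m n) • u :=
      inf_le_left.trans (nsmul_le hu (le_max_left m n))
    have hA3 : m • u ⊓ (x ⊓ n • v) ≤ (max m n) • v :=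
      inf_le_right.trans (inf_le_right.trans (nsmul_le hv (le_max_right m n)))
    have : m • u ⊓ (x ⊓ n • v) ≤ (x ⊓ (max m n) • u) ⊓ (max m n) • v :=
      le_inf (le_inf hA1 hA2) hA3
    refine this.trans ?_
    exact (inf_le_inf_right _ (le_pp u x _)).trans (le_pp v (pp u x) (max m n))
  exact le_antisymm (key u v hu hv) (key v u hv hu)

lemma pp_inf {u : E} (hu : 0 ≤ u) {x y : E} (hx : 0 ≤ x) (hy : 0 ≤ y) :
    pp u (x ⊓ y) = pp u x ⊓ pp u y := by
  refine le_antisymm (le_inf (pp_mono_x inf_le_left) (pp_mono_x inf_le_right)) ?_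
  have hL1 : IsLUB ((fun z => pp u y ⊓ z) '' Set.range fun m : ℕ => x ⊓ m • u)
      (pp u y ⊓ pp u x) := isLUB_inf_const (pp_isLUB u x) _
  suffices h : pp u y ⊓ pp u x ≤ pp u (x ⊓ y) by
    rwa [inf_comm (pp u y) (pp u x)] at h
  refine hL1.2 ?_
  rintro _ ⟨_, ⟨m, rfl⟩, rfl⟩
  show pp u y ⊓ (x ⊓ m • u) ≤ pp u (x ⊓ y)
  have hL2 : IsLUB ((fun z => (x ⊓ m • u) ⊓ z) '' Set.range fun n : ℕ => y ⊓ n • u)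
      ((x ⊓ m • u) ⊓ pp u y) := isLUB_inf_const (pp_isLUB u y) _
  rw [inf_comm (pp u y) (x ⊓ m • u)]
  refine hL2.2 ?_
  rintro _ ⟨_, ⟨n, rfl⟩, rfl⟩
  show (x ⊓ m • u) ⊓ (y ⊓ n • u) ≤ pp u (x ⊓ y)
  have h1 : (x ⊓ m • u) ⊓ (y ⊓ n • u) ≤ (x ⊓ y) ⊓ (max m n) • u := by
    refine le_inf (le_inf (inf_le_left.trans inf_le_left)
      (inf_le_right.trans inf_le_left)) ?_
    exact inf_le_left.trans (inf_le_right.trans (nsmul_le hu (le_max_left m n)))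
  exact h1.trans (le_pp u (x ⊓ y) (max m n))

lemma pp_sandwich {u z z' : E} (hu : 0 ≤ u) (hz : 0 ≤ z) (hzz : z ≤ z')
    (hfix : pp u z' = z') : pp u z = z := by
  have hd : 0 ≤ z' - z := sub_nonneg.mpr hzz
  have hadd : pp u z + pp u (z' - z) = z' := by
    rw [← pp_add hu hz hd, add_sub_cancel, hfix]
  have h1 : 0 ≤ z - pp u z := sub_nonneg.mpr (pp_le_self u z)
  have h2 : 0 ≤ (z' - z) - pp u (z' - z) := sub_nonneg.mpr (pp_le_self u _)
  have hsum : (z - pp u z) + ((z' - z) - pp u (z' - z)) = 0 := by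
    have : z + (z' - z) = z' := by abel
    calc (z - pp u z) + ((z' - z) - pp u (z' - z))
        = (z + (z' - z)) - (pp u z + pp u (z' - z)) := by abel
    _ = z' - z' := by rw [this, hadd]
    _ = 0 := sub_self z'
  have : z - pp u z ≤ 0 := by
    have := hsum ▸ add_le_add_left h2 (z - pp u z)
    calc z - pp u z = z - pp u z + 0 := (add_zero _).symm
    _ ≤ z - pp u z + ((z' - z) - pp u (z' - z)) := add_le_add_right h2 _
    _ = 0 := hsum
  have hz0 : z - pp u z = 0 := le_antisymm this h1
  have := sub_eq_zero.mp hz0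
  exact this.symm

lemma pp_nsmul {w u : E} (hw : 0 ≤ w) (hu : 0 ≤ u) (hfix : pp w u = u) (m : ℕ) :
    pp w (m • u) = m • u := by
  have h1 : pp w (((m : ℕ) : ℝ) • u) = ((m : ℕ) : ℝ) • pp w u :=
    pp_smul hw hu (by positivity)
  rw [hfix] at h1
  rwa [Nat.cast_smul_eq_nsmul] at h1

lemma pp_pp_fix {w u x : E} (hw : 0 ≤ w) (hu : 0 ≤ u) (hx : 0 ≤ x)
    (hfix : pp w u = u) : pp w (pp u x) = pp u x := by
  refine le_antisymm (pp_le_self _ _) ?_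
  refine pp_le_of_forall fun m => ?_
  have hterm : pp w (x ⊓ m • u) = x ⊓ m • u := by
    refine pp_sandwich hw (le_inf hx (nsmul_nonneg hu m)) inf_le_right (pp_nsmul hw hu hfix m)
  calc x ⊓ m • u = pp w (x ⊓ m • u) := hterm.symm
  _ ≤ pp w (pp u x) := pp_mono_x (le_pp u x m)

/-- If `0 ≤ u ≤ k • v` then elements of the band of `u` are fixed by `pp v`. -/
lemma pp_fix_of_le {v u : E} (hv : 0 ≤ v) (hu : 0 ≤ u) (h : u ≤ v) {x : E} (hx : 0 ≤ x) :
    pp v (pp u x) = pp u x :=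
  pp_pp_fix hv hu hx (pp_fix hu (m₀ := 1) (by rwa [one_nsmul]))

/-- raw function underlying the band projection -/
noncomputable def bpF (u : E) (x : E) : E := pp u x⁺ - pp u x⁻

lemma bpF_decomp {u : E} (hu : 0 ≤ u) {p q : E} (hp : 0 ≤ p) (hq : 0 ≤ q) :
    bpF u (p - q) = pp u p - pp u q := by
  set x := p - q with hxdef
  have h2 : x⁺ - x⁻ = p - q := by rw [posPart_sub_negPart x]
  have h3 : x⁺ + q = p + x⁻ := by
    calc x⁺ + q = x⁺ - x⁻ + x⁻ + q := by abel
    _ = p - q + x⁻ + q := by rw [h2]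
    _ = p + x⁻ := by abel
  have h4 : pp u x⁺ + pp u q = pp u p + pp u x⁻ := by
    rw [← pp_add hu (posPart_nonneg x) hq, ← pp_add hu hp (negPart_nonneg x), h3]
  show pp u x⁺ - pp u x⁻ = pp u p - pp u q
  calc pp u x⁺ - pp u x⁻ = (pp u x⁺ + pp u q) - pp u q - pp u x⁻ := by abel
  _ = (pp u p + pp u x⁻) - pp u q - pp u x⁻ := by rw [h4]
  _ = pp u p - pp u q := by abel

lemma bpF_add {u : E} (hu : 0 ≤ u) (x y : E) : bpF u (x + y) = bpF u x + bpF u y := by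
  have hdec : x + y = (x⁺ + y⁺) - (x⁻ + y⁻) := by
    have hx := posPart_sub_negPart x
    have hy := posPart_sub_negPart y
    calc x + y = (x⁺ - x⁻) + (y⁺ - y⁻) := by rw [hx, hy]
    _ = (x⁺ + y⁺) - (x⁻ + y⁻) := by abel
  rw [hdec, bpF_decomp hu (add_nonneg (posPart_nonneg x) (posPart_nonneg y))
    (add_nonneg (negPart_nonneg x) (negPart_nonneg y)),
    pp_add hu (posPart_nonneg x) (posPart_nonneg y),
    pp_add hu (negPart_nonneg x) (negPart_nonneg y)]
  show pp u x⁺ + pp u y⁺ - (pp u x⁻ + pp u y⁻) = (pp u x⁺ - pp u x⁻) + (pp u y⁺ - pp u y⁻)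
  abel

lemma bpF_smul {u : E} (hu : 0 ≤ u) (c : ℝ) (x : E) : bpF u (c • x) = c • bpF u x := by
  rcases le_or_gt 0 c with hc | hc
  · have hdec : c • x = (c • x⁺) - (c • x⁻) := by
      rw [← smul_sub, posPart_sub_negPart]
    rw [hdec, bpF_decomp hu (smul_nonneg hc (posPart_nonneg x)) (smul_nonneg hc (negPart_nonneg x)),
      pp_smul hu (posPart_nonneg x) hc, pp_smul hu (negPart_nonneg x) hc]
    show c • pp u x⁺ - c • pp u x⁻ = c • (pp u x⁺ - pp u x⁻)
    rw [smul_sub]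
  · have hc' : 0 ≤ -c := by linarith
    have hdec : c • x = ((-c) • x⁻) - ((-c) • x⁺) := by
      rw [← smul_sub, ← neg_sub, posPart_sub_negPart]
      rw [neg_smul, smul_neg]
      simp
    rw [hdec, bpF_decomp hu (smul_nonneg hc' (negPart_nonneg x)) (smul_nonneg hc' (posPart_nonneg x)),
      pp_smul hu (negPart_nonneg x) hc', pp_smul hu (posPart_nonneg x) hc']
    show (-c) • pp u x⁻ - (-c) • pp u x⁺ = c • (pp u x⁺ - pp u x⁻)
    rw [neg_smul, neg_smul, smul_sub]
    abel

open Classical in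
noncomputable def bandProj (u : E) : Module.End ℝ E :=
  if hu : 0 ≤ u then
    { toFun := bpF u
      map_add' := bpF_add hu
      map_smul' := fun c x => bpF_smul hu c x }
  else 0

lemma bandProj_apply {u : E} (hu : 0 ≤ u) (x : E) : bandProj u x = pp u x⁺ - pp u x⁻ := by
  rw [bandProj, dif_pos hu]; rfl

lemma bandProj_apply_nonneg {u : E} (hu : 0 ≤ u) {x : E} (hx : 0 ≤ x) :
    bandProj u x = pp u x := by
  rw [bandProj_apply hu, posPart_of_nonneg hx, negPart_of_nonneg hx, pp_zero, sub_zero]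

lemma bandProj_decomp {u : E} (hu : 0 ≤ u) {p q : E} (hp : 0 ≤ p) (hq : 0 ≤ q) :
    bandProj u (p - q) = pp u p - pp u q := by
  rw [bandProj, dif_pos hu]; exact bpF_decomp hu hp hq

lemma bandProj_idem {u : E} (hu : 0 ≤ u) (x : E) :
    bandProj u (bandProj u x) = bandProj u x := by
  rw [bandProj_apply hu x,
    bandProj_decomp hu (pp_nonneg (posPart_nonneg x)) (pp_nonneg (negPart_nonneg x)),
    pp_idem, pp_idem, ← bandProj_apply hu x]

lemma compl_nonneg {u x : E} (hx : 0 ≤ x) : 0 ≤ x - pp u x :=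
  sub_nonneg.mpr (pp_le_self u x)

lemma compl_mono {u x y : E} (hu : 0 ≤ u) (hx : 0 ≤ x) (hxy : x ≤ y) :
    x - pp u x ≤ y - pp u y := by
  have hyx : y = x + (y - x) := by abel
  have h1 : pp u y = pp u x + pp u (y - x) := by
    calc pp u y = pp u (x + (y - x)) := by rw [← hyx]
    _ = pp u x + pp u (y - x) := pp_add hu hx (sub_nonneg.mpr hxy)
  have h2 : 0 ≤ (y - x) - pp u (y - x) := compl_nonneg (sub_nonneg.mpr hxy)
  have h3 : y - pp u y = (x - pp u x) + ((y - x) - pp u (y - x)) := by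
    rw [h1]; abel
  rw [h3]
  calc x - pp u x = (x - pp u x) + 0 := (add_zero _).symm
  _ ≤ (x - pp u x) + ((y - x) - pp u (y - x)) := add_le_add_right h2 _

lemma pp_compl_zero {u x : E} (hu : 0 ≤ u) (hx : 0 ≤ x) : pp u (x - pp u x) = 0 := by
  have h0 : x = (x - pp u x) + pp u x := by abel
  have h1 : pp u x = pp u (x - pp u x) + pp u (pp u x) := by
    calc pp u x = pp u ((x - pp u x) + pp u x) := by rw [← h0]
    _ = pp u (x - pp u x) + pp u (pp u x) :=
        pp_add hu (compl_nonneg hx) (pp_nonneg hx)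
  rw [pp_idem] at h1
  have := h1.symm
  calc pp u (x - pp u x) = (pp u (x - pp u x) + pp u x) - pp u x := by abel
  _ = pp u x - pp u x := by rw [← h1]
  _ = 0 := sub_self _

lemma compl_inf {u x y : E} (hu : 0 ≤ u) (hx : 0 ≤ x) (hy : 0 ≤ y) :
    (x - pp u x) ⊓ (y - pp u y) = (x ⊓ y) - pp u (x ⊓ y) := by
  refine le_antisymm ?_ (le_inf (compl_mono hu (le_inf hx hy) inf_le_left)
    (compl_mono hu (le_inf hx hy) inf_le_right))
  set w := (x - pp u x) ⊓ (y - pp u y) with hw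
  have hw0 : 0 ≤ w := le_inf (compl_nonneg hx) (compl_nonneg hy)
  have hwx : w ≤ x := inf_le_left.trans (sub_le_self x (pp_nonneg hx))
  have hwy : w ≤ y := inf_le_right.trans (sub_le_self y (pp_nonneg hy))
  have hppw : pp u w = 0 := by
    refine le_antisymm ?_ (pp_nonneg hw0)
    calc pp u w ≤ pp u (x - pp u x) := pp_mono_x inf_le_left
    _ = 0 := pp_compl_zero hu hx
  have := compl_mono hu hw0 (le_inf hwx hwy)
  rwa [hppw, sub_zero] at this

lemma posPart_disj {a b : E} (hd : a ⊓ b = 0) : (a - b)⁺ = a := by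
  have h1 : (a - b)⁺ = (a - b) ⊔ (b - b) := by rw [sub_self, posPart_def]
  have h2 : (a - b) ⊔ (b - b) = a ⊔ b - b := (sup_sub a b b).symm
  have h3 : a ⊔ b = a + b := by
    have := inf_add_sup a b
    rw [hd, zero_add] at this
    exact this
  rw [h1, h2, h3, add_sub_cancel_right]

lemma compl_posPart {u : E} (hu : 0 ≤ u) (d : E) :
    d⁺ - pp u d⁺ = (d - bandProj u d)⁺ := by
  set a := d⁺ - pp u d⁺ with hadef
  set b := d⁻ - pp u d⁻ with hbdef
  have hab : a ⊓ b = 0 := by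
    rw [hadef, hbdef, compl_inf hu (posPart_nonneg d) (negPart_nonneg d),
      posPart_inf_negPart_eq_zero, pp_zero, sub_zero]
  have hd : d - bandProj u d = a - b := by
    rw [bandProj_apply hu d, hadef, hbdef]
    have h := posPart_sub_negPart d
    calc d - (pp u d⁺ - pp u d⁻) = (d⁺ - d⁻) - (pp u d⁺ - pp u d⁻) := by rw [h]
    _ = (d⁺ - pp u d⁺) - (d⁻ - pp u d⁻) := by abel
  rw [hd, posPart_disj hab]

lemma glb_smul {y : ℕ → E} (hglb : IsGLB (Set.range y) 0) {c : ℝ} (hc : 0 < c) :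
    IsGLB (Set.range fun n => c • y n) 0 := by
  constructor
  · rintro _ ⟨n, rfl⟩
    exact smul_nonneg hc.le (hglb.1 ⟨n, rfl⟩)
  · intro ℓ hℓ
    have h1 : c⁻¹ • ℓ ≤ 0 := by
      refine hglb.2 ?_
      rintro _ ⟨n, rfl⟩
      have h2 : ℓ ≤ c • y n := hℓ ⟨n, rfl⟩
      have := smul_le_smul_of_nonneg_left h2 (inv_nonneg.mpr hc.le)
      simpa [smul_smul, inv_mul_cancel₀ hc.ne'] using this
    have := smul_le_smul_of_nonneg_left h1 hc.le
    simpa [smul_smul, mul_inv_cancel₀ hc.ne'] using this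

lemma le_zero_of_le_tail {y : ℕ → E} (hanti : Antitone y) (hglb : IsGLB (Set.range y) 0)
    {ℓ : E} {K : ℕ} (h : ∀ n, K ≤ n → ℓ ≤ y n) : ℓ ≤ 0 := by
  refine hglb.2 ?_
  rintro _ ⟨n, rfl⟩
  exact (h (max n K) (le_max_right n K)).trans (hanti (le_max_left n K))

lemma arch {x ℓ : E} (hx : 0 ≤ x) (h : ∀ M : ℕ, 1 ≤ M → ℓ ≤ (M : ℝ)⁻¹ • x) : ℓ ≤ 0 := by
  have hp : ∀ M : ℕ, (M : ℝ) • ℓ⁺ ≤ x := by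
    intro M
    rcases Nat.eq_zero_or_pos M with rfl | hM
    · simpa using hx
    have hM1 : (1 : ℕ) ≤ M := hM
    have hMR : (0 : ℝ) < M := by exact_mod_cast hM
    have h1 : ℓ⁺ ≤ (M : ℝ)⁻¹ • x := by
      rw [posPart_def]
      exact sup_le (h M hM1) (smul_nonneg (inv_nonneg.mpr hMR.le) hx)
    have := smul_le_smul_of_nonneg_left h1 hMR.le
    rwa [smul_smul, mul_inv_cancel₀ hMR.ne', one_smul] at this
  have hbdd : BddAbove (Set.range fun M : ℕ => (M : ℝ) • ℓ⁺) :=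
    ⟨x, by rintro _ ⟨M, rfl⟩; exact hp M⟩
  set s := sSup (Set.range fun M : ℕ => (M : ℝ) • ℓ⁺) with hs
  have hlub : IsLUB (Set.range fun M : ℕ => (M : ℝ) • ℓ⁺) s :=
    isLUB_csSup (Set.range_nonempty _) hbdd
  have hstep : ∀ M : ℕ, (M : ℝ) • ℓ⁺ ≤ s - ℓ⁺ := by
    intro M
    have h2 : ((M : ℝ) + 1) • ℓ⁺ ≤ s := by
      have h3 := hlub.1 ⟨M + 1, rfl⟩
      simp only [Nat.cast_add, Nat.cast_one] at h3
      exact h3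
    rw [add_smul, one_smul] at h2
    exact le_sub_iff_add_le.mpr h2
  have hss : s ≤ s - ℓ⁺ := hlub.2 (by rintro _ ⟨M, rfl⟩; exact hstep M)
  have hpos : ℓ⁺ ≤ 0 := by
    have h5 := add_le_add_left hss ℓ⁺
    rw [sub_add_cancel] at h5
    calc ℓ⁺ = -s + (s + ℓ⁺) := by abel
    _ ≤ -s + s := add_le_add_right h5 _
    _ = 0 := by abel
  exact (le_posPart ℓ).trans hpos

lemma posPart_mono {a b : E} (h : a ≤ b) : a⁺ ≤ b⁺ := by
  rw [posPart_def, posPart_def]; exact sup_le_sup_right h 0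

lemma bandProj_posPart_self (d : E) : bandProj (d⁺) d = d⁺ := by
  rw [bandProj_apply (posPart_nonneg d) d, pp_self (posPart_nonneg d),
    pp_disj (posPart_nonneg d) (negPart_nonneg d) (by rw [inf_comm]; exact posPart_inf_negPart_eq_zero d),
    sub_zero]

section Main

variable (e : E) (y f : ℕ → E)

/-- candidate threshold at scale `M` -/
noncomputable def tsV (M k : ℕ) : E := ((M : ℝ))⁻¹ • e + ((M : ℝ) ^ 3) • y k

lemma Icc_ne (k : ℕ) : (Finset.Icc 1 (max k 2)).Nonempty :=
  Finset.nonempty_Icc.mpr (le_trans one_le_two (le_max_right k 2))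

/-- adaptive threshold -/
noncomputable def tvV (k : ℕ) : E := (Finset.Icc 1 (max k 2)).inf' (Icc_ne k) (fun M => tsV e y M k)

/-- the element generating the band of the `k`-th projection -/
noncomputable def uvV (k : ℕ) : E := (f k - (y k + tvV e y k))⁺

/-- cut of `y k` at height `M⁻³ e` -/
noncomputable def VvV (M k : ℕ) : E := (y k - ((M : ℝ) ^ 3)⁻¹ • e)⁺

/-- the band projections -/
noncomputable def PPV (k : ℕ) : Module.End ℝ E :=
  if 2 ≤ k then bandProj (uvV e y f k) else 0

variable {e : E} {y f : ℕ → E}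

lemma hy0 (hyG : IsGLB (Set.range y) 0) : ∀ n, 0 ≤ y n := fun n => hyG.1 ⟨n, rfl⟩

lemma tsV_nonneg (he0 : 0 ≤ e) (hy : ∀ n, 0 ≤ y n) (M k : ℕ) : 0 ≤ tsV e y M k :=
  add_nonneg (smul_nonneg (by positivity) he0) (smul_nonneg (by positivity) (hy k))

lemma tvV_nonneg (he0 : 0 ≤ e) (hy : ∀ n, 0 ≤ y n) (k : ℕ) : 0 ≤ tvV e y k :=
  Finset.le_inf' _ _ (fun M _ => tsV_nonneg he0 hy M k)

lemma tvV_le_tsV {M k : ℕ} (hM : 1 ≤ M) (hMk : M ≤ k) : tvV e y k ≤ tsV e y M k :=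
  Finset.inf'_le _ (Finset.mem_Icc.mpr ⟨hM, hMk.trans (le_max_left k 2)⟩)

lemma tvV_anti (hyA : Antitone y) : Antitone (tvV e y) := by
  intro k k' hkk'
  show tvV e y k' ≤ tvV e y k
  refine Finset.le_inf' (Icc_ne k) _ (fun M hM => ?_)
  rcases Finset.mem_Icc.mp hM with ⟨hM1, hM2⟩
  have hmem : M ∈ Finset.Icc 1 (max k' 2) :=
    Finset.mem_Icc.mpr ⟨hM1, hM2.trans (max_le_max hkk' le_rfl)⟩
  have h1 : tvV e y k' ≤ tsV e y M k' := Finset.inf'_le _ hmem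
  have h2 : tsV e y M k' ≤ tsV e y M k :=
    add_le_add_right (smul_le_smul_of_nonneg_left (hyA hkk') (by positivity)) _
  exact h1.trans h2

lemma tvV_ge (he0 : 0 ≤ e) (hy : ∀ n, 0 ≤ y n) {k : ℕ} (h2 : 2 ≤ k) :
    ((k : ℝ))⁻¹ • e ≤ tvV e y k := by
  refine Finset.le_inf' _ _ (fun M hM => ?_)
  rcases Finset.mem_Icc.mp hM with ⟨hM1, hM2⟩
  rw [max_eq_left h2] at hM2
  have hM0 : (0 : ℝ) < M := by exact_mod_cast hM1
  have h1 : ((k : ℝ))⁻¹ • e ≤ ((M : ℝ))⁻¹ • e :=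
    smul_le_smul_right' (inv_anti₀ hM0 (by exact_mod_cast hM2)) he0
  refine h1.trans ?_
  calc ((M : ℝ))⁻¹ • e = ((M : ℝ))⁻¹ • e + 0 := (add_zero _).symm
  _ ≤ tsV e y M k := add_le_add_right (smul_nonneg (by positivity) (hy k)) _

lemma VvV_nonneg (M k : ℕ) : 0 ≤ VvV e y M k := posPart_nonneg _

lemma VvV_mono_M (he0 : 0 ≤ e) {M M' k : ℕ} (hM : 1 ≤ M) (h : M ≤ M') :
    VvV e y M k ≤ VvV e y M' k := by
  have hM0 : (0:ℝ) < (M:ℝ) := by exact_mod_cast hM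
  have hMM' : (M:ℝ) ≤ (M':ℝ) := by exact_mod_cast h
  have hinv : ((M' : ℝ)^3)⁻¹ ≤ ((M : ℝ)^3)⁻¹ :=
    inv_anti₀ (by positivity) (pow_le_pow_left₀ hM0.le hMM' 3)
  exact posPart_mono (sub_le_sub_left (smul_le_smul_right' hinv he0) _)

lemma VvV_mono_k (hyA : Antitone y) {M k k' : ℕ} (h : k ≤ k') :
    VvV e y M k' ≤ VvV e y M k :=
  posPart_mono (sub_le_sub_right (hyA h) _)

lemma cut_key (he0 : 0 ≤ e) (hy : ∀ n, 0 ≤ y n) {M k : ℕ} (hM : 1 ≤ M) :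
    pp (VvV e y M k) (y k) - ((M : ℝ) ^ 3)⁻¹ • pp (VvV e y M k) e = VvV e y M k := by
  set c : ℝ := ((M : ℝ) ^ 3)⁻¹ with hc
  have hc0 : 0 < c := by
    have : (0:ℝ) < (M:ℝ) := by exact_mod_cast hM
    positivity
  set d : E := y k - c • e with hd
  have hV : (0:E) ≤ VvV e y M k := VvV_nonneg M k
  have h1 : bandProj (VvV e y M k) d = VvV e y M k := bandProj_posPart_self d
  have h2 : bandProj (VvV e y M k) d
      = pp (VvV e y M k) (y k) - pp (VvV e y M k) (c • e) :=
    bandProj_decomp hV (hy k) (smul_nonneg hc0.le he0)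
  have h3 : pp (VvV e y M k) (c • e) = c • pp (VvV e y M k) e := pp_smul hV he0 hc0.le
  rw [h2, h3] at h1
  exact h1

lemma cut_e_le (he0 : 0 ≤ e) (hy : ∀ n, 0 ≤ y n) {M k : ℕ} (hM : 1 ≤ M) :
    pp (VvV e y M k) e ≤ ((M : ℝ) ^ 3) • y k := by
  have hM0 : (0:ℝ) < (M:ℝ) := by exact_mod_cast hM
  have hc0 : (0:ℝ) < ((M : ℝ) ^ 3)⁻¹ := by positivity
  have h1 := cut_key he0 hy (k := k) hM
  have h2 : ((M : ℝ) ^ 3)⁻¹ • pp (VvV e y M k) e ≤ pp (VvV e y M k) (y k) := by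
    have h3 : 0 ≤ VvV e y M k := VvV_nonneg M k
    have h2' : ((M : ℝ) ^ 3)⁻¹ • pp (VvV e y M k) e
        = pp (VvV e y M k) (y k)
          - (pp (VvV e y M k) (y k) - ((M : ℝ) ^ 3)⁻¹ • pp (VvV e y M k) e) := by abel
    rw [h1] at h2'
    rw [h2']
    exact sub_le_self _ h3
  have h5 : pp (VvV e y M k) (y k) ≤ y k := pp_le_self _ _
  have h6 := smul_le_smul_of_nonneg_left (h2.trans h5) (by positivity : (0:ℝ) ≤ (M:ℝ)^3)
  rwa [smul_smul, mul_inv_cancel₀ (by positivity : ((M:ℝ)^3) ≠ 0), one_smul] at h6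

lemma cut_compl_y (he0 : 0 ≤ e) (hy : ∀ n, 0 ≤ y n) {M k : ℕ} (hM : 1 ≤ M) :
    y k - pp (VvV e y M k) (y k) ≤ ((M : ℝ) ^ 3)⁻¹ • (e - pp (VvV e y M k) e) := by
  have hM0 : (0:ℝ) < (M:ℝ) := by exact_mod_cast hM
  set c : ℝ := ((M : ℝ) ^ 3)⁻¹ with hc
  have h1 := cut_key he0 hy (k := k) hM
  -- d - d⁺ = -(d⁻) ≤ 0
  have h2 : (y k - c • e) - VvV e y M k ≤ 0 := by
    have h3 : VvV e y M k = (y k - c • e)⁺ := rfl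
    rw [h3]
    have h4 := posPart_sub_negPart (y k - c • e)
    have h5 : (y k - c • e) - (y k - c • e)⁺ = -((y k - c • e)⁻) := by
      calc (y k - c • e) - (y k - c • e)⁺
          = ((y k - c • e)⁺ - (y k - c • e)⁻) - (y k - c • e)⁺ := by rw [h4]
      _ = -((y k - c • e)⁻) := by abel
    rw [h5]
    simpa using negPart_nonneg (y k - c • e)
  rw [← h1] at h2
  have h6 : y k - pp (VvV e y M k) (y k) ≤ c • e - c • pp (VvV e y M k) e := by
    have := add_le_add_right h2 (c • e - c • pp (VvV e y M k) e)
    calc y k - pp (VvV e y M k) (y k)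
        = y k - c • e - (pp (VvV e y M k) (y k) - c • pp (VvV e y M k) e)
          + (c • e - c • pp (VvV e y M k) e) := by abel
    _ ≤ 0 + (c • e - c • pp (VvV e y M k) e) := add_le_add_left h2 _
    _ = c • e - c • pp (VvV e y M k) e := zero_add _
  rwa [← smul_sub] at h6

lemma cut_compl_y' (he0 : 0 ≤ e) (hy : ∀ n, 0 ≤ y n) {M k : ℕ} (hM : 1 ≤ M) :
    y k - pp (VvV e y M k) (y k) ≤ ((M : ℝ) ^ 3)⁻¹ • e := by
  refine (cut_compl_y he0 hy hM).trans ?_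
  have hM0 : (0:ℝ) < (M:ℝ) := by exact_mod_cast hM
  exact smul_le_smul_of_nonneg_left (sub_le_self e (pp_nonneg he0)) (by positivity)

lemma f_le_ysmul (hf : ∀ n, 0 ≤ f n) (hyA : Antitone y)
    (hS : ∀ j, (∑ i ∈ Finset.range j, f i) ≤ (j : ℝ) • y j) (k : ℕ) :
    f k ≤ ((k : ℝ) + 1) • y k := by
  have h1 : f k ≤ ∑ i ∈ Finset.range (k + 1), f i :=
    Finset.single_le_sum (f := fun i => f i) (fun i _ => hf i)
      (Finset.mem_range.mpr (Nat.lt_succ_self k))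
  have h2 := hS (k + 1)
  have h3 : ((k + 1 : ℕ) : ℝ) • y (k + 1) ≤ ((k : ℝ) + 1) • y k := by
    have h4 : ((k + 1 : ℕ) : ℝ) = (k : ℝ) + 1 := by push_cast; ring
    rw [h4]
    exact smul_le_smul_of_nonneg_left (hyA (Nat.le_succ k)) (by positivity)
  exact h1.trans (h2.trans h3)

lemma thresh_le (he0 : 0 ≤ e) (hy : ∀ n, 0 ≤ y n) (hf : ∀ n, 0 ≤ f n) (k : ℕ) :
    pp (uvV e y f k) (y k + tvV e y k) ≤ f k := by
  set u : E := uvV e y f k with hu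
  have hu0 : 0 ≤ u := posPart_nonneg _
  set d : E := f k - (y k + tvV e y k) with hd
  have hct : 0 ≤ y k + tvV e y k := add_nonneg (hy k) (tvV_nonneg he0 hy k)
  have h1 : bandProj u d = u := bandProj_posPart_self d
  have h2 : bandProj u d = pp u (f k) - pp u (y k + tvV e y k) :=
    bandProj_decomp hu0 (hf k) hct
  rw [h2] at h1
  have h3 : pp u (y k + tvV e y k)
      = pp u (f k) - (pp u (f k) - pp u (y k + tvV e y k)) := by abel
  rw [h1] at h3
  rw [h3]
  exact (sub_le_self _ hu0).trans (pp_le_self _ _)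

lemma sigma_fix (he0 : 0 ≤ e) (hy : ∀ n, 0 ≤ y n) (hyA : Antitone y) (hf : ∀ n, 0 ≤ f n)
    (hS : ∀ j, (∑ i ∈ Finset.range j, f i) ≤ (j : ℝ) • y j) {k : ℕ} (h2 : 2 ≤ k) :
    pp (VvV e y k k) (pp (uvV e y f k) e) = pp (uvV e y f k) e := by
  have hk1 : 1 ≤ k := le_trans one_le_two h2
  have hk0 : (0:ℝ) < (k:ℝ) := by exact_mod_cast hk1
  set c : ℝ := ((k : ℝ) ^ 3)⁻¹ with hc
  set V : E := VvV e y k k with hV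
  have hV0 : 0 ≤ V := VvV_nonneg k k
  set u : E := uvV e y f k with hu
  have hu0 : 0 ≤ u := posPart_nonneg _
  set d : E := f k - (y k + tvV e y k) with hd
  have hfix : pp V u = u := by
    have h1 : u - pp V u = (d - bandProj V d)⁺ := compl_posPart hV0 d
    have h2' : bandProj V d = pp V (f k) - (pp V (y k) + pp V (tvV e y k)) := by
      have := bandProj_decomp hV0 (hf k) (add_nonneg (hy k) (tvV_nonneg he0 hy k))
      rw [← hd] at this
      rw [this, pp_add hV0 (hy k) (tvV_nonneg he0 hy k)]
    have hdd : d - bandProj V d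
        = (f k - pp V (f k)) - (y k - pp V (y k)) - (tvV e y k - pp V (tvV e y k)) := by
      rw [h2', hd]; abel
    have hA : f k - pp V (f k) ≤ ((k:ℝ) + 1) • (y k - pp V (y k)) := by
      have hmono := compl_mono hV0 (hf k) (f_le_ysmul hf hyA hS k)
      rwa [pp_smul hV0 (hy k) (by positivity), ← smul_sub] at hmono
    have hB : 0 ≤ y k - pp V (y k) := compl_nonneg (hy k)
    have hC : (k:ℝ)⁻¹ • (e - pp V e) ≤ tvV e y k - pp V (tvV e y k) := by
      have hmono := compl_mono hV0 (smul_nonneg (by positivity) he0) (tvV_ge he0 hy h2)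
      rwa [pp_smul hV0 he0 (by positivity), ← smul_sub] at hmono
    have hcompl0 : 0 ≤ e - pp V e := compl_nonneg he0
    have hych : y k - pp V (y k) ≤ c • (e - pp V e) := cut_compl_y he0 hy hk1
    have hAc : f k - pp V (f k) ≤ (((k:ℝ) + 1) * c) • (e - pp V e) := by
      refine hA.trans ?_
      rw [mul_smul]
      exact smul_le_smul_of_nonneg_left hych (by positivity)
    have hstep : d - bandProj V d ≤ (((k:ℝ) + 1) * c - (k:ℝ)⁻¹) • (e - pp V e) := by
      rw [hdd, sub_smul]
      have hy' : -(y k - pp V (y k)) ≤ 0 := neg_nonpos.mpr hB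
      calc (f k - pp V (f k)) - (y k - pp V (y k)) - (tvV e y k - pp V (tvV e y k))
          ≤ (f k - pp V (f k)) - (tvV e y k - pp V (tvV e y k)) := by
            have := add_le_add_right hy' ((f k - pp V (f k)) - (tvV e y k - pp V (tvV e y k)))
            calc (f k - pp V (f k)) - (y k - pp V (y k)) - (tvV e y k - pp V (tvV e y k))
                = -(y k - pp V (y k)) + ((f k - pp V (f k)) - (tvV e y k - pp V (tvV e y k))) := by abel
            _ ≤ 0 + ((f k - pp V (f k)) - (tvV e y k - pp V (tvV e y k))) := add_le_add_left hy' _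
            _ = (f k - pp V (f k)) - (tvV e y k - pp V (tvV e y k)) := zero_add _
      _ ≤ (((k:ℝ) + 1) * c) • (e - pp V e) - (k:ℝ)⁻¹ • (e - pp V e) := by
            exact sub_le_sub hAc hC
    have hscal : ((k:ℝ) + 1) * c - (k:ℝ)⁻¹ ≤ 0 := by
      rw [hc, sub_nonpos]
      have hk2 : (2:ℝ) ≤ (k:ℝ) := by exact_mod_cast h2
      calc ((k:ℝ)+1) * ((k:ℝ)^3)⁻¹ = ((k:ℝ)+1)/((k:ℝ)^3) := by rw [div_eq_mul_inv]
      _ ≤ 1/(k:ℝ) := by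
          rw [div_le_div_iff₀ (by positivity) hk0]
          nlinarith [sq_nonneg ((k:ℝ) - 2), sq_nonneg (k:ℝ), hk2]
      _ = (k:ℝ)⁻¹ := one_div _
    have hneg : d - bandProj V d ≤ 0 :=
      hstep.trans (smul_nonpos' hscal hcompl0)
    have hplus : (d - bandProj V d)⁺ ≤ 0 := by
      have := posPart_mono hneg
      rwa [posPart_of_nonneg le_rfl] at this
    have h0 : u - pp V u = 0 :=
      le_antisymm (h1.trans_le hplus) (compl_nonneg hu0)
    have := sub_eq_zero.mp h0
    exact this.symm
  exact pp_pp_fix hV0 hu0 he0 hfix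

end Main

lemma map_inf'_helper {φ : E → E} (hφ : ∀ a b : E, 0 ≤ a → 0 ≤ b → φ (a ⊓ b) = φ a ⊓ φ b)
    {ι : Type*} {s : Finset ι} (hs : s.Nonempty) (F : ι → E) (hF : ∀ i ∈ s, 0 ≤ F i) :
    φ (s.inf' hs F) = s.inf' hs (fun i => φ (F i)) := by
  induction hs using Finset.Nonempty.cons_induction with
  | singleton a => simp
  | cons a s ha hs ih =>
    rw [Finset.inf'_cons, Finset.inf'_cons]
    have h0 : 0 ≤ s.inf' hs F :=
      Finset.le_inf' _ _ (fun i hi => hF i (Finset.mem_cons_of_mem hi))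
    rw [hφ _ _ (hF a (Finset.mem_cons_self a s)) h0,
      ih (fun i hi => hF i (Finset.mem_cons_of_mem hi))]
    exact hs

section LayerLemma

variable {e : E} {y f : ℕ → E}

lemma layer_bound (he0 : 0 ≤ e) (hy : ∀ n, 0 ≤ y n) (hyA : Antitone y)
    (hf : ∀ n, 0 ≤ f n) (hS : ∀ j, (∑ i ∈ Finset.range j, f i) ≤ (j : ℝ) • y j)
    {m k j : ℕ} (hm : 1 ≤ m) (hkj : k ≤ j) :
    pp (VvV e y (m+1) k) (pp (uvV e y f k) e) - pp (VvV e y m k) (pp (uvV e y f k) e)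
      ≤ ((m : ℝ) + 1) • (f k - pp (VvV e y m j) (f k)) := by
  set Vm : E := VvV e y m k with hVmdef
  set Vm' : E := VvV e y (m+1) k with hVm'def
  set u : E := uvV e y f k with hudef
  have hVm0 : 0 ≤ Vm := VvV_nonneg m k
  have hVm'0 : 0 ≤ Vm' := VvV_nonneg (m+1) k
  have hu0 : 0 ≤ u := posPart_nonneg _
  have hVmm : Vm ≤ Vm' := VvV_mono_M he0 hm (Nat.le_succ m)
  -- the layer operation
  set lam : E → E := fun z => pp Vm' z - pp Vm z with hlam
  have lam_fix : ∀ z : E, 0 ≤ z → pp Vm' (pp Vm z) = pp Vm z :=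
    fun z hz => pp_fix_of_le hVm'0 hVm0 hVmm hz
  have lam_nonneg : ∀ z : E, 0 ≤ z → 0 ≤ lam z :=
    fun z hz => sub_nonneg.mpr (pp_mono_u hVm0 hVmm)
  have lam_add : ∀ a b : E, 0 ≤ a → 0 ≤ b → lam (a + b) = lam a + lam b := by
    intro a b ha hb
    show pp Vm' (a+b) - pp Vm (a+b) = (pp Vm' a - pp Vm a) + (pp Vm' b - pp Vm b)
    rw [pp_add hVm'0 ha hb, pp_add hVm0 ha hb]; abel
  have lam_smul : ∀ (c : ℝ) (a : E), 0 ≤ c → 0 ≤ a → lam (c • a) = c • lam a := by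
    intro c a hc ha
    show pp Vm' (c • a) - pp Vm (c • a) = c • (pp Vm' a - pp Vm a)
    rw [pp_smul hVm'0 ha hc, pp_smul hVm0 ha hc, smul_sub]
  have lam_mono : ∀ a b : E, 0 ≤ a → a ≤ b → lam a ≤ lam b := by
    intro a b ha hab
    have hba : 0 ≤ b - a := sub_nonneg.mpr hab
    have hb' : b = a + (b - a) := by abel
    have h1 : lam b = lam a + lam (b - a) := by
      have h2 := lam_add a (b - a) ha hba
      rw [← hb'] at h2
      exact h2
    rw [h1]
    exact le_add_of_nonneg_right (lam_nonneg _ hba)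
  have lam_eq : ∀ z : E, 0 ≤ z → lam z = pp Vm' (z - pp Vm z) := by
    intro z hz
    have h1 : z = (z - pp Vm z) + pp Vm z := by abel
    have h2 : pp Vm' z = pp Vm' (z - pp Vm z) + pp Vm' (pp Vm z) := by
      calc pp Vm' z = pp Vm' ((z - pp Vm z) + pp Vm z) := by rw [← h1]
      _ = pp Vm' (z - pp Vm z) + pp Vm' (pp Vm z) :=
          pp_add hVm'0 (compl_nonneg hz) (pp_nonneg hz)
    rw [lam_fix z hz] at h2
    show pp Vm' z - pp Vm z = pp Vm' (z - pp Vm z)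
    rw [h2]; abel
  have lam_inf : ∀ a b : E, 0 ≤ a → 0 ≤ b → lam (a ⊓ b) = lam a ⊓ lam b := by
    intro a b ha hb
    rw [lam_eq _ (le_inf ha hb), compl_inf hVm0 ha hb |>.symm,
      pp_inf hVm'0 (compl_nonneg ha) (compl_nonneg hb), ← lam_eq a ha, ← lam_eq b hb]
  -- lower bound for lam (y k)
  have lam_y_ge : (((m+1 : ℕ) : ℝ) ^ 3)⁻¹ • lam e ≤ lam (y k) := by
    set c' : ℝ := (((m+1 : ℕ) : ℝ) ^ 3)⁻¹ with hc'
    have hm1 : (0:ℝ) < ((m+1 : ℕ) : ℝ) := by exact_mod_cast Nat.succ_pos m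
    have hc'0 : 0 < c' := by positivity
    set d' : E := y k - c' • e with hd'
    have hVd : Vm' = d'⁺ := rfl
    have h1 : bandProj Vm' d' = Vm' := by rw [hVd]; exact bandProj_posPart_self d'
    have hdisj : d'⁻ ⊓ Vm' = 0 := by rw [hVd, inf_comm]; exact posPart_inf_negPart_eq_zero d'
    have h2 : pp Vm' d'⁻ = 0 := by
      refine pp_disj hVm'0 (negPart_nonneg d') ?_
      rw [hVd] at hdisj ⊢; exact hdisj
    have h3 : pp Vm d'⁻ = 0 := by
      refine le_antisymm ?_ (pp_nonneg (negPart_nonneg d'))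
      calc pp Vm d'⁻ ≤ pp Vm' d'⁻ := pp_mono_u hVm0 hVmm
      _ = 0 := h2
    have h4 : bandProj Vm d' = pp Vm Vm' := by
      rw [bandProj_apply hVm0 d', ← hVd, h3, sub_zero]
    have h5 : bandProj Vm' d' - bandProj Vm d' = Vm' - pp Vm Vm' := by rw [h1, h4]
    have h6 : 0 ≤ Vm' - pp Vm Vm' := compl_nonneg hVm'0
    -- evaluate via decomposition
    have h7 : bandProj Vm' d' = pp Vm' (y k) - c' • pp Vm' e := by
      rw [hd', bandProj_decomp hVm'0 (hy k) (smul_nonneg hc'0.le he0),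
        pp_smul hVm'0 he0 hc'0.le]
    have h8 : bandProj Vm d' = pp Vm (y k) - c' • pp Vm e := by
      rw [hd', bandProj_decomp hVm0 (hy k) (smul_nonneg hc'0.le he0),
        pp_smul hVm0 he0 hc'0.le]
    have h9 : 0 ≤ lam (y k) - c' • lam e := by
      have h10 : lam (y k) - c' • lam e
          = bandProj Vm' d' - bandProj Vm d' := by
        rw [h7, h8]
        show pp Vm' (y k) - pp Vm (y k) - c' • (pp Vm' e - pp Vm e) = _
        rw [smul_sub]; abel
      rw [h10, h5]; exact h6
    have := add_le_add_right h9 (c' • lam e)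
    simpa using this
  -- lower bound for lam (tvV e y k)
  have lam_t_ge : ((m : ℝ) + 1)⁻¹ • lam e ≤ lam (tvV e y k) := by
    have hinf : lam (tvV e y k)
        = (Finset.Icc 1 (max k 2)).inf' (Icc_ne k) (fun M => lam (tsV e y M k)) :=
      map_inf'_helper lam_inf (Icc_ne k) (fun M => tsV e y M k)
        (fun M _ => tsV_nonneg he0 hy M k)
    rw [hinf]
    refine Finset.le_inf' _ _ (fun M'' hM'' => ?_)
    rcases Finset.mem_Icc.mp hM'' with ⟨hM1, _⟩
    have hM''0 : (0:ℝ) < (M'' : ℝ) := by exact_mod_cast hM1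
    have hme : 0 ≤ lam e := lam_nonneg e he0
    have hlts : lam (tsV e y M'' k)
        = ((M'' : ℝ))⁻¹ • lam e + ((M'' : ℝ) ^ 3) • lam (y k) := by
      rw [tsV, lam_add _ _ (smul_nonneg (by positivity) he0) (smul_nonneg (by positivity) (hy k)),
        lam_smul _ _ (by positivity) he0, lam_smul _ _ (by positivity) (hy k)]
    rw [hlts]
    rcases le_or_gt M'' (m+1) with hcase | hcase
    · have h1 : ((m : ℝ) + 1)⁻¹ • lam e ≤ ((M'' : ℝ))⁻¹ • lam e := by
        refine smul_le_smul_right' ?_ hme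
        have : ((M'' : ℕ) : ℝ) ≤ ((m:ℝ) + 1) := by
          have : ((M'' : ℕ) : ℝ) ≤ ((m + 1 : ℕ) : ℝ) := by exact_mod_cast hcase
          simpa [Nat.cast_add, Nat.cast_one] using this
        exact inv_anti₀ (by positivity) this
      calc ((m : ℝ) + 1)⁻¹ • lam e ≤ ((M'' : ℝ))⁻¹ • lam e := h1
      _ ≤ _ := le_add_of_nonneg_right (smul_nonneg (by positivity) (lam_nonneg _ (hy k)))
    · -- M'' ≥ m + 2
      have hscal : (1:ℝ) ≤ ((M'' : ℝ) ^ 3) * (((m+1 : ℕ) : ℝ) ^ 3)⁻¹ := by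
        rw [← div_eq_mul_inv]
        have hlt : ((m+1 : ℕ) : ℝ) ≤ (M'' : ℝ) := by exact_mod_cast hcase.le
        have hp : (0:ℝ) < ((m+1 : ℕ) : ℝ) ^ 3 := by positivity
        rw [le_div_iff₀ hp, one_mul]
        exact pow_le_pow_left₀ (by positivity) hlt 3
      have h2 : ((m : ℝ) + 1)⁻¹ • lam e ≤ ((M'' : ℝ) ^ 3) • lam (y k) := by
        have h3 : ((M'' : ℝ) ^ 3) • lam (y k)
            ≥ ((M'' : ℝ) ^ 3) • ((((m+1 : ℕ) : ℝ) ^ 3)⁻¹ • lam e) :=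
          smul_le_smul_of_nonneg_left lam_y_ge (by positivity)
        have h4 : ((M'' : ℝ) ^ 3) • ((((m+1 : ℕ) : ℝ) ^ 3)⁻¹ • lam e)
            = (((M'' : ℝ) ^ 3) * (((m+1 : ℕ) : ℝ) ^ 3)⁻¹) • lam e := by rw [smul_smul]
        have h5 : ((m : ℝ) + 1)⁻¹ • lam e
            ≤ (((M'' : ℝ) ^ 3) * (((m+1 : ℕ) : ℝ) ^ 3)⁻¹) • lam e := by
          refine smul_le_smul_right' ?_ hme
          have : ((m : ℝ) + 1)⁻¹ ≤ 1 := by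
            rw [inv_le_one_iff₀]
            right; linarith [Nat.cast_nonneg (α := ℝ) m]
          linarith [hscal]
        exact h5.trans (h4 ▸ h3)
      calc ((m : ℝ) + 1)⁻¹ • lam e ≤ ((M'' : ℝ) ^ 3) • lam (y k) := h2
      _ ≤ _ := le_add_of_nonneg_left (smul_nonneg (by positivity) hme)
  -- commuting lam with pp u
  have comm_lam : ∀ x : E, 0 ≤ x → lam (pp u x) = pp u (lam x) := by
    intro x hx
    have h1 : pp Vm' (pp u x) = pp u (pp Vm' x) := pp_comm hx hVm'0 hu0
    have h2 : pp Vm (pp u x) = pp u (pp Vm x) := pp_comm hx hVm0 hu0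
    have h3 : pp Vm' x = lam x + pp Vm x := by show _ = (pp Vm' x - pp Vm x) + _; abel
    have h4 : pp u (pp Vm' x) = pp u (lam x) + pp u (pp Vm x) := by
      calc pp u (pp Vm' x) = pp u (lam x + pp Vm x) := by rw [← h3]
      _ = pp u (lam x) + pp u (pp Vm x) := pp_add hu0 (lam_nonneg x hx) (pp_nonneg hx)
    show pp Vm' (pp u x) - pp Vm (pp u x) = pp u (lam x)
    rw [h1, h2, h4]; abel
  -- main chain
  have hchain1 : lam (pp u e) = pp u (lam e) := comm_lam e he0
  have hle : lam e ≤ ((m : ℝ) + 1) • lam (tvV e y k) := by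
    have := smul_le_smul_of_nonneg_left lam_t_ge (by positivity : (0:ℝ) ≤ (m:ℝ)+1)
    rwa [smul_smul, mul_inv_cancel₀ (by positivity : ((m:ℝ)+1) ≠ 0), one_smul] at this
  have hchain2 : pp u (lam e) ≤ ((m : ℝ) + 1) • pp u (lam (tvV e y k)) := by
    refine (pp_mono_x hle).trans ?_
    rw [pp_smul hu0 (lam_nonneg _ (tvV_nonneg he0 hy k)) (by positivity)]
  have hchain3 : pp u (lam (tvV e y k)) = lam (pp u (tvV e y k)) :=
    (comm_lam (tvV e y k) (tvV_nonneg he0 hy k)).symm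
  have hput : pp u (tvV e y k) ≤ f k := by
    have h1 : pp u (tvV e y k) ≤ pp u (y k + tvV e y k) :=
      pp_mono_x (le_add_of_nonneg_left (hy k))
    exact h1.trans (thresh_le he0 hy hf k)
  have hchain4 : lam (pp u (tvV e y k)) ≤ lam (f k) :=
    lam_mono _ _ (pp_nonneg (tvV_nonneg he0 hy k)) hput
  have hchain5 : lam (f k) ≤ f k - pp (VvV e y m j) (f k) := by
    have h1 : pp Vm' (f k) ≤ f k := pp_le_self _ _
    have h2 : pp (VvV e y m j) (f k) ≤ pp Vm (f k) :=
      pp_mono_u (VvV_nonneg m j) (VvV_mono_k hyA hkj)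
    show pp Vm' (f k) - pp Vm (f k) ≤ f k - pp (VvV e y m j) (f k)
    exact sub_le_sub h1 h2
  calc pp Vm' (pp u e) - pp Vm (pp u e) = pp u (lam e) := hchain1
  _ ≤ ((m : ℝ) + 1) • pp u (lam (tvV e y k)) := hchain2
  _ = ((m : ℝ) + 1) • lam (pp u (tvV e y k)) := by rw [hchain3]
  _ ≤ ((m : ℝ) + 1) • lam (f k) :=
      smul_le_smul_of_nonneg_left hchain4 (by positivity)
  _ ≤ ((m : ℝ) + 1) • (f k - pp (VvV e y m j) (f k)) :=
      smul_le_smul_of_nonneg_left hchain5 (by positivity)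

end LayerLemma

lemma sum_Ico_sub' {A : Type*} [AddCommGroup A] (F : ℕ → A) {M k : ℕ} (h : M ≤ k) :
    ∑ m ∈ Finset.Ico M k, (F (m + 1) - F m) = F k - F M := by
  induction k with
  | zero =>
    have h0 : M = 0 := Nat.le_zero.mp h
    subst h0; simp
  | succ n ih =>
    rcases Nat.lt_or_ge M (n+1) with hlt | hge
    · have hMn : M ≤ n := by omega
      rw [Finset.sum_Ico_succ_top hMn, ih hMn]; abel
    · have hM : M = n + 1 := by omega
      subst hM; simp

lemma scalar_sum_bound {M j : ℕ} (hM : 2 ≤ M) :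
    ∑ m ∈ Finset.Ico M j, (((m : ℝ) + 1) * ((m : ℝ) ^ 3)⁻¹) ≤ 2 / ((M : ℝ) - 1) := by
  have hM2 : (2:ℝ) ≤ (M:ℝ) := by exact_mod_cast hM
  have hM1 : (0:ℝ) < (M:ℝ) - 1 := by linarith
  rcases le_or_gt j M with hjM | hMj
  · rw [Finset.Ico_eq_empty (by omega), Finset.sum_empty]
    positivity
  · set H : ℕ → ℝ := fun m => 2 / ((m : ℝ) - 1) with hH
    have t3 : ∑ m ∈ Finset.Ico M j, (H m - H (m+1)) = H M - H j := by
      have t1 := sum_Ico_sub' (fun m => -(H m)) hMj.le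
      have h4 : ∑ m ∈ Finset.Ico M j, (H m - H (m+1))
          = ∑ m ∈ Finset.Ico M j, (-(H (m+1)) - -(H m)) :=
        Finset.sum_congr rfl (fun m _ => by ring)
      rw [h4, t1]; ring
    have hbd : ∑ m ∈ Finset.Ico M j, (((m : ℝ) + 1) * ((m : ℝ) ^ 3)⁻¹)
        ≤ ∑ m ∈ Finset.Ico M j, (H m - H (m+1)) := by
      refine Finset.sum_le_sum (fun m hm => ?_)
      rcases Finset.mem_Ico.mp hm with ⟨hMm, _⟩
      have hm2 : (2:ℝ) ≤ (m:ℝ) := by exact_mod_cast hM.trans hMm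
      have hm0 : (0:ℝ) < (m:ℝ) := by linarith
      have hm1 : (0:ℝ) < (m:ℝ) - 1 := by linarith
      have hcast : ((m + 1 : ℕ) : ℝ) - 1 = (m:ℝ) := by push_cast; ring
      show ((m : ℝ) + 1) * ((m : ℝ) ^ 3)⁻¹ ≤ 2 / ((m : ℝ) - 1) - 2 / (((m + 1 : ℕ) : ℝ) - 1)
      rw [hcast]
      have e1 : 2/((m:ℝ)-1) - 2/(m:ℝ) = 2/(((m:ℝ)-1)*(m:ℝ)) := by
        field_simp; ring
      rw [e1, ← div_eq_mul_inv, div_le_div_iff₀ (by positivity) (by positivity)]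
      nlinarith [pow_pos hm0 3, hm0.le, hm2]
    have hHj : 0 ≤ H j := by
      have : (2:ℝ) < (j:ℝ) := by
        have : M < j := hMj
        have hj3 : (M:ℝ) < (j:ℝ) := by exact_mod_cast this
        linarith
      have : (0:ℝ) < (j:ℝ) - 1 := by linarith
      positivity
    calc ∑ m ∈ Finset.Ico M j, (((m : ℝ) + 1) * ((m : ℝ) ^ 3)⁻¹)
        ≤ H M - H j := hbd.trans (le_of_eq t3)
    _ ≤ H M := by linarith
    _ = 2 / ((M : ℝ) - 1) := rfl

section Density

variable {e : E} {y f : ℕ → E}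

lemma PPV_e_val (he0 : 0 ≤ e) {k : ℕ} (h2 : 2 ≤ k) :
    PPV e y f k e = pp (uvV e y f k) e := by
  have hu0 : (0:E) ≤ uvV e y f k := posPart_nonneg _
  rw [PPV, if_pos h2]
  exact bandProj_apply_nonneg hu0 he0

lemma PPV_e_nonneg (he0 : 0 ≤ e) (k : ℕ) : 0 ≤ PPV e y f k e := by
  by_cases h2 : 2 ≤ k
  · rw [PPV_e_val he0 h2]; exact pp_nonneg he0
  · rw [PPV, if_neg h2]; exact le_rfl

lemma PPV_sum_nonneg (he0 : 0 ≤ e) (n : ℕ) : 0 ≤ ∑ k ∈ Finset.range n, PPV e y f k e :=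
  Finset.sum_nonneg fun k _ => PPV_e_nonneg he0 k

lemma PPV_e_le (he0 : 0 ≤ e) (k : ℕ) : PPV e y f k e ≤ e := by
  by_cases h2 : 2 ≤ k
  · rw [PPV_e_val he0 h2]; exact pp_le_self _ _
  · rw [PPV, if_neg h2]; exact he0

lemma PPV_sum_le (he0 : 0 ≤ e) (n : ℕ) :
    (∑ k ∈ Finset.range n, PPV e y f k e) ≤ (n : ℝ) • e := by
  calc (∑ k ∈ Finset.range n, PPV e y f k e) ≤ ∑ _k ∈ Finset.range n, e :=
    Finset.sum_le_sum (fun k _ => PPV_e_le he0 k)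
  _ = n • e := by rw [Finset.sum_const, Finset.card_range]
  _ = (n : ℝ) • e := (Nat.cast_smul_eq_nsmul ℝ n e).symm

lemma perk_bound (he0 : 0 ≤ e) (hy : ∀ n, 0 ≤ y n) (hyA : Antitone y)
    (hf : ∀ n, 0 ≤ f n) (hS : ∀ j, (∑ i ∈ Finset.range j, f i) ≤ (j : ℝ) • y j)
    {M k j n₀ : ℕ} (hM : 2 ≤ M) (hMk : M ≤ k) (h2k : 2 ≤ k) (hkj : k ≤ j) (hn₀k : n₀ ≤ k) :
    pp (uvV e y f k) e ≤ ((M : ℝ) ^ 3) • y n₀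
      + ∑ m ∈ Finset.Ico M k, ((m : ℝ) + 1) • (f k - pp (VvV e y m j) (f k)) := by
  set pk : E := pp (uvV e y f k) e with hpk
  set F : ℕ → E := fun m => pp (VvV e y m k) pk with hF
  have htel : ∑ m ∈ Finset.Ico M k, (F (m + 1) - F m) = F k - F M := sum_Ico_sub' F hMk
  have htop : F k = pk := sigma_fix he0 hy hyA hf hS h2k
  have hdecomp : pk = F M + ∑ m ∈ Finset.Ico M k, (F (m + 1) - F m) := by
    rw [htel, htop]; abel
  have hpart1 : F M ≤ ((M : ℝ) ^ 3) • y n₀ := by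
    have h1 : F M ≤ pp (VvV e y M k) e := pp_mono_x (pp_le_self _ _)
    have h2 : pp (VvV e y M k) e ≤ ((M : ℝ) ^ 3) • y k :=
      cut_e_le he0 hy (le_trans one_le_two hM)
    have h3 : ((M : ℝ) ^ 3) • y k ≤ ((M : ℝ) ^ 3) • y n₀ :=
      smul_le_smul_of_nonneg_left (hyA hn₀k) (by positivity)
    exact h1.trans (h2.trans h3)
  have hpart2 : ∑ m ∈ Finset.Ico M k, (F (m + 1) - F m)
      ≤ ∑ m ∈ Finset.Ico M k, ((m : ℝ) + 1) • (f k - pp (VvV e y m j) (f k)) := by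
    refine Finset.sum_le_sum (fun m hm => ?_)
    rcases Finset.mem_Ico.mp hm with ⟨hMm, _⟩
    exact layer_bound he0 hy hyA hf hS (le_trans one_le_two (hM.trans hMm)) hkj
  calc pk = F M + ∑ m ∈ Finset.Ico M k, (F (m + 1) - F m) := hdecomp
  _ ≤ _ := add_le_add hpart1 hpart2

lemma qbound (he0 : 0 ≤ e) (hy : ∀ n, 0 ≤ y n) (hyA : Antitone y)
    (hf : ∀ n, 0 ≤ f n) (hS : ∀ j, (∑ i ∈ Finset.range j, f i) ≤ (j : ℝ) • y j)
    {M n₀ j : ℕ} (hM : 2 ≤ M) (hMn : M ≤ n₀) (h2n : 2 ≤ n₀) (hnj : n₀ ≤ j) :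
    (j : ℝ)⁻¹ • (∑ k ∈ Finset.range j, PPV e y f k e)
      ≤ ((n₀ : ℝ) * (j : ℝ)⁻¹) • e + ((M : ℝ) ^ 3) • y n₀ + (2 / ((M : ℝ) - 1)) • e := by
  have hj2 : 2 ≤ j := h2n.trans hnj
  have hj0 : (0:ℝ) < (j:ℝ) := by exact_mod_cast (by omega : 0 < j)
  have hearly : ∑ k ∈ Finset.range n₀, PPV e y f k e ≤ (n₀ : ℝ) • e := by
    calc ∑ k ∈ Finset.range n₀, PPV e y f k e ≤ ∑ _k ∈ Finset.range n₀, e :=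
      Finset.sum_le_sum (fun k _ => PPV_e_le he0 k)
    _ = n₀ • e := by rw [Finset.sum_const, Finset.card_range]
    _ = (n₀ : ℝ) • e := (Nat.cast_smul_eq_nsmul ℝ n₀ e).symm
  have hlate : ∑ k ∈ Finset.Ico n₀ j, PPV e y f k e
      ≤ (j : ℝ) • (((M : ℝ) ^ 3) • y n₀) + ((j:ℝ) * (2 / ((M : ℝ) - 1))) • e := by
    have hterm : ∀ k ∈ Finset.Ico n₀ j, PPV e y f k e
        ≤ ((M : ℝ) ^ 3) • y n₀
          + ∑ m ∈ Finset.Ico M j, ((m : ℝ) + 1) • (f k - pp (VvV e y m j) (f k)) := by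
      intro k hk
      rcases Finset.mem_Ico.mp hk with ⟨hnk, hkj⟩
      have h2k : 2 ≤ k := h2n.trans hnk
      rw [PPV_e_val he0 h2k]
      refine (perk_bound he0 hy hyA hf hS hM (hMn.trans hnk) h2k hkj.le hnk).trans ?_
      refine add_le_add_right (Finset.sum_le_sum_of_subset_of_nonneg
        (Finset.Ico_subset_Ico le_rfl hkj.le) (fun m _ _ => ?_)) _
      exact smul_nonneg (by positivity) (compl_nonneg (hf k))
    refine (Finset.sum_le_sum hterm).trans ?_
    rw [Finset.sum_add_distrib]
    refine add_le_add ?_ ?_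
    · rw [Finset.sum_const]
      have h1 : (Finset.Ico n₀ j).card • (((M : ℝ) ^ 3) • y n₀)
          = (((j - n₀ : ℕ) : ℝ)) • (((M : ℝ) ^ 3) • y n₀) := by
        rw [Nat.card_Ico, Nat.cast_smul_eq_nsmul]
      rw [h1]
      refine smul_le_smul_right' ?_ (smul_nonneg (by positivity) (hy n₀))
      exact_mod_cast Nat.sub_le j n₀
    · rw [Finset.sum_comm]
      have hin : ∀ m ∈ Finset.Ico M j,
          ∑ k ∈ Finset.Ico n₀ j, ((m : ℝ) + 1) • (f k - pp (VvV e y m j) (f k))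
            ≤ (((m:ℝ)+1) * ((j:ℝ) * ((m : ℝ)^3)⁻¹)) • e := by
        intro m hm
        rcases Finset.mem_Ico.mp hm with ⟨hMm, _⟩
        have hm1 : 1 ≤ m := le_trans one_le_two (hM.trans hMm)
        set V : E := VvV e y m j with hV
        have hV0 : 0 ≤ V := VvV_nonneg m j
        set W : E := ∑ k ∈ Finset.Ico n₀ j, f k with hW
        have hW0 : 0 ≤ W := Finset.sum_nonneg (fun k _ => hf k)
        have hsum2 : ∑ k ∈ Finset.Ico n₀ j, (f k - pp V (f k)) = W - pp V W := by
          rw [Finset.sum_sub_distrib]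
          congr 1
          calc ∑ k ∈ Finset.Ico n₀ j, pp V (f k)
              = ∑ k ∈ Finset.Ico n₀ j, bandProj V (f k) :=
                Finset.sum_congr rfl (fun k _ => (bandProj_apply_nonneg hV0 (hf k)).symm)
          _ = bandProj V W := (map_sum (bandProj V) f _).symm
          _ = pp V W := bandProj_apply_nonneg hV0 hW0
        have hWS : W ≤ ∑ k ∈ Finset.range j, f k := by
          refine Finset.sum_le_sum_of_subset_of_nonneg ?_ (fun k _ _ => hf k)
          intro k hk
          rcases Finset.mem_Ico.mp hk with ⟨_, h⟩
          exact Finset.mem_range.mpr h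
        have hSrange0 : 0 ≤ ∑ k ∈ Finset.range j, f k := Finset.sum_nonneg (fun k _ => hf k)
        have hcm : W - pp V W ≤ (j:ℝ) • (y j - pp V (y j)) := by
          have c1 : W - pp V W
              ≤ (∑ k ∈ Finset.range j, f k) - pp V (∑ k ∈ Finset.range j, f k) :=
            compl_mono hV0 hW0 hWS
          have c2 : (∑ k ∈ Finset.range j, f k) - pp V (∑ k ∈ Finset.range j, f k)
              ≤ ((j:ℝ) • y j) - pp V ((j:ℝ) • y j) :=
            compl_mono hV0 hSrange0 (hS j)
          have c3 : ((j:ℝ) • y j) - pp V ((j:ℝ) • y j) = (j:ℝ) • (y j - pp V (y j)) := by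
            rw [pp_smul hV0 (hy j) hj0.le, smul_sub]
          exact c1.trans (c2.trans_eq c3)
        have hcy : y j - pp V (y j) ≤ ((m : ℝ)^3)⁻¹ • e := cut_compl_y' he0 hy hm1
        have hfinal : W - pp V W ≤ ((j:ℝ) * ((m : ℝ)^3)⁻¹) • e := by
          refine hcm.trans ?_
          rw [mul_smul]
          exact smul_le_smul_of_nonneg_left hcy hj0.le
        calc ∑ k ∈ Finset.Ico n₀ j, ((m : ℝ) + 1) • (f k - pp V (f k))
            = ((m:ℝ)+1) • ∑ k ∈ Finset.Ico n₀ j, (f k - pp V (f k)) :=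
              (Finset.smul_sum).symm
        _ = ((m:ℝ)+1) • (W - pp V W) := by rw [hsum2]
        _ ≤ ((m:ℝ)+1) • (((j:ℝ) * ((m : ℝ)^3)⁻¹) • e) :=
              smul_le_smul_of_nonneg_left hfinal (by positivity)
        _ = (((m:ℝ)+1) * ((j:ℝ) * ((m : ℝ)^3)⁻¹)) • e := (mul_smul _ _ e).symm
      refine (Finset.sum_le_sum hin).trans ?_
      rw [← Finset.sum_smul]
      refine smul_le_smul_right' ?_ he0
      have hrw : ∑ m ∈ Finset.Ico M j, ((m:ℝ)+1) * ((j:ℝ) * ((m : ℝ)^3)⁻¹)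
          = (j:ℝ) * ∑ m ∈ Finset.Ico M j, (((m:ℝ)+1) * ((m : ℝ)^3)⁻¹) := by
        rw [Finset.mul_sum]
        exact Finset.sum_congr rfl (fun m _ => by ring)
      rw [hrw]
      exact mul_le_mul_of_nonneg_left (scalar_sum_bound hM) hj0.le
  have htotal : ∑ k ∈ Finset.range j, PPV e y f k e
      ≤ (n₀:ℝ) • e + ((j:ℝ) • (((M : ℝ) ^ 3) • y n₀) + ((j:ℝ) * (2 / ((M : ℝ) - 1))) • e) := by
    rw [← Finset.sum_range_add_sum_Ico _ hnj]
    exact add_le_add hearly hlate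
  have hsmul := smul_le_smul_of_nonneg_left htotal (inv_nonneg.mpr hj0.le)
  refine hsmul.trans (le_of_eq ?_)
  have e2 : (j:ℝ)⁻¹ * (j:ℝ) = 1 := inv_mul_cancel₀ hj0.ne'
  have e3 : (j:ℝ)⁻¹ * ((j:ℝ) * (2 / ((M : ℝ) - 1))) = 2 / ((M : ℝ) - 1) := by
    field_simp
  have e1 : (j:ℝ)⁻¹ * (n₀:ℝ) = (n₀:ℝ) * (j:ℝ)⁻¹ := by ring
  simp only [smul_add, smul_smul]
  have e4 : (j:ℝ)⁻¹ * ((j:ℝ) * (M:ℝ)^3) = (M:ℝ)^3 := by field_simp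
  rw [e1, e3, e4]
  abel

end Density

lemma tsV_eq {e : E} {y : ℕ → E} (M k : ℕ) :
    tsV e y M k = ((M:ℝ))⁻¹ • e + ((M:ℝ)^3) • y k := rfl

end KVN

open KVN in
/-- Necessity part of the Koopman-von Neumann theorem in Riesz spaces. -/
theorem stmt4 {E : Type*} [ConditionallyCompleteLattice E] [AddCommGroup E]
    [CovariantClass E E (· + ·) (· ≤ ·)] [Module ℝ E] [PosSMulMono ℝ E]
    (e : E) (he : IsWeakOrderUnit e) (f : ℕ → E) (g : E)
    (hf : ∀ n, 0 ≤ f n) (hbd : ∀ n, f n ≤ g)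
    (hconv : OrderConvergesTo (fun n => (n : ℝ)⁻¹ • ∑ k ∈ Finset.range n, f k) 0) :
    ∃ P : ℕ → Module.End ℝ E, (∀ n, IsBandProjection (P n)) ∧
      OrderConvergesTo (fun n => (n : ℝ)⁻¹ • ∑ k ∈ Finset.range n, P k e) 0 ∧
      OrderConvergesTo (fun n => (1 - P n) (f n)) 0 := by
  obtain ⟨y, hyA, hyG, hydom⟩ := hconv
  have he0 : (0 : E) ≤ e := he.1.le
  have hy : ∀ n, 0 ≤ y n := fun n => hyG.1 ⟨n, rfl⟩
  have hg0 : (0 : E) ≤ g := (hf 0).trans (hbd 0)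
  have hS : ∀ j : ℕ, (∑ i ∈ Finset.range j, f i) ≤ (j : ℝ) • y j := by
    intro j
    rcases Nat.eq_zero_or_pos j with rfl | hj
    · simp
    have hj0 : (0:ℝ) < (j:ℝ) := by exact_mod_cast hj
    have h1 := hydom j
    rw [sub_zero] at h1
    have h2 : (j:ℝ)⁻¹ • (∑ i ∈ Finset.range j, f i) ≤ y j :=
      (le_abs_self _).trans h1
    have h3 := smul_le_smul_of_nonneg_left h2 hj0.le
    rwa [smul_smul, mul_inv_cancel₀ hj0.ne', one_smul] at h3
  refine ⟨PPV e y f, ?_, ?_, ?_⟩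
  · -- band projections
    intro n
    by_cases h2 : 2 ≤ n
    · have hu0 : (0:E) ≤ uvV e y f n := posPart_nonneg _
      constructor
      · rw [PPV, if_pos h2]
        refine LinearMap.ext (fun x => ?_)
        rw [Module.End.mul_apply]
        exact bandProj_idem hu0 x
      · intro v hv
        rw [PPV, if_pos h2, bandProj_apply_nonneg hu0 hv]
        exact ⟨pp_nonneg hv, pp_le_self _ _⟩
    · rw [PPV, if_neg h2]
      exact ⟨by rw [mul_zero], fun v hv => by simpa using hv⟩
  · -- density zero
    set q : ℕ → E := fun n => (n : ℝ)⁻¹ • ∑ k ∈ Finset.range n, PPV e y f k e with hqdef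
    have hq0 : ∀ n, 0 ≤ q n := fun n =>
      smul_nonneg (by positivity) (PPV_sum_nonneg he0 n)
    have hqe : ∀ n, q n ≤ e := by
      intro n
      rcases Nat.eq_zero_or_pos n with rfl | hn
      · simp [hqdef, he0]
      have hn0 : (0:ℝ) < (n:ℝ) := by exact_mod_cast hn
      have h1 : (∑ k ∈ Finset.range n, PPV e y f k e) ≤ (n:ℝ) • e := PPV_sum_le he0 n
      have h2 : q n ≤ (n:ℝ)⁻¹ • ((n:ℝ) • e) :=
        smul_le_smul_of_nonneg_left h1 (inv_nonneg.mpr hn0.le)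
      rwa [smul_smul, inv_mul_cancel₀ hn0.ne', one_smul] at h2
    have hbddq : ∀ n, BddAbove (q '' Set.Ici n) :=
      fun n => ⟨e, by rintro _ ⟨j, _, rfl⟩; exact hqe j⟩
    have hneq : ∀ n : ℕ, (q '' Set.Ici n).Nonempty :=
      fun n => ⟨q n, n, Set.mem_Ici.mpr le_rfl, rfl⟩
    set w : ℕ → E := fun n => sSup (q '' Set.Ici n) with hwdef
    have hqw : ∀ n, q n ≤ w n :=
      fun n => le_csSup (hbddq n) ⟨n, Set.mem_Ici.mpr le_rfl, rfl⟩
    have hw0 : ∀ n, 0 ≤ w n := fun n => (hq0 n).trans (hqw n)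
    refine ⟨w, ?_, ?_, ?_⟩
    · intro a b hab
      exact csSup_le_csSup (hbddq a) (hneq b) (Set.image_mono (Set.Ici_subset_Ici.mpr hab))
    · constructor
      · rintro _ ⟨n, rfl⟩; exact hw0 n
      · intro ℓ hℓ
        have hℓw : ∀ n, ℓ ≤ w n := fun n => hℓ ⟨n, rfl⟩
        have stepC : ∀ M : ℕ, 2 ≤ M → ℓ ≤ (2 / ((M:ℝ) - 1)) • e := by
          intro M hM
          have stepB : ∀ n₀ : ℕ, M ≤ n₀ →
              ℓ - (2 / ((M:ℝ) - 1)) • e ≤ ((M:ℝ) ^ 3) • y n₀ := by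
            intro n₀ hMn
            have h2n : 2 ≤ n₀ := hM.trans hMn
            have hn₀pos : 0 < n₀ := by omega
            have hn₀0 : (0:ℝ) < (n₀:ℝ) := by exact_mod_cast hn₀pos
            have hz : ∀ N : ℕ, 1 ≤ N →
                ℓ - (((M:ℝ)^3) • y n₀ + (2 / ((M:ℝ)-1)) • e) ≤ ((N:ℝ))⁻¹ • e := by
              intro N hN
              have hN0 : 0 < N := hN
              have hNR : (0:ℝ) < (N:ℝ) := by exact_mod_cast hN0
              set n : ℕ := n₀ * N with hn
              have hn₀n : n₀ ≤ n := Nat.le_mul_of_pos_right n₀ hN0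
              have hnpos : 0 < n := by positivity
              have hnn : (0:ℝ) < (n:ℝ) := by exact_mod_cast hnpos
              have hwb : w n ≤ ((n₀:ℝ) * (n:ℝ)⁻¹) • e + ((M:ℝ)^3) • y n₀
                  + (2/((M:ℝ)-1)) • e := by
                refine csSup_le (hneq n) ?_
                rintro _ ⟨j, hj, rfl⟩
                have hjn : n ≤ j := hj
                have hq1 : q j ≤ ((n₀:ℝ) * (j:ℝ)⁻¹) • e + ((M:ℝ)^3) • y n₀
                    + (2/((M:ℝ)-1)) • e :=
                  qbound he0 hy hyA hf hS hM hMn h2n (hn₀n.trans hjn)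
                refine hq1.trans (add_le_add_left (add_le_add_left ?_ _) _)
                refine smul_le_smul_right' ?_ he0
                have hjr : (n:ℝ) ≤ (j:ℝ) := by exact_mod_cast hjn
                have hinv : (j:ℝ)⁻¹ ≤ (n:ℝ)⁻¹ := inv_anti₀ hnn hjr
                exact mul_le_mul_of_nonneg_left hinv (by positivity)
              have hℓn : ℓ ≤ ((n₀:ℝ) * (n:ℝ)⁻¹) • e
                  + (((M:ℝ)^3) • y n₀ + (2/((M:ℝ)-1)) • e) :=
                (hℓw n).trans (hwb.trans (le_of_eq (by abel)))
              have hcst : (n₀:ℝ) * ((n:ℕ):ℝ)⁻¹ = (N:ℝ)⁻¹ := by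
                rw [hn]
                push_cast
                rw [mul_inv, ← mul_assoc, mul_inv_cancel₀ hn₀0.ne', one_mul]
              rw [hcst] at hℓn
              exact sub_le_iff_le_add.mpr (hℓn.trans (le_of_eq (by abel)))
            have hz0 : ℓ - (((M:ℝ)^3) • y n₀ + (2 / ((M:ℝ)-1)) • e) ≤ 0 := arch he0 hz
            calc ℓ - (2 / ((M:ℝ)-1)) • e
                = (ℓ - (((M:ℝ)^3) • y n₀ + (2 / ((M:ℝ)-1)) • e)) + ((M:ℝ)^3) • y n₀ := by
                  abel
            _ ≤ 0 + ((M:ℝ)^3) • y n₀ := add_le_add_left hz0 _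
            _ = ((M:ℝ)^3) • y n₀ := zero_add _
          have hanti : Antitone (fun n => ((M:ℝ) ^ 3) • y n) :=
            fun a b hab => smul_le_smul_of_nonneg_left (hyA hab) (by positivity)
          have hglb : IsGLB (Set.range fun n => ((M:ℝ) ^ 3) • y n) 0 :=
            glb_smul hyG (by positivity)
          have h1 : ℓ - (2 / ((M:ℝ) - 1)) • e ≤ 0 :=
            le_zero_of_le_tail hanti hglb (K := M) (fun n hn => stepB n hn)
          have h2 := add_le_add_left h1 ((2 / ((M:ℝ) - 1)) • e)
          rwa [sub_add_cancel, zero_add] at h2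
        refine arch he0 (fun N hN => ?_)
        have hM : 2 ≤ 2 * N + 1 := by omega
        have h1 := stepC (2 * N + 1) hM
        have hNR : (0:ℝ) < (N:ℝ) := by exact_mod_cast hN
        have h2 : 2 / (((2 * N + 1 : ℕ):ℝ) - 1) = ((N:ℝ))⁻¹ := by
          push_cast
          field_simp
          ring
        rwa [h2] at h1
    · intro n
      rw [sub_zero, abs_of_nonneg (hq0 n)]
      exact hqw n
  · -- (1 - P n) f n → 0
    have hx : ∀ n, (1 - PPV e y f n) (f n) = f n - PPV e y f n (f n) := by
      intro n; rw [LinearMap.sub_apply, Module.End.one_apply]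
    have hx0 : ∀ n, 0 ≤ (1 - PPV e y f n) (f n) := by
      intro n; rw [hx]
      by_cases h2 : 2 ≤ n
      · have hu0 : (0:E) ≤ uvV e y f n := posPart_nonneg _
        rw [PPV, if_pos h2, bandProj_apply_nonneg hu0 (hf n)]
        exact compl_nonneg (hf n)
      · rw [PPV, if_neg h2]
        simpa using hf n
    have hxle : ∀ n, 2 ≤ n → (1 - PPV e y f n) (f n) ≤ y n + tvV e y n := by
      intro n h2
      have hu0 : (0:E) ≤ uvV e y f n := posPart_nonneg _
      rw [hx, PPV, if_pos h2, bandProj_apply_nonneg hu0 (hf n)]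
      have hc0 : 0 ≤ y n + tvV e y n := add_nonneg (hy n) (tvV_nonneg he0 hy n)
      have hkey : pp (uvV e y f n) (f n) - pp (uvV e y f n) (y n + tvV e y n)
          = uvV e y f n := by
        have h1 : bandProj (uvV e y f n) (f n - (y n + tvV e y n)) = uvV e y f n :=
          bandProj_posPart_self (f n - (y n + tvV e y n))
        have h2' : bandProj (uvV e y f n) (f n - (y n + tvV e y n))
            = pp (uvV e y f n) (f n) - pp (uvV e y f n) (y n + tvV e y n) :=
          bandProj_decomp hu0 (hf n) hc0
        rw [h2'] at h1; exact h1
      have hfc : f n - (y n + tvV e y n) ≤ uvV e y f n :=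
        le_posPart (f n - (y n + tvV e y n))
      calc f n - pp (uvV e y f n) (f n)
          = (f n - (y n + tvV e y n))
            - (pp (uvV e y f n) (f n) - pp (uvV e y f n) (y n + tvV e y n))
            + ((y n + tvV e y n) - pp (uvV e y f n) (y n + tvV e y n)) := by abel
      _ = (f n - (y n + tvV e y n)) - uvV e y f n
            + ((y n + tvV e y n) - pp (uvV e y f n) (y n + tvV e y n)) := by rw [hkey]
      _ ≤ 0 + ((y n + tvV e y n) - pp (uvV e y f n) (y n + tvV e y n)) :=
            add_le_add_left (sub_nonpos.mpr hfc) _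
      _ = (y n + tvV e y n) - pp (uvV e y f n) (y n + tvV e y n) := zero_add _
      _ ≤ y n + tvV e y n := sub_le_self _ (pp_nonneg hc0)
    refine ⟨fun n => y n + tvV e y n + (if n < 2 then g else 0), ?_, ?_, ?_⟩
    · intro a b hab
      refine add_le_add (add_le_add (hyA hab) (tvV_anti hyA hab)) ?_
      by_cases ha : a < 2
      · by_cases hb : b < 2
        · rw [if_pos ha, if_pos hb]
        · rw [if_pos ha, if_neg hb]; exact hg0
      · have hb : ¬ b < 2 := by omega
        rw [if_neg ha, if_neg hb]
    · constructor
      · rintro _ ⟨n, rfl⟩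
        have hif : (0:E) ≤ (if n < 2 then g else 0) := by
          split
          · exact hg0
          · exact le_rfl
        exact add_nonneg (add_nonneg (hy n) (tvV_nonneg he0 hy n)) hif
      · intro ℓ hℓ
        have hℓz : ∀ n, ℓ ≤ y n + tvV e y n + (if n < 2 then g else 0) :=
          fun n => hℓ ⟨n, rfl⟩
        refine arch he0 (fun M hM => ?_)
        have htail : ∀ k, max M 2 ≤ k →
            ℓ - ((M:ℝ))⁻¹ • e ≤ ((1:ℝ) + (M:ℝ)^3) • y k := by
          intro k hk
          have hMk : M ≤ k := le_trans (le_max_left _ _) hk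
          have h2k : 2 ≤ k := le_trans (le_max_right _ _) hk
          have h1 : ℓ ≤ y k + tvV e y k := by
            have h0 := hℓz k
            rwa [if_neg (by omega : ¬ k < 2), add_zero] at h0
          have h2 : tvV e y k ≤ ((M:ℝ))⁻¹ • e + ((M:ℝ)^3) • y k := by
            have h2' := tvV_le_tsV (e := e) (y := y) hM hMk
            rwa [tsV_eq] at h2'
          have h3 : ℓ ≤ ((M:ℝ))⁻¹ • e + (((1:ℝ) + (M:ℝ)^3) • y k) := by
            refine h1.trans ?_
            have h4 := add_le_add_right h2 (y k)
            refine h4.trans (le_of_eq ?_)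
            rw [add_smul, one_smul]
            abel
          exact sub_le_iff_le_add'.mpr h3
        have hanti : Antitone (fun n => ((1:ℝ) + (M:ℝ)^3) • y n) :=
          fun a b hab => smul_le_smul_of_nonneg_left (hyA hab) (by positivity)
        have hglb := glb_smul hyG (show (0:ℝ) < 1 + (M:ℝ)^3 by positivity)
        have h4 : ℓ - ((M:ℝ))⁻¹ • e ≤ 0 := le_zero_of_le_tail hanti hglb htail
        have h5 := add_le_add_left h4 (((M:ℝ))⁻¹ • e)
        rwa [sub_add_cancel, zero_add] at h5
    · intro n
      rw [sub_zero, abs_of_nonneg (hx0 n)]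
      by_cases h2 : 2 ≤ n
      · refine (hxle n h2).trans ?_
        refine le_add_of_nonneg_right ?_
        split
        · exact hg0
        · exact le_rfl
      · rw [hx, PPV, if_neg h2]
        simp only [LinearMap.zero_apply, sub_zero]
        rw [if_pos (by omega : n < 2)]
        calc f n ≤ g := hbd n
        _ ≤ y n + tvV e y n + g :=
          le_add_of_nonneg_left (add_nonneg (hy n) (tvV_nonneg he0 hy n))
end

section
/- (Classical Koopman–von Neumann) Let (a_n)_{n≥0} be a bounded sequence of non-negative real numbers. Then (1/n) ∑_{k=0}^{n-1} a_k → 0 as n → ∞ if and only if there exists a set N ⊆ ℕ of density zero such that a_n → 0 as n → ∞ along n ∉ N. -/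
open Filter Finset

/-- A set `N ⊆ ℕ` has density zero. -/
def HasDensityZero (N : Set ℕ) : Prop :=
  Tendsto (fun n => (∑ k ∈ Finset.range n, Set.indicator N (fun _ => (1 : ℝ)) k) / n)
    atTop (nhds 0)

lemma ind_sum_eq (N : Set ℕ) [DecidablePred (· ∈ N)] (n : ℕ) :
    (∑ k ∈ Finset.range n, Set.indicator N (fun _ => (1 : ℝ)) k)
      = (((Finset.range n).filter (fun k => k ∈ N)).card : ℝ) := by
  simp [Set.indicator_apply, Finset.sum_ite, Finset.sum_boole]

/-- Classical Koopman-von Neumann lemma: for a bounded nonnegative real sequence,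
the Cesàro means tend to `0` iff the sequence tends to `0` off a density zero set. -/
theorem stmt6 (a : ℕ → ℝ) (hnn : ∀ n, 0 ≤ a n) (hbd : ∃ B : ℝ, ∀ n, a n ≤ B) :
    Tendsto (fun n => (∑ k ∈ Finset.range n, a k) / n) atTop (nhds 0) ↔
      ∃ N : Set ℕ, HasDensityZero N ∧
        ∀ ε > (0 : ℝ), ∃ N₀ : ℕ, ∀ n ≥ N₀, n ∉ N → a n < ε := by
  classical
  obtain ⟨B, hB⟩ := hbd
  set C : ℝ := max B 1 with hCdef
  have hC1 : (1:ℝ) ≤ C := le_max_right _ _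
  have hC0 : (0:ℝ) < C := lt_of_lt_of_le one_pos hC1
  have haC : ∀ n, a n ≤ C := fun n => (hB n).trans (le_max_left _ _)
  constructor
  · -- forward direction
    intro h
    set cnt : ℕ → ℕ → ℕ :=
      fun m n => ((Finset.range n).filter (fun k => 1/((m:ℝ)+1) ≤ a k)).card with hcntdef
    have markov : ∀ m, Tendsto (fun n => (cnt m n : ℝ)/n) atTop (nhds 0) := by
      intro m
      have key : ∀ n, (cnt m n : ℝ)/n ≤ ((m:ℝ)+1) * ((∑ k ∈ Finset.range n, a k)/n) := by
        intro n
        rcases Nat.eq_zero_or_pos n with rfl | hn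
        · simp [hcntdef]
        have hn0 : (0:ℝ) < n := by exact_mod_cast hn
        rw [div_le_iff₀ hn0]
        have h1 : (cnt m n : ℝ) * (1/((m:ℝ)+1)) ≤ ∑ k ∈ Finset.range n, a k := by
          have : (cnt m n : ℝ) * (1/((m:ℝ)+1))
              = ∑ _k ∈ (Finset.range n).filter (fun k => 1/((m:ℝ)+1) ≤ a k), (1/((m:ℝ)+1)) := by
            rw [Finset.sum_const, nsmul_eq_mul]
          rw [this]
          calc ∑ k ∈ (Finset.range n).filter (fun k => 1/((m:ℝ)+1) ≤ a k), (1/((m:ℝ)+1))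
              ≤ ∑ k ∈ (Finset.range n).filter (fun k => 1/((m:ℝ)+1) ≤ a k), a k := by
                apply Finset.sum_le_sum
                intro k hk
                exact (Finset.mem_filter.mp hk).2
            _ ≤ ∑ k ∈ Finset.range n, a k := by
                apply Finset.sum_le_sum_of_subset_of_nonneg (Finset.filter_subset _ _)
                intro k _ _; exact hnn k
        have hm1 : (0:ℝ) < (m:ℝ)+1 := by positivity
        calc (cnt m n : ℝ) = ((cnt m n : ℝ) * (1/((m:ℝ)+1))) * ((m:ℝ)+1) := by
              field_simp
          _ ≤ (∑ k ∈ Finset.range n, a k) * ((m:ℝ)+1) := by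
              apply mul_le_mul_of_nonneg_right h1 hm1.le
          _ = ((m:ℝ)+1) * ((∑ k ∈ Finset.range n, a k)/n) * n := by
              field_simp
      have lower : ∀ n, (0:ℝ) ≤ (cnt m n : ℝ)/n := by
        intro n; positivity
      have hmul : Tendsto (fun n => ((m:ℝ)+1) * ((∑ k ∈ Finset.range n, a k)/n)) atTop (nhds 0) := by
        have := h.const_mul ((m:ℝ)+1)
        simpa using this
      exact tendsto_of_tendsto_of_tendsto_of_le_of_le tendsto_const_nhds hmul lower key
    choose T hT using fun m =>
      Metric.tendsto_atTop.mp (markov m) (1/((m:ℝ)+1)) (by positivity)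
    -- the cutoff sequence
    set nseq : ℕ → ℕ :=
      fun m => Nat.rec (T 0) (fun m ih => max (T (m+1)) (ih + 1)) m with hnseqdef
    have hnseq0 : nseq 0 = T 0 := rfl
    have hnseqS : ∀ m, nseq (m+1) = max (T (m+1)) (nseq m + 1) := fun m => rfl
    have hTle : ∀ m, T m ≤ nseq m := by
      intro m; cases m with
      | zero => exact le_of_eq hnseq0.symm
      | succ m => rw [hnseqS]; exact le_max_left _ _
    have hmono : StrictMono nseq := by
      apply strictMono_nat_of_lt_succ
      intro m; rw [hnseqS]
      exact lt_of_lt_of_le (Nat.lt_succ_self _) (le_max_right _ _)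
    set N : Set ℕ := {n | ∃ m, nseq m ≤ n ∧ 1/((m:ℝ)+1) ≤ a n} with hNdef
    refine ⟨N, ?_, ?_⟩
    · -- density zero
      rw [HasDensityZero]
      rw [Metric.tendsto_atTop]
      intro ε hε
      obtain ⟨m, hm⟩ := exists_nat_one_div_lt hε
      refine ⟨nseq m, fun n hn => ?_⟩
      set m' := Nat.findGreatest (fun j => nseq j ≤ n) n with hm'def
      have hwit : m ≤ n := le_trans (hmono.le_apply) hn
      have hm'le : nseq m' ≤ n :=
        Nat.findGreatest_spec (P := fun j => nseq j ≤ n) hwit hn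
      have hmm' : m ≤ m' := Nat.le_findGreatest hwit hn
      have hmax : ∀ j, nseq j ≤ n → j ≤ m' := by
        intro j hj
        exact Nat.le_findGreatest (le_trans (hmono.le_apply) hj) hj
      have hsub : (Finset.range n).filter (fun k => k ∈ N)
          ⊆ (Finset.range n).filter (fun k => 1/((m':ℝ)+1) ≤ a k) := by
        intro k hk
        rw [Finset.mem_filter] at hk ⊢
        obtain ⟨hkr, j, hj1, hj2⟩ := hk
        refine ⟨hkr, le_trans ?_ hj2⟩
        have hjm' : j ≤ m' := hmax j (le_trans hj1 (Finset.mem_range.mp hkr).le)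
        apply one_div_le_one_div_of_le (by positivity)
        have : (j:ℝ) ≤ m' := by exact_mod_cast hjm'
        linarith
      have hcard : (((Finset.range n).filter (fun k => k ∈ N)).card : ℝ) ≤ (cnt m' n : ℝ) := by
        exact Nat.cast_le.mpr (Finset.card_le_card hsub)
      have hTn : T m' ≤ n := le_trans (hTle m') hm'le
      have hcnt := hT m' n hTn
      rw [Real.dist_eq, sub_zero] at hcnt
      have hcnt' : (cnt m' n : ℝ)/n < 1/((m':ℝ)+1) := lt_of_abs_lt hcnt
      have hind : (∑ k ∈ Finset.range n, Set.indicator N (fun _ => (1 : ℝ)) k) / n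
          ≤ (cnt m' n : ℝ)/n := by
        rw [ind_sum_eq]
        exact div_le_div_of_nonneg_right hcard (Nat.cast_nonneg n)
      have hnonneg : (0:ℝ) ≤ (∑ k ∈ Finset.range n, Set.indicator N (fun _ => (1:ℝ)) k) :=
        Finset.sum_nonneg (fun k _ => Set.indicator_nonneg (fun _ _ => zero_le_one) k)
      rw [Real.dist_eq, sub_zero, abs_of_nonneg (div_nonneg hnonneg (Nat.cast_nonneg n))]
      have hdiv : 1/((m':ℝ)+1) ≤ 1/((m:ℝ)+1) := by
        apply one_div_le_one_div_of_le (by positivity)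
        have : (m:ℝ) ≤ m' := by exact_mod_cast hmm'
        linarith
      calc (∑ k ∈ Finset.range n, Set.indicator N (fun _ => (1:ℝ)) k) / n
          ≤ (cnt m' n : ℝ)/n := hind
        _ < 1/((m':ℝ)+1) := hcnt'
        _ ≤ 1/((m:ℝ)+1) := hdiv
        _ < ε := hm
    · -- convergence off N
      intro ε hε
      obtain ⟨m, hm⟩ := exists_nat_one_div_lt hε
      refine ⟨nseq m, fun n hn hnN => ?_⟩
      by_contra hcon
      push_neg at hcon
      exact hnN ⟨m, hn, le_trans (le_of_lt hm) hcon⟩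
  · -- reverse direction
    rintro ⟨N, hN, hconv⟩
    rw [Metric.tendsto_atTop]
    intro ε hε
    obtain ⟨N₀, hN₀⟩ := hconv (ε/3) (by positivity)
    have hεC : (0:ℝ) < ε/(3*C) := by positivity
    obtain ⟨T₁, hT₁⟩ := Metric.tendsto_atTop.mp hN (ε/(3*C)) hεC
    obtain ⟨T₂, hT₂⟩ := exists_nat_gt (3*(N₀:ℝ)*C/ε)
    refine ⟨max (max T₁ (T₂+1)) (N₀+1), fun n hn => ?_⟩
    have hnT₁ : T₁ ≤ n := le_trans (le_trans (le_max_left _ _) (le_max_left _ _)) hn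
    have hnT₂ : T₂ + 1 ≤ n := le_trans (le_trans (le_max_right _ _) (le_max_left _ _)) hn
    have hnN₀ : N₀ + 1 ≤ n := le_trans (le_max_right _ _) hn
    have hn0 : (0:ℝ) < n := by
      have : 1 ≤ n := le_trans (Nat.le_add_left 1 N₀) hnN₀
      exact_mod_cast this
    have hsplit : ∑ k ∈ Finset.range n, a k
        = ∑ k ∈ Finset.range N₀, a k + ∑ k ∈ Finset.Ico N₀ n, a k := by
      rw [Finset.range_eq_Ico, ← Finset.sum_Ico_consecutive _ (Nat.zero_le N₀) (le_of_lt (Nat.lt_of_succ_le hnN₀)), ← Finset.range_eq_Ico]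
    have h1 : ∑ k ∈ Finset.range N₀, a k ≤ (N₀:ℝ) * C := by
      calc ∑ k ∈ Finset.range N₀, a k ≤ ∑ _k ∈ Finset.range N₀, C :=
            Finset.sum_le_sum (fun k _ => haC k)
        _ = (N₀:ℝ) * C := by rw [Finset.sum_const, Finset.card_range, nsmul_eq_mul]
    have h2 : ∑ k ∈ Finset.Ico N₀ n, a k
        ≤ C * (∑ k ∈ Finset.range n, Set.indicator N (fun _ => (1:ℝ)) k) + (n:ℝ) * (ε/3) := by
      have hstep : ∀ k ∈ Finset.Ico N₀ n,
          a k ≤ C * Set.indicator N (fun _ => (1:ℝ)) k + ε/3 := by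
        intro k hk
        rw [Finset.mem_Ico] at hk
        by_cases hkN : k ∈ N
        · rw [Set.indicator_of_mem hkN]
          have := haC k
          have : a k ≤ C * 1 := by simpa using haC k
          linarith [le_of_lt (show (0:ℝ) < ε/3 by positivity)]
        · rw [Set.indicator_of_notMem hkN, mul_zero, zero_add]
          exact le_of_lt (hN₀ k hk.1 hkN)
      calc ∑ k ∈ Finset.Ico N₀ n, a k
          ≤ ∑ k ∈ Finset.Ico N₀ n, (C * Set.indicator N (fun _ => (1:ℝ)) k + ε/3) :=
            Finset.sum_le_sum hstep
        _ = C * (∑ k ∈ Finset.Ico N₀ n, Set.indicator N (fun _ => (1:ℝ)) k)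
              + ((Finset.Ico N₀ n).card : ℝ) * (ε/3) := by
            rw [Finset.sum_add_distrib, Finset.mul_sum, Finset.sum_const, nsmul_eq_mul]
        _ ≤ C * (∑ k ∈ Finset.range n, Set.indicator N (fun _ => (1:ℝ)) k) + (n:ℝ) * (ε/3) := by
            have hsub : Finset.Ico N₀ n ⊆ Finset.range n := by
              rw [Finset.range_eq_Ico]
              exact Finset.Ico_subset_Ico (Nat.zero_le _) le_rfl
            have hle : ∑ k ∈ Finset.Ico N₀ n, Set.indicator N (fun _ => (1:ℝ)) k
                ≤ ∑ k ∈ Finset.range n, Set.indicator N (fun _ => (1:ℝ)) k := by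
              apply Finset.sum_le_sum_of_subset_of_nonneg hsub
              intro k _ _
              exact Set.indicator_nonneg (fun _ _ => zero_le_one) k
            have hcard : ((Finset.Ico N₀ n).card : ℝ) ≤ (n:ℝ) := by
              rw [Nat.card_Ico]
              exact_mod_cast Nat.sub_le n N₀
            have hε3 : (0:ℝ) ≤ ε/3 := by positivity
            nlinarith
    have hindnn : (0:ℝ) ≤ ∑ k ∈ Finset.range n, Set.indicator N (fun _ => (1:ℝ)) k :=
      Finset.sum_nonneg (fun k _ => Set.indicator_nonneg (fun _ _ => zero_le_one) k)
    have hindb : (∑ k ∈ Finset.range n, Set.indicator N (fun _ => (1:ℝ)) k) / n < ε/(3*C) := by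
      have := hT₁ n hnT₁
      rw [Real.dist_eq, sub_zero] at this
      exact lt_of_abs_lt this
    have hanng : (0:ℝ) ≤ ∑ k ∈ Finset.range n, a k := Finset.sum_nonneg (fun k _ => hnn k)
    rw [Real.dist_eq, sub_zero, abs_of_nonneg (by positivity)]
    have hfrac : (N₀:ℝ) * C / n < ε/3 := by
      rw [div_lt_iff₀ hn0]
      have hTn : (3*(N₀:ℝ)*C/ε) < n := by
        have : ((T₂:ℝ)) < n := by exact_mod_cast Nat.lt_of_succ_le hnT₂
        linarith
      rw [div_lt_iff₀ hε] at hTn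
      nlinarith
    have hC' : C * ((∑ k ∈ Finset.range n, Set.indicator N (fun _ => (1:ℝ)) k)/n) < ε/3 := by
      have := mul_lt_mul_of_pos_left hindb hC0
      have heq : C * (ε/(3*C)) = ε/3 := by field_simp
      linarith [this, heq ▸ this]
    calc (∑ k ∈ Finset.range n, a k) / n
        ≤ ((N₀:ℝ) * C + C * (∑ k ∈ Finset.range n, Set.indicator N (fun _ => (1:ℝ)) k) + (n:ℝ)*(ε/3)) / n := by
          apply div_le_div_of_nonneg_right _ hn0.le
          linarith [hsplit, h1, h2]
      _ = (N₀:ℝ)*C/n + C * ((∑ k ∈ Finset.range n, Set.indicator N (fun _ => (1:ℝ)) k)/n) + ε/3 := by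
          field_simp
      _ < ε/3 + ε/3 + ε/3 := by linarith
      _ = ε := by ring
end

section
/- For p > 2, define g^p_j = n if j = ⌊n^p⌋ for some n ∈ ℕ, and g^p_j = 0 otherwise. Then the sequence (g^p_j) is unbounded, the set N = {⌊n^p⌋ : n ∈ ℕ} has density zero, g^p_j = 0 for j ∉ N, and the Cesàro means (1/n) ∑_{k=0}^{n-1} g^p_k converge to 0 as n → ∞. -/
open Filter Finset

/-- The sequence `g^p`: `g^p j = n` when `j = ⌊n^p⌋`, and `0` otherwise. -/
noncomputable def gp (p : ℝ) (j : ℕ) : ℕ := sSup {n : ℕ | ⌊(n : ℝ) ^ p⌋ = (j : ℤ)}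

lemma aux_step (p : ℝ) (hp : 2 < p) (m : ℕ) : ((m:ℝ))^p + 1 ≤ ((m:ℝ)+1)^p := by
  rcases Nat.eq_zero_or_pos m with h | h
  · subst h
    simp [Real.zero_rpow (by positivity : p ≠ 0), Real.one_rpow]
  · have hm : (1:ℝ) ≤ m := by exact_mod_cast h
    have hm0 : (0:ℝ) < m := by linarith
    have h1 : ((m:ℝ)+1)^p = ((m:ℝ)+1) * ((m:ℝ)+1)^(p-1) := by
      nth_rewrite 1 [show p = 1 + (p-1) by ring]
      rw [Real.rpow_add (by linarith), Real.rpow_one]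
    have h2 : (m:ℝ)^p = (m:ℝ) * (m:ℝ)^(p-1) := by
      nth_rewrite 1 [show p = 1 + (p-1) by ring]
      rw [Real.rpow_add hm0, Real.rpow_one]
    have h3 : (m:ℝ)^(p-1) ≤ ((m:ℝ)+1)^(p-1) :=
      Real.rpow_le_rpow (by positivity) (by linarith) (by linarith)
    have h4 : (1:ℝ) ≤ (m:ℝ)^(p-1) := by
      calc (1:ℝ) = (1:ℝ)^(p-1) := (Real.one_rpow _).symm
        _ ≤ (m:ℝ)^(p-1) := Real.rpow_le_rpow (by norm_num) hm (by linarith)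
    nlinarith

lemma aux_mono (p : ℝ) (hp : 2 < p) : StrictMono (fun m : ℕ => ⌊(m:ℝ)^p⌋) := by
  apply strictMono_nat_of_lt_succ
  intro m
  have h := aux_step p hp m
  have h2 : ((⌊(m:ℝ)^p⌋ : ℝ) + 1) ≤ ((m:ℝ)+1)^p :=
    le_trans (by linarith [Int.floor_le ((m:ℝ)^p)]) h
  have h3 : ⌊(m:ℝ)^p⌋ + 1 ≤ ⌊((m:ℝ)+1)^p⌋ := Int.le_floor.mpr (by push_cast; linarith)
  have h4 : ((m+1:ℕ):ℝ) = (m:ℝ)+1 := by push_cast; ring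
  simp only [h4]
  omega

lemma gp_eq (p : ℝ) (hp : 2 < p) {m j : ℕ} (h : ⌊(m:ℝ)^p⌋ = (j:ℤ)) : gp p j = m := by
  have hs : {n : ℕ | ⌊(n:ℝ)^p⌋ = (j:ℤ)} = {m} := by
    ext n
    simp only [Set.mem_setOf_eq, Set.mem_singleton_iff]
    constructor
    · intro hn; exact (aux_mono p hp).injective (hn.trans h.symm)
    · rintro rfl; exact h
  rw [gp, hs, csSup_singleton]

lemma gp_zero (p : ℝ) {j : ℕ} (h : ¬ ∃ n : ℕ, (j:ℤ) = ⌊(n:ℝ)^p⌋) : gp p j = 0 := by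
  have hs : {n : ℕ | ⌊(n:ℝ)^p⌋ = (j:ℤ)} = ∅ := by
    ext n
    simp only [Set.mem_setOf_eq, Set.mem_empty_iff_false, iff_false]
    exact fun hn => h ⟨n, hn.symm⟩
  rw [gp, hs]
  exact csSup_empty

lemma gp_spec (p : ℝ) (hp : 2 < p) {j : ℕ} (h : gp p j ≠ 0) :
    ⌊((gp p j : ℕ):ℝ)^p⌋ = (j:ℤ) := by
  by_cases hN : ∃ n : ℕ, (j:ℤ) = ⌊(n:ℝ)^p⌋
  · obtain ⟨n, hn⟩ := hN
    rw [gp_eq p hp hn.symm]; exact hn.symm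
  · exact absurd (gp_zero p hN) h

lemma sum_gp_le (p : ℝ) (hp : 2 < p) (n : ℕ) :
    ∑ k ∈ Finset.range n, gp p k ≤ (⌊(n:ℝ)^(1/p)⌋₊ + 1)^2 := by
  classical
  set M := ⌊(n:ℝ)^(1/p)⌋₊ with hM
  set S := (Finset.range n).filter (fun k => gp p k ≠ 0) with hS
  have hinj : Set.InjOn (gp p) S := by
    intro k₁ h₁ k₂ h₂ he
    have e1 := gp_spec p hp (Finset.mem_filter.mp h₁).2
    have e2 := gp_spec p hp (Finset.mem_filter.mp h₂).2
    rw [he] at e1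
    have : (k₁ : ℤ) = (k₂ : ℤ) := e1.symm.trans e2
    exact_mod_cast this
  have hsub : S.image (gp p) ⊆ Finset.range (M+1) := by
    intro m hm
    obtain ⟨k, hk, rfl⟩ := Finset.mem_image.mp hm
    obtain ⟨hkn, hk0⟩ := Finset.mem_filter.mp hk
    have hkn' := Finset.mem_range.mp hkn
    have e := gp_spec p hp hk0
    set m := gp p k
    have hp0 : (0:ℝ) < p := by linarith
    have h1 : ((m:ℕ):ℝ)^p < n := by
      have h5 := Int.lt_floor_add_one (((m:ℕ):ℝ)^p)
      rw [e] at h5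
      push_cast at h5 ⊢
      have hk1 : (k:ℝ) + 1 ≤ (n:ℝ) := by exact_mod_cast hkn'
      linarith
    have h2 : ((m:ℕ):ℝ) ≤ (n:ℝ)^(1/p) := by
      calc ((m:ℕ):ℝ) = (((m:ℕ):ℝ)^p)^(1/p) := by
            rw [← Real.rpow_mul (Nat.cast_nonneg _), mul_one_div_cancel (ne_of_gt hp0),
              Real.rpow_one]
        _ ≤ (n:ℝ)^(1/p) :=
            Real.rpow_le_rpow (by positivity) h1.le (by positivity)
    have : (m:ℕ) ≤ M := Nat.le_floor h2
    exact Finset.mem_range.mpr (by omega)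
  have hgauss : (∑ i ∈ Finset.range (M+1), i) * 2 = (M+1) * M := by
    simpa using Finset.sum_range_id_mul_two (M+1)
  calc ∑ k ∈ Finset.range n, gp p k = ∑ k ∈ S, gp p k :=
        (Finset.sum_filter_ne_zero _).symm
    _ = ∑ m ∈ S.image (gp p), m :=
        (Finset.sum_image (g := gp p) (f := fun x => x) (fun a ha b hb => hinj ha hb)).symm
    _ ≤ ∑ m ∈ Finset.range (M+1), m := Finset.sum_le_sum_of_subset hsub
    _ ≤ (∑ m ∈ Finset.range (M+1), m) * 2 := Nat.le_mul_of_pos_right _ (by norm_num)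
    _ = (M+1) * M := hgauss
    _ ≤ (M+1) * (M+1) := Nat.mul_le_mul_left _ (Nat.le_succ M)
    _ = (M+1)^2 := (sq _).symm

lemma cesaro (p : ℝ) (hp : 2 < p) :
    Tendsto (fun n => (∑ k ∈ Finset.range n, (gp p k : ℝ)) / n) atTop (nhds 0) := by
  have hp0 : (0:ℝ) < p := by linarith
  have hg : Tendsto (fun n : ℕ => 4 * (n:ℝ)^(2/p - 1)) atTop (nhds 0) := by
    have h1 : Tendsto (fun x : ℝ => x ^ (-(1 - 2/p))) atTop (nhds 0) :=
      tendsto_rpow_neg_atTop (by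
        have : 2/p < 1 := (div_lt_one hp0).mpr hp
        linarith)
    have h2 : Tendsto (fun n : ℕ => ((n:ℝ)) ^ (2/p - 1)) atTop (nhds 0) := by
      have := h1.comp (tendsto_natCast_atTop_atTop (R := ℝ))
      simp only [neg_sub] at this
      exact this
    simpa using h2.const_mul 4
  apply squeeze_zero' (g := fun n : ℕ => 4 * (n:ℝ)^(2/p - 1))
  · filter_upwards with n
    apply div_nonneg _ (Nat.cast_nonneg n)
    exact Finset.sum_nonneg fun k _ => Nat.cast_nonneg _
  · filter_upwards [eventually_ge_atTop 1] with n hn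
    have hn0 : (0:ℝ) < n := by exact_mod_cast hn
    have hn1 : (1:ℝ) ≤ n := by exact_mod_cast hn
    have hr1 : (1:ℝ) ≤ (n:ℝ)^(1/p) := by
      calc (1:ℝ) = (1:ℝ)^(1/p) := (Real.one_rpow _).symm
        _ ≤ (n:ℝ)^(1/p) := Real.rpow_le_rpow (by norm_num) hn1 (by positivity)
    have hsum : (∑ k ∈ Finset.range n, (gp p k : ℝ)) ≤ ((⌊(n:ℝ)^(1/p)⌋₊ : ℝ) + 1)^2 := by
      have := sum_gp_le p hp n
      calc (∑ k ∈ Finset.range n, (gp p k : ℝ))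
          = ((∑ k ∈ Finset.range n, gp p k : ℕ) : ℝ) := by push_cast; ring
        _ ≤ (((⌊(n:ℝ)^(1/p)⌋₊ + 1)^2 : ℕ) : ℝ) := by exact_mod_cast this
        _ = ((⌊(n:ℝ)^(1/p)⌋₊ : ℝ) + 1)^2 := by push_cast; ring
    have hfl : ((⌊(n:ℝ)^(1/p)⌋₊ : ℝ)) ≤ (n:ℝ)^(1/p) := Nat.floor_le (by positivity)
    have hb : (∑ k ∈ Finset.range n, (gp p k : ℝ)) ≤ 4 * (n:ℝ)^(2/p) := by
      have h3 : ((⌊(n:ℝ)^(1/p)⌋₊ : ℝ) + 1)^2 ≤ (2 * (n:ℝ)^(1/p))^2 := by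
        have : ((⌊(n:ℝ)^(1/p)⌋₊ : ℝ) + 1) ≤ 2 * (n:ℝ)^(1/p) := by linarith
        exact pow_le_pow_left₀ (by positivity) this 2
      have h4 : (2 * (n:ℝ)^(1/p))^2 = 4 * (n:ℝ)^(2/p) := by
        have : (n:ℝ)^(1/p) * (n:ℝ)^(1/p) = (n:ℝ)^(2/p) := by
          rw [← Real.rpow_add hn0]; congr 1; ring
        nlinarith [this]
      linarith
    rw [div_le_iff₀ hn0]
    calc (∑ k ∈ Finset.range n, (gp p k : ℝ)) ≤ 4 * (n:ℝ)^(2/p) := hb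
      _ = 4 * (n:ℝ)^(2/p - 1) * n := by
          have e := Real.rpow_add hn0 (2/p-1) 1
          rw [Real.rpow_one] at e
          rw [mul_assoc]
          congr 1
          rw [← e]
          congr 1
          ring
  · exact hg

/-- For `p > 2`: `g^p` is unbounded, `N = {⌊n^p⌋}` has density zero, `g^p` vanishes off
`N`, yet the Cesàro means of `g^p` converge to `0`. -/
theorem stmt7 (p : ℝ) (hp : 2 < p) :
    (¬ ∃ B : ℕ, ∀ j, gp p j ≤ B) ∧
    HasDensityZero {j : ℕ | ∃ n : ℕ, (j : ℤ) = ⌊(n : ℝ) ^ p⌋} ∧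
    (∀ j : ℕ, j ∉ {j : ℕ | ∃ n : ℕ, (j : ℤ) = ⌊(n : ℝ) ^ p⌋} → gp p j = 0) ∧
    Tendsto (fun n => (∑ k ∈ Finset.range n, (gp p k : ℝ)) / n) atTop (nhds 0) := by
  have hp0 : (0:ℝ) < p := by linarith
  refine ⟨?_, ?_, ?_, cesaro p hp⟩
  · rintro ⟨B, hB⟩
    have h0 : (0:ℤ) ≤ ⌊((B+1:ℕ):ℝ)^p⌋ := Int.floor_nonneg.mpr (by positivity)
    set j := (⌊((B+1:ℕ):ℝ)^p⌋).toNat with hj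
    have hjj : ⌊((B+1:ℕ):ℝ)^p⌋ = (j:ℤ) := (Int.toNat_of_nonneg h0).symm
    have h1 : gp p j = B + 1 := gp_eq p hp hjj
    have h2 := hB j
    omega
  · -- density zero
    set N : Set ℕ := {j : ℕ | ∃ n : ℕ, (j : ℤ) = ⌊(n : ℝ) ^ p⌋} with hN
    have hpt : ∀ k : ℕ, Set.indicator N (fun _ => (1:ℝ)) k ≤
        (gp p k : ℝ) + (if k = 0 then 1 else 0) := by
      intro k
      by_cases hk : k ∈ N
      · rw [Set.indicator_of_mem hk]
        by_cases hk0 : k = 0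
        · subst hk0; simp
        · have : gp p k ≠ 0 := by
            obtain ⟨m, hm⟩ := hk
            intro hz
            have := gp_eq p hp hm.symm
            rw [this] at hz
            subst hz
            rw [show ((0:ℕ):ℝ) = (0:ℝ) by norm_cast,
              Real.zero_rpow (ne_of_gt hp0)] at hm
            simp at hm
            exact hk0 hm
          have h1 : (1:ℕ) ≤ gp p k := Nat.one_le_iff_ne_zero.mpr this
          have h1' : (1:ℝ) ≤ (gp p k : ℝ) := by exact_mod_cast h1
          have : (0:ℝ) ≤ (if k = 0 then (1:ℝ) else 0) := by positivity
          linarith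
      · rw [Set.indicator_of_notMem hk]
        have : (0:ℝ) ≤ (if k = 0 then (1:ℝ) else 0) := by positivity
        have h2 : (0:ℝ) ≤ (gp p k : ℝ) := Nat.cast_nonneg _
        linarith
    have hsum : ∀ n : ℕ, (∑ k ∈ Finset.range n, Set.indicator N (fun _ => (1:ℝ)) k) ≤
        (∑ k ∈ Finset.range n, (gp p k : ℝ)) + 1 := by
      intro n
      calc (∑ k ∈ Finset.range n, Set.indicator N (fun _ => (1:ℝ)) k)
          ≤ ∑ k ∈ Finset.range n, ((gp p k : ℝ) + (if k = 0 then 1 else 0)) :=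
            Finset.sum_le_sum fun k _ => hpt k
        _ = (∑ k ∈ Finset.range n, (gp p k : ℝ)) +
            (∑ k ∈ Finset.range n, (if k = 0 then (1:ℝ) else 0)) := Finset.sum_add_distrib
        _ ≤ (∑ k ∈ Finset.range n, (gp p k : ℝ)) + 1 := by
            have : (∑ k ∈ Finset.range n, (if k = 0 then (1:ℝ) else 0)) ≤ 1 := by
              rw [Finset.sum_ite_eq' (Finset.range n) 0 (fun _ => (1:ℝ))]
              split_ifs <;> norm_num
            linarith
    rw [HasDensityZero]
    have hlim : Tendsto (fun n : ℕ =>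
        (∑ k ∈ Finset.range n, (gp p k : ℝ)) / n + 1 / n) atTop (nhds 0) := by
      have := (cesaro p hp).add tendsto_one_div_atTop_nhds_zero_nat
      simpa using this
    apply squeeze_zero' (g := fun n : ℕ =>
        (∑ k ∈ Finset.range n, (gp p k : ℝ)) / n + 1 / n)
    · filter_upwards with n
      apply div_nonneg _ (Nat.cast_nonneg n)
      exact Finset.sum_nonneg fun k _ => Set.indicator_nonneg (fun _ _ => by norm_num) k
    · filter_upwards [eventually_ge_atTop 1] with n hn
      have hn0 : (0:ℝ) < n := by exact_mod_cast hn
      rw [← add_div]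
      exact div_le_div_of_nonneg_right (hsum n) hn0.le
    · exact hlim
  · intro j hj
    exact gp_zero p hj
end

section
/- Let (f_n)_{n≥0} be a sequence of non-negative functions in L¹(Ω, 𝒜, μ), μ a finite measure, with f_n ≤ g a.e. for all n for some g ∈ L¹. Then (1/n) ∑_{j=0}^{n-1} f_j → 0 a.e. as n → ∞ if and only if there exists a sequence of measurable sets (A_n) with (1/n) ∑_{j=0}^{n-1} χ_{A_j} → 0 a.e. and χ_{Ω∖A_n} f_n → 0 a.e. as n → ∞. -/
open Filter Finset MeasureTheory

/-- Koopman-von Neumann in `L¹`, a.e. pointwise version: for a dominated nonnegative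
sequence of integrable functions, the Cesàro means converge to `0` a.e. iff there are
measurable sets `A n` whose indicators have a.e. Cesàro limit `0` and with
`χ_{Ω∖Aₙ} fₙ → 0` a.e. -/
theorem stmt10 {Ω : Type*} [MeasurableSpace Ω] (μ : Measure Ω) [IsFiniteMeasure μ]
    (f : ℕ → Ω → ℝ) (g : Ω → ℝ)
    (hfint : ∀ n, Integrable (f n) μ) (hgint : Integrable g μ)
    (hnn : ∀ n, 0 ≤ᵐ[μ] f n) (hdom : ∀ n, f n ≤ᵐ[μ] g) :
    (∀ᵐ ω ∂μ, Tendsto (fun n => (∑ j ∈ Finset.range n, f j ω) / n) atTop (nhds 0)) ↔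
      ∃ A : ℕ → Set Ω, (∀ n, MeasurableSet (A n)) ∧
        (∀ᵐ ω ∂μ, Tendsto
          (fun n => (∑ j ∈ Finset.range n, Set.indicator (A j) (fun _ => (1 : ℝ)) ω) / n)
          atTop (nhds 0)) ∧
        (∀ᵐ ω ∂μ, Tendsto (fun n => Set.indicator (A n)ᶜ (f n) ω) atTop (nhds 0)) := by
  constructor
  · intro h
    -- measurable representatives
    set f' : ℕ → Ω → ℝ := fun j => ((hfint j).1).mk (f j) with hf'def
    have hf'meas : ∀ j, StronglyMeasurable (f' j) :=
      fun j => ((hfint j).1).stronglyMeasurable_mk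
    have hf'ae : ∀ j, f j =ᵐ[μ] f' j := fun j => ((hfint j).1).ae_eq_mk
    set F : ℕ → Ω → ℝ := fun n ω => (∑ j ∈ Finset.range n, f' j ω) / n with hFdef
    have hFmeas : ∀ n, StronglyMeasurable (F n) := by
      intro n
      exact ((Finset.measurable_sum _ fun j _ =>
        (hf'meas j).measurable).div_const _).stronglyMeasurable
    have hFtendsto : ∀ᵐ ω ∂μ, Tendsto (fun n => F n ω) atTop (nhds 0) := by
      filter_upwards [h, ae_all_iff.2 hf'ae] with ω hω hae
      have he : ∀ n, F n ω = (∑ j ∈ Finset.range n, f j ω) / n := by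
        intro n
        simp only [hFdef]
        congr 1
        exact Finset.sum_congr rfl fun j _ => (hae j).symm
      simp only [he]
      exact hω
    -- Egorov's theorem for each k
    have hEg : ∀ k : ℕ, ∃ s : Set Ω, MeasurableSet s ∧ μ s ≤ ENNReal.ofReal ((1/2 : ℝ) ^ k) ∧
        ∃ N : ℕ, ∀ m, N ≤ m → ∀ ω, ω ∉ s → |F m ω| ≤ (1/4 : ℝ) ^ k := by
      intro k
      obtain ⟨t, htm, htμ, htu⟩ := tendstoUniformlyOn_of_ae_tendsto' (g := fun _ => (0:ℝ))
        hFmeas stronglyMeasurable_const hFtendsto (ε := (1/2 : ℝ) ^ k) (by positivity)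
      refine ⟨t, htm, htμ, ?_⟩
      obtain ⟨N, hN⟩ := eventually_atTop.1
        ((Metric.tendstoUniformlyOn_iff.1 htu) ((1/4 : ℝ) ^ k) (by positivity))
      refine ⟨N, fun m hm ω hω => ?_⟩
      have := hN m hm ω hω
      rw [Real.dist_eq, zero_sub, abs_neg] at this
      exact this.le
    choose s smeas sμ N hN using hEg
    -- Borel–Cantelli
    have hsum : (∑' k, μ (s k)) ≠ ⊤ := by
      have h12 : ENNReal.ofReal ((1/2 : ℝ)) = 2⁻¹ := by
        rw [one_div, ENNReal.ofReal_inv_of_pos (by norm_num)]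
        norm_num
      have hle : (∑' k, μ (s k)) ≤ ∑' k : ℕ, (2⁻¹ : ENNReal) ^ k := by
        apply ENNReal.tsum_le_tsum
        intro k
        refine (sμ k).trans_eq ?_
        rw [ENNReal.ofReal_pow (by norm_num), h12]
      apply ne_top_of_le_ne_top _ hle
      rw [ENNReal.tsum_geometric, ENNReal.one_sub_inv_two]
      simp
    have hBC : ∀ᵐ ω ∂μ, ∀ᶠ k in atTop, ω ∉ s k := ae_eventually_notMem hsum
    -- the slowly decreasing scale
    set φ : ℕ → ℕ := fun j => Nat.findGreatest (fun k => N k ≤ j) j with hφdef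
    have φmono : Monotone φ := by
      intro a b hab
      exact Nat.findGreatest_mono (fun k (hk : N k ≤ a) => hk.trans hab) hab
    have φspec : ∀ j, φ j ≠ 0 → N (φ j) ≤ j := by
      intro j hj
      exact ((Nat.findGreatest_eq_iff (P := fun k => N k ≤ j)).1 rfl).2.1 hj
    have φge : ∀ k j, N k ≤ j → k ≤ j → k ≤ φ j := fun k j h1 h2 => Nat.le_findGreatest h2 h1
    have hεtend : Tendsto (fun j => (1/2 : ℝ) ^ (φ j)) atTop (nhds 0) := by
      have h1 : Tendsto φ atTop atTop := by
        refine tendsto_atTop.2 fun k => ?_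
        filter_upwards [eventually_ge_atTop (max (N k) k)] with j hj
        exact φge k j ((le_max_left _ _).trans hj) ((le_max_right _ _).trans hj)
      exact (tendsto_pow_atTop_nhds_zero_of_lt_one (by norm_num) (by norm_num)).comp h1
    -- the sets
    refine ⟨fun j => {ω | (1/2 : ℝ) ^ (φ j) ≤ f' j ω}, fun j =>
      measurableSet_le measurable_const (hf'meas j).measurable, ?_, ?_⟩
    · -- Cesàro means of indicators tend to 0 a.e.
      filter_upwards [hBC, ae_all_iff.2 hf'ae, ae_all_iff.2 hnn] with ω hωK hωeq hωnn
      obtain ⟨K, hK⟩ := eventually_atTop.1 hωK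
      have hf'nn : ∀ j, 0 ≤ f' j ω := fun j => (hωeq j) ▸ (hωnn j)
      apply squeeze_zero' (g := fun n => (1/2 : ℝ) ^ (φ n))
      · refine Eventually.of_forall fun n => div_nonneg (Finset.sum_nonneg fun j _ => ?_)
          (Nat.cast_nonneg n)
        exact Set.indicator_nonneg (fun _ _ => zero_le_one) _
      · filter_upwards [eventually_ge_atTop (max (N (K+1)) (K+1))] with n hn
        have hk1 : K + 1 ≤ φ n :=
          φge (K+1) n ((le_max_left _ _).trans hn) ((le_max_right _ _).trans hn)
        have hNφ : N (φ n) ≤ n := φspec n (by omega)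
        have hs : ω ∉ s (φ n) := hK (φ n) (by omega)
        have hFb : |F n ω| ≤ (1/4 : ℝ) ^ (φ n) := hN (φ n) n hNφ ω hs
        have hn1 : 1 ≤ n := le_trans (by omega : 1 ≤ max (N (K+1)) (K+1)) hn
        have hnpos : (0 : ℝ) < n := by exact_mod_cast hn1
        have hterm : ∀ j ∈ Finset.range n,
            Set.indicator {ω | (1/2 : ℝ) ^ (φ j) ≤ f' j ω} (fun _ => (1:ℝ)) ω
              ≤ (2 : ℝ) ^ (φ n) * f' j ω := by
          intro j hj
          by_cases hmem : ω ∈ {ω | (1/2 : ℝ) ^ (φ j) ≤ f' j ω}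
          · rw [Set.indicator_of_mem hmem]
            have h1 : (1/2 : ℝ) ^ (φ j) ≤ f' j ω := hmem
            have h2 : (2 : ℝ) ^ (φ j) ≤ (2 : ℝ) ^ (φ n) :=
              pow_le_pow_right₀ one_le_two (φmono (Finset.mem_range.1 hj).le)
            calc (1 : ℝ) = (2 : ℝ) ^ (φ j) * (1/2 : ℝ) ^ (φ j) := by
                  rw [← mul_pow]; norm_num
              _ ≤ (2 : ℝ) ^ (φ n) * (1/2 : ℝ) ^ (φ j) :=
                  mul_le_mul_of_nonneg_right h2 (by positivity)
              _ ≤ (2 : ℝ) ^ (φ n) * f' j ω :=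
                  mul_le_mul_of_nonneg_left h1 (by positivity)
          · rw [Set.indicator_of_notMem hmem]
            have := hf'nn j
            positivity
        calc (∑ j ∈ Finset.range n,
              Set.indicator {ω | (1/2 : ℝ) ^ (φ j) ≤ f' j ω} (fun _ => (1:ℝ)) ω) / n
            ≤ (∑ j ∈ Finset.range n, (2 : ℝ) ^ (φ n) * f' j ω) / n := by
              gcongr with j hj
              exact hterm j hj
          _ = (2 : ℝ) ^ (φ n) * F n ω := by
              simp only [hFdef]
              rw [← Finset.mul_sum, mul_div_assoc]
          _ ≤ (2 : ℝ) ^ (φ n) * (1/4 : ℝ) ^ (φ n) :=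
              mul_le_mul_of_nonneg_left ((le_abs_self _).trans hFb) (by positivity)
          _ = (1/2 : ℝ) ^ (φ n) := by
              rw [← mul_pow]; norm_num
      · exact hεtend
    · -- χ_{Aₙᶜ} fₙ → 0 a.e.
      filter_upwards [ae_all_iff.2 hf'ae, ae_all_iff.2 hnn] with ω hωeq hωnn
      apply squeeze_zero_norm ?_ hεtend
      intro n
      by_cases hmem : ω ∈ {ω | (1/2 : ℝ) ^ (φ n) ≤ f' n ω}
      · rw [Set.indicator_of_notMem (Set.notMem_compl_iff.2 hmem)]
        simp only [norm_zero]
        positivity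
      · rw [Set.indicator_of_mem (Set.mem_compl hmem)]
        have h1 : f' n ω < (1/2 : ℝ) ^ (φ n) := not_le.1 hmem
        rw [Real.norm_eq_abs, abs_of_nonneg (hωnn n), hωeq n]
        exact h1.le
  · rintro ⟨A, hAmeas, hA1, hA2⟩
    filter_upwards [hA1, hA2, ae_all_iff.2 hnn, ae_all_iff.2 hdom] with ω h1 h2 hωnn hωdom
    have hωnn' : ∀ j, 0 ≤ f j ω := fun j => hωnn j
    have hωdom' : ∀ j, f j ω ≤ g ω := fun j => hωdom j
    have hg0 : 0 ≤ g ω := le_trans (hωnn' 0) (hωdom' 0)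
    have hces : Tendsto
        (fun n : ℕ => (∑ j ∈ Finset.range n, Set.indicator (A j)ᶜ (f j) ω) / n)
        atTop (nhds 0) := by
      simp only [div_eq_inv_mul]
      exact h2.cesaro
    apply squeeze_zero' (g := fun n : ℕ =>
      g ω * ((∑ j ∈ Finset.range n, Set.indicator (A j) (fun _ => (1 : ℝ)) ω) / n)
        + (∑ j ∈ Finset.range n, Set.indicator (A j)ᶜ (f j) ω) / n)
    · exact Eventually.of_forall fun n =>
        div_nonneg (Finset.sum_nonneg fun j _ => hωnn' j) (Nat.cast_nonneg n)
    · filter_upwards [eventually_ge_atTop 1] with n hn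
      have hnpos : (0 : ℝ) < n := by exact_mod_cast hn
      have hterm : ∀ j ∈ Finset.range n, f j ω ≤
          g ω * Set.indicator (A j) (fun _ => (1 : ℝ)) ω + Set.indicator (A j)ᶜ (f j) ω := by
        intro j _
        by_cases hmem : ω ∈ A j
        · rw [Set.indicator_of_mem hmem, Set.indicator_of_notMem (Set.notMem_compl_iff.2 hmem)]
          simpa using hωdom' j
        · rw [Set.indicator_of_notMem hmem, Set.indicator_of_mem (Set.mem_compl hmem)]
          simp
      calc (∑ j ∈ Finset.range n, f j ω) / n
          ≤ (∑ j ∈ Finset.range n,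
              (g ω * Set.indicator (A j) (fun _ => (1 : ℝ)) ω
                + Set.indicator (A j)ᶜ (f j) ω)) / n := by
            gcongr with j hj
            exact hterm j hj
        _ = g ω * ((∑ j ∈ Finset.range n, Set.indicator (A j) (fun _ => (1 : ℝ)) ω) / n)
              + (∑ j ∈ Finset.range n, Set.indicator (A j)ᶜ (f j) ω) / n := by
            rw [Finset.sum_add_distrib, ← Finset.mul_sum, add_div, mul_div_assoc]
    · have := (h1.const_mul (g ω)).add hces
      simpa using this
end

section
/- Let (f_n)_{n≥0} be a sequence of non-negative functions in L¹(Ω, 𝒜, μ), μ a finite measure, dominated a.e. by some g ∈ L¹. Then (1/n) ∑_{j=0}^{n-1} f_j → 0 in L¹ norm if and only if there exist measurable sets (A_n) with μ-a.e. Cesàro density zero, i.e. (1/n) ∑_{j=0}^{n-1} χ_{A_j} → 0 in L¹ norm, and ‖χ_{Ω∖A_n} f_n‖₁ → 0 as n → ∞. -/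
open Filter Finset MeasureTheory

/-- Cesàro integral identity for a.e.-nonnegative integrable functions. -/
lemma cesaro_integral_eq {Ω : Type*} [MeasurableSpace Ω] (μ : Measure Ω)
    (f : ℕ → Ω → ℝ) (hfint : ∀ n, Integrable (f n) μ) (hnn : ∀ n, 0 ≤ᵐ[μ] f n) (n : ℕ) :
    ∫ ω, |(∑ j ∈ Finset.range n, f j ω) / n| ∂μ
      = (∑ j ∈ Finset.range n, ∫ ω, f j ω ∂μ) / n := by
  have h1 : ∫ ω, |(∑ j ∈ Finset.range n, f j ω) / n| ∂μ
      = ∫ ω, (∑ j ∈ Finset.range n, f j ω) / n ∂μ := by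
    refine integral_congr_ae ?_
    have hae : ∀ᵐ ω ∂μ, ∀ j, 0 ≤ f j ω := ae_all_iff.2 hnn
    filter_upwards [hae] with ω hω
    exact abs_of_nonneg (div_nonneg (Finset.sum_nonneg fun j _ => hω j) (Nat.cast_nonneg n))
  rw [h1, integral_div, integral_finset_sum _ fun j _ => hfint j]

/-- Given a null sequence, there is a slowly growing monotone level function `l` with
`(l n + 1) * |c n| → 0`. -/
lemma exists_slow_level {c : ℕ → ℝ} (hc : Tendsto c atTop (nhds 0)) :
    ∃ l : ℕ → ℕ, Monotone l ∧ Tendsto l atTop atTop ∧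
      Tendsto (fun n => ((l n : ℝ) + 1) * |c n|) atTop (nhds 0) := by
  have key : ∀ k : ℕ, ∃ N : ℕ, ∀ n ≥ N, |c n| ≤ 1 / ((k : ℝ) + 1) ^ 2 := by
    intro k
    have hpos : (0:ℝ) < 1 / ((k:ℝ) + 1) ^ 2 := by positivity
    obtain ⟨N, hN⟩ := Metric.tendsto_atTop.1 hc _ hpos
    exact ⟨N, fun n hn => by
      have := hN n hn
      rw [Real.dist_eq, sub_zero] at this
      exact this.le⟩
  choose m hm using key
  set M : ℕ → ℕ := fun k => (Finset.range (k + 1)).sup m with hMdef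
  have hmM : ∀ k, m k ≤ M k := fun k =>
    Finset.le_sup (Finset.self_mem_range_succ k)
  set l : ℕ → ℕ := fun n => Nat.findGreatest (fun k => M k ≤ n) n with hldef
  have hlmono : Monotone l := fun a b hab =>
    Nat.findGreatest_mono (fun k hk => hk.trans hab) hab
  have hltop : Tendsto l atTop atTop := by
    refine tendsto_atTop_atTop.2 fun K => ⟨max (M K) K, fun n hn => ?_⟩
    exact Nat.le_findGreatest (le_trans (le_max_right _ _) hn)
      (le_trans (le_max_left _ _) hn)
  refine ⟨l, hlmono, hltop, ?_⟩
  rw [Metric.tendsto_atTop]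
  intro ε hε
  obtain ⟨K, hK⟩ := exists_nat_one_div_lt hε
  obtain ⟨N, hN⟩ := tendsto_atTop_atTop.1 hltop (K + 1)
  refine ⟨N, fun n hn => ?_⟩
  have hKl : K + 1 ≤ l n := hN n hn
  have hlpos : 0 < l n := lt_of_lt_of_le (Nat.succ_pos K) hKl
  have hspec : M (l n) ≤ n := by
    have := Nat.findGreatest_of_ne_zero (rfl : Nat.findGreatest (fun k => M k ≤ n) n = l n)
      (Nat.pos_iff_ne_zero.1 hlpos)
    exact this
  have hcn : |c n| ≤ 1 / ((l n : ℝ) + 1) ^ 2 := hm (l n) n (le_trans (hmM (l n)) hspec)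
  have hlr : (0:ℝ) < (l n : ℝ) + 1 := by positivity
  have hbound : ((l n : ℝ) + 1) * |c n| ≤ 1 / ((l n : ℝ) + 1) := by
    have h2 : ((l n : ℝ) + 1) * (1 / ((l n : ℝ) + 1) ^ 2) = 1 / ((l n : ℝ) + 1) := by
      field_simp
    calc ((l n : ℝ) + 1) * |c n| ≤ ((l n : ℝ) + 1) * (1 / ((l n : ℝ) + 1) ^ 2) := by
          exact mul_le_mul_of_nonneg_left hcn hlr.le
      _ = 1 / ((l n : ℝ) + 1) := h2
  have hKle : 1 / ((l n : ℝ) + 1) ≤ 1 / ((K : ℝ) + 1) := by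
    apply one_div_le_one_div_of_le (by positivity)
    have : (K : ℝ) ≤ (l n : ℝ) := by exact_mod_cast (Nat.le_succ K).trans hKl
    linarith
  rw [Real.dist_eq, sub_zero]
  have habs : abs (((l n : ℝ) + 1) * |c n|) = ((l n : ℝ) + 1) * |c n| :=
    abs_of_nonneg (mul_nonneg hlr.le (abs_nonneg _))
  rw [habs]
  exact lt_of_le_of_lt (hbound.trans hKle) hK

/-- `∫ max (g - M) 0 → 0` as `M → ∞` for integrable `g`. -/
lemma tendsto_integral_pos_part {Ω : Type*} [MeasurableSpace Ω] (μ : Measure Ω)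
    [IsFiniteMeasure μ] {g : Ω → ℝ} (hgint : Integrable g μ) :
    Tendsto (fun M : ℕ => ∫ x, max (g x - M) 0 ∂μ) atTop (nhds 0) := by
  have hint : ∀ M : ℕ, Integrable (fun x => max (g x - M) 0) μ :=
    fun M => (hgint.sub (integrable_const _)).pos_part
  have h := tendsto_integral_of_dominated_convergence (F := fun M : ℕ => fun x => max (g x - M) 0)
    (f := fun _ => (0 : ℝ)) (bound := fun x => |g x|)
    (fun M => (hint M).1)
    hgint.abs
    (fun M => Filter.Eventually.of_forall fun x => by
      rw [Real.norm_eq_abs]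
      rw [abs_of_nonneg (le_max_right _ _)]
      refine max_le ?_ (abs_nonneg _)
      have : (0:ℝ) ≤ M := Nat.cast_nonneg M
      calc g x - M ≤ g x := by linarith
        _ ≤ |g x| := le_abs_self _)
    (Filter.Eventually.of_forall fun x => by
      have hev : ∀ᶠ M : ℕ in atTop, max (g x - M) 0 = 0 := by
        filter_upwards [eventually_ge_atTop ⌈g x⌉₊] with M hM
        refine max_eq_right ?_
        have : g x ≤ (M : ℝ) := le_trans (Nat.le_ceil _) (by exact_mod_cast hM)
        linarith
      exact Tendsto.congr'
        (EventuallyEq.symm (hev : (fun M : ℕ => max (g x - (M:ℝ)) 0) =ᶠ[atTop] fun _ => 0))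
        tendsto_const_nhds)
  simpa using h

/-- Koopman-von Neumann in `L¹`, norm version: for a dominated nonnegative sequence of
integrable functions, the Cesàro means converge to `0` in `L¹` norm iff there are
measurable sets `A n` whose indicators have Cesàro limit `0` in `L¹` norm and with
`‖χ_{Ω∖Aₙ} fₙ‖₁ → 0`. -/
theorem stmt11 {Ω : Type*} [MeasurableSpace Ω] (μ : Measure Ω) [IsFiniteMeasure μ]
    (f : ℕ → Ω → ℝ) (g : Ω → ℝ)
    (hfint : ∀ n, Integrable (f n) μ) (hgint : Integrable g μ)
    (hnn : ∀ n, 0 ≤ᵐ[μ] f n) (hdom : ∀ n, f n ≤ᵐ[μ] g) :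
    Tendsto (fun n => ∫ ω, |(∑ j ∈ Finset.range n, f j ω) / n| ∂μ) atTop (nhds 0) ↔
      ∃ A : ℕ → Set Ω, (∀ n, MeasurableSet (A n)) ∧
        Tendsto (fun n => ∫ ω,
            |(∑ j ∈ Finset.range n, Set.indicator (A j) (fun _ => (1 : ℝ)) ω) / n| ∂μ)
          atTop (nhds 0) ∧
        Tendsto (fun n => ∫ ω, |Set.indicator (A n)ᶜ (f n) ω| ∂μ) atTop (nhds 0) := by
  have hceq : ∀ n, ∫ ω, |(∑ j ∈ Finset.range n, f j ω) / n| ∂μ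
      = (∑ j ∈ Finset.range n, ∫ ω, f j ω ∂μ) / n := cesaro_integral_eq μ f hfint hnn
  constructor
  · -- forward direction
    intro h
    obtain ⟨l, hlmono, hltop, hlc⟩ := exists_slow_level h
    set f' : ℕ → Ω → ℝ := fun j => ((hfint j).aestronglyMeasurable).mk (f j) with hf'def
    have hmeas : ∀ j, StronglyMeasurable (f' j) := fun j =>
      AEStronglyMeasurable.stronglyMeasurable_mk _
    have hae : ∀ j, f j =ᵐ[μ] f' j := fun j => AEStronglyMeasurable.ae_eq_mk _
    set A : ℕ → Set Ω := fun j => {x | 1 / ((l j : ℝ) + 1) ≤ f' j x} with hAdef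
    have hAmeas : ∀ j, MeasurableSet (A j) := fun j =>
      measurableSet_le measurable_const (hmeas j).measurable
    have hf'int : ∀ j, Integrable (f' j) μ := fun j => (hfint j).congr (hae j)
    have hf'nn : ∀ j, 0 ≤ᵐ[μ] f' j := fun j => by
      filter_upwards [hnn j, hae j] with x h1 h2; rw [← h2]; exact h1
    have markov : ∀ j, (μ (A j)).toReal ≤ ((l j : ℝ) + 1) * ∫ ω, f j ω ∂μ := by
      intro j
      have h1 := mul_meas_ge_le_integral_of_nonneg (hf'nn j) (hf'int j) (1 / ((l j : ℝ) + 1))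
      have h2 : ∫ x, f' j x ∂μ = ∫ ω, f j ω ∂μ := integral_congr_ae (hae j).symm
      rw [h2] at h1
      have hlr : (0:ℝ) < (l j : ℝ) + 1 := by positivity
      have hμnn : (0:ℝ) ≤ (μ (A j)).toReal := ENNReal.toReal_nonneg
      have h3 := mul_le_mul_of_nonneg_left h1 hlr.le
      have h4 : ((l j : ℝ) + 1) * (1 / ((l j : ℝ) + 1)) = 1 := by field_simp
      calc (μ (A j)).toReal
          = ((l j : ℝ) + 1) * (1 / ((l j : ℝ) + 1) * (μ (A j)).toReal) := by
            rw [← mul_assoc, h4, one_mul]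
        _ ≤ ((l j : ℝ) + 1) * ∫ ω, f j ω ∂μ := h3
    refine ⟨A, hAmeas, ?_, ?_⟩
    · -- indicator Cesàro
      have hindint : ∀ j, Integrable ((A j).indicator fun _ => (1:ℝ)) μ :=
        fun j => (integrable_const (1:ℝ)).indicator (hAmeas j)
      have hindnn : ∀ j, 0 ≤ᵐ[μ] (A j).indicator fun _ => (1:ℝ) := fun j =>
        Filter.Eventually.of_forall fun x => Set.indicator_nonneg (fun _ _ => zero_le_one) x
      have heq : ∀ n, ∫ ω, |(∑ j ∈ Finset.range n,
          Set.indicator (A j) (fun _ => (1:ℝ)) ω) / n| ∂μ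
          = (∑ j ∈ Finset.range n, (μ (A j)).toReal) / n := by
        intro n
        rw [cesaro_integral_eq μ _ hindint hindnn n]
        congr 1
        refine Finset.sum_congr rfl fun j _ => ?_
        exact integral_indicator_one (hAmeas j)
      refine squeeze_zero (fun n => integral_nonneg fun ω => abs_nonneg _) (fun n => ?_) hlc
      rw [heq n]
      have hstep1 : (∑ j ∈ Finset.range n, (μ (A j)).toReal) / n
          ≤ (∑ j ∈ Finset.range n, ((l n : ℝ) + 1) * ∫ ω, f j ω ∂μ) / n := by
        rw [div_eq_mul_inv, div_eq_mul_inv]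
        refine mul_le_mul_of_nonneg_right (Finset.sum_le_sum fun j hj => ?_) (by positivity)
        calc (μ (A j)).toReal ≤ ((l j : ℝ) + 1) * ∫ ω, f j ω ∂μ := markov j
          _ ≤ ((l n : ℝ) + 1) * ∫ ω, f j ω ∂μ := by
              apply mul_le_mul_of_nonneg_right _ (integral_nonneg_of_ae (hnn j))
              have : l j ≤ l n := hlmono (Finset.mem_range.1 hj).le
              have : (l j : ℝ) ≤ (l n : ℝ) := by exact_mod_cast this
              linarith
      refine hstep1.trans ?_
      rw [← Finset.mul_sum, mul_div_assoc, ← hceq n]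
      exact mul_le_mul_of_nonneg_left (le_abs_self _) (by positivity)
    · -- tail
      have hbound : ∀ n, ∫ ω, |Set.indicator (A n)ᶜ (f n) ω| ∂μ
          ≤ (μ Set.univ).toReal * (1 / ((l n : ℝ) + 1)) := by
        intro n
        have hint : Integrable (fun ω => |Set.indicator (A n)ᶜ (f n) ω|) μ :=
          ((hfint n).indicator (hAmeas n).compl).abs
        have hle : ∀ᵐ ω ∂μ, |Set.indicator (A n)ᶜ (f n) ω| ≤ 1 / ((l n : ℝ) + 1) := by
          filter_upwards [hae n, hnn n] with ω h1 h2
          by_cases hω : ω ∈ A n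
          · rw [Set.indicator_of_notMem (by simpa using hω)]
            simp only [abs_zero]
            positivity
          · rw [Set.indicator_of_mem (by simpa using hω)]
            rw [abs_of_nonneg h2, h1]
            exact le_of_not_ge hω
        calc ∫ ω, |Set.indicator (A n)ᶜ (f n) ω| ∂μ
            ≤ ∫ _, 1 / ((l n : ℝ) + 1) ∂μ := integral_mono_ae hint (integrable_const _) hle
          _ = (μ Set.univ).toReal * (1 / ((l n : ℝ) + 1)) := by
              rw [integral_const, smul_eq_mul]
              rfl
      refine squeeze_zero (fun n => integral_nonneg fun ω => abs_nonneg _) hbound ?_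
      have h1 : Tendsto (fun n => ((l n : ℝ) + 1)) atTop atTop :=
        tendsto_atTop_add_const_right _ 1 (tendsto_natCast_atTop_atTop.comp hltop)
      have h2 : Tendsto (fun n => 1 / ((l n : ℝ) + 1)) atTop (nhds 0) := by
        simpa [one_div, Pi.inv_def] using h1.inv_tendsto_atTop
      simpa using h2.const_mul (μ Set.univ).toReal
  · -- backward direction
    rintro ⟨A, hA, hInd, hTail⟩
    have hindint : ∀ j, Integrable ((A j).indicator fun _ => (1:ℝ)) μ :=
      fun j => (integrable_const (1:ℝ)).indicator (hA j)
    have hindnn : ∀ j, 0 ≤ᵐ[μ] (A j).indicator fun _ => (1:ℝ) := fun j =>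
      Filter.Eventually.of_forall fun x => Set.indicator_nonneg (fun _ _ => zero_le_one) x
    have hIndeq : ∀ n, ∫ ω, |(∑ j ∈ Finset.range n,
        Set.indicator (A j) (fun _ => (1:ℝ)) ω) / n| ∂μ
        = (∑ j ∈ Finset.range n, (μ (A j)).toReal) / n := by
      intro n
      rw [cesaro_integral_eq μ _ hindint hindnn n]
      congr 1
      exact Finset.sum_congr rfl fun j _ => integral_indicator_one (hA j)
    have hInd' : Tendsto (fun n => (∑ j ∈ Finset.range n, (μ (A j)).toReal) / n)
        atTop (nhds 0) := by
      refine hInd.congr fun n => hIndeq n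
    -- termwise bound
    set t : ℕ → ℝ := fun j => ∫ ω, |Set.indicator (A j)ᶜ (f j) ω| ∂μ with htdef
    have hposint : ∀ M : ℕ, Integrable (fun x => max (g x - M) 0) μ :=
      fun M => (hgint.sub (integrable_const _)).pos_part
    have hterm : ∀ (M : ℕ) (j : ℕ), ∫ ω, f j ω ∂μ
        ≤ (M : ℝ) * (μ (A j)).toReal + (∫ x, max (g x - M) 0 ∂μ) + t j := by
      intro M j
      have hsplit : ∫ ω, f j ω ∂μ
          = (∫ ω, (A j).indicator (f j) ω ∂μ) + ∫ ω, (A j)ᶜ.indicator (f j) ω ∂μ := by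
        rw [← integral_add ((hfint j).indicator (hA j)) ((hfint j).indicator (hA j).compl)]
        refine integral_congr_ae (Filter.Eventually.of_forall fun x => ?_)
        simp [Set.indicator_self_add_compl_apply]
      have h2 : ∫ ω, (A j)ᶜ.indicator (f j) ω ∂μ ≤ t j :=
        integral_mono ((hfint j).indicator (hA j).compl)
          ((hfint j).indicator (hA j).compl).abs fun x => le_abs_self _
      have h1 : ∫ ω, (A j).indicator (f j) ω ∂μ
          ≤ (M : ℝ) * (μ (A j)).toReal + ∫ x, max (g x - M) 0 ∂μ := by
        have hptwise : ∀ᵐ x ∂μ, (A j).indicator (f j) x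
            ≤ (M : ℝ) * (A j).indicator (fun _ => (1:ℝ)) x + max (g x - M) 0 := by
          filter_upwards [hnn j, hdom j] with x hx1 hx2
          by_cases hx : x ∈ A j
          · rw [Set.indicator_of_mem hx, Set.indicator_of_mem hx]
            by_cases hgM : g x ≤ M
            · have : f j x ≤ (M : ℝ) := hx2.trans hgM
              have : (M:ℝ) * 1 = M := mul_one _
              calc f j x ≤ (M : ℝ) := hx2.trans hgM
                _ ≤ (M : ℝ) * 1 + max (g x - M) 0 := by
                    rw [mul_one]; exact le_add_of_nonneg_right (le_max_right _ _)
            · push_neg at hgM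
              calc f j x ≤ g x := hx2
                _ = (M : ℝ) * 1 + (g x - M) := by ring
                _ ≤ (M : ℝ) * 1 + max (g x - M) 0 := by
                    exact add_le_add_right (le_max_left _ _) _
          · rw [Set.indicator_of_notMem hx, Set.indicator_of_notMem hx]
            have : (0:ℝ) ≤ (M : ℝ) * 0 + max (g x - M) 0 := by
              simp [le_max_right]
            exact this
        have hint1 : Integrable (fun x => (M : ℝ) * (A j).indicator (fun _ => (1:ℝ)) x
            + max (g x - M) 0) μ := ((hindint j).const_mul _).add (hposint M)
        calc ∫ ω, (A j).indicator (f j) ω ∂μ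
            ≤ ∫ x, ((M : ℝ) * (A j).indicator (fun _ => (1:ℝ)) x + max (g x - M) 0) ∂μ :=
              integral_mono_ae ((hfint j).indicator (hA j)) hint1 hptwise
          _ = (M : ℝ) * (μ (A j)).toReal + ∫ x, max (g x - M) 0 ∂μ := by
              rw [integral_add ((hindint j).const_mul _) (hposint M), integral_const_mul _ _]
              have hiio : ∫ a, (A j).indicator (fun _ => (1:ℝ)) a ∂μ = (μ (A j)).toReal :=
                integral_indicator_one (hA j)
              rw [hiio]
      linarith
    -- ε argument
    rw [Metric.tendsto_atTop]
    intro ε hε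
    have hMten := tendsto_integral_pos_part μ hgint
    obtain ⟨M, hM⟩ : ∃ M : ℕ, ∫ x, max (g x - M) 0 ∂μ < ε / 3 := by
      have := Metric.tendsto_atTop.1 hMten (ε / 3) (by linarith)
      obtain ⟨N, hN⟩ := this
      refine ⟨N, ?_⟩
      have := hN N le_rfl
      rw [Real.dist_eq, sub_zero] at this
      exact lt_of_le_of_lt (le_abs_self _) this
    obtain ⟨N1, hN1⟩ := Metric.tendsto_atTop.1 hInd' (ε / (3 * ((M : ℝ) + 1)))
      (by positivity)
    have hTailC : Tendsto (fun n : ℕ => (n : ℝ)⁻¹ * ∑ j ∈ Finset.range n, t j)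
        atTop (nhds 0) := hTail.cesaro
    obtain ⟨N2, hN2⟩ := Metric.tendsto_atTop.1 hTailC (ε / 3) (by linarith)
    refine ⟨max (max N1 N2) 1, fun n hn => ?_⟩
    have hn1 : N1 ≤ n := le_trans (le_trans (le_max_left _ _) (le_max_left _ _)) hn
    have hn2 : N2 ≤ n := le_trans (le_trans (le_max_right _ _) (le_max_left _ _)) hn
    have hnpos : 1 ≤ n := le_trans (le_max_right _ _) hn
    have hnr : (0:ℝ) < n := by exact_mod_cast hnpos
    rw [Real.dist_eq, sub_zero, hceq n]
    have hnonneg : 0 ≤ (∑ j ∈ Finset.range n, ∫ ω, f j ω ∂μ) / n :=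
      div_nonneg (Finset.sum_nonneg fun j _ => integral_nonneg_of_ae (hnn j)) hnr.le
    rw [abs_of_nonneg hnonneg]
    have hsum : (∑ j ∈ Finset.range n, ∫ ω, f j ω ∂μ) / n
        ≤ (M : ℝ) * ((∑ j ∈ Finset.range n, (μ (A j)).toReal) / n)
          + (∫ x, max (g x - M) 0 ∂μ)
          + (∑ j ∈ Finset.range n, t j) / n := by
      have h1 : (∑ j ∈ Finset.range n, ∫ ω, f j ω ∂μ)
          ≤ ∑ j ∈ Finset.range n, ((M : ℝ) * (μ (A j)).toReal
            + (∫ x, max (g x - M) 0 ∂μ) + t j) :=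
        Finset.sum_le_sum fun j _ => hterm M j
      have h2 : (∑ j ∈ Finset.range n, ((M : ℝ) * (μ (A j)).toReal
            + (∫ x, max (g x - M) 0 ∂μ) + t j)) / n
          = (M : ℝ) * ((∑ j ∈ Finset.range n, (μ (A j)).toReal) / n)
            + (∫ x, max (g x - M) 0 ∂μ)
            + (∑ j ∈ Finset.range n, t j) / n := by
        rw [Finset.sum_add_distrib, Finset.sum_add_distrib, ← Finset.mul_sum,
          Finset.sum_const, Finset.card_range, nsmul_eq_mul]
        field_simp
      calc (∑ j ∈ Finset.range n, ∫ ω, f j ω ∂μ) / n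
          ≤ (∑ j ∈ Finset.range n, ((M : ℝ) * (μ (A j)).toReal
            + (∫ x, max (g x - M) 0 ∂μ) + t j)) / n := by
            rw [div_eq_mul_inv, div_eq_mul_inv]
            exact mul_le_mul_of_nonneg_right h1 (by positivity)
        _ = _ := h2
    have hI : (∑ j ∈ Finset.range n, (μ (A j)).toReal) / n < ε / (3 * ((M : ℝ) + 1)) := by
      have := hN1 n hn1
      rw [Real.dist_eq, sub_zero] at this
      exact lt_of_le_of_lt (le_abs_self _) this
    have hT : (∑ j ∈ Finset.range n, t j) / n < ε / 3 := by
      have := hN2 n hn2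
      rw [Real.dist_eq, sub_zero] at this
      have heq : (n : ℝ)⁻¹ * ∑ j ∈ Finset.range n, t j
          = (∑ j ∈ Finset.range n, t j) / n := by rw [inv_mul_eq_div]
      rw [heq] at this
      exact lt_of_le_of_lt (le_abs_self _) this
    have hMterm : (M : ℝ) * ((∑ j ∈ Finset.range n, (μ (A j)).toReal) / n) ≤ ε / 3 := by
      have hMnn : (0:ℝ) ≤ M := Nat.cast_nonneg M
      calc (M : ℝ) * ((∑ j ∈ Finset.range n, (μ (A j)).toReal) / n)
          ≤ (M : ℝ) * (ε / (3 * ((M : ℝ) + 1))) := mul_le_mul_of_nonneg_left hI.le hMnn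
        _ ≤ ε / 3 := by
            rw [← mul_div_assoc, div_le_div_iff₀ (by positivity) (by norm_num : (0:ℝ) < 3)]
            nlinarith [hε.le, Nat.cast_nonneg (α := ℝ) M]
    linarith
end
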